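/- arXiv:0910.1359 — 6 statements merged into one kernel-verified Lean document; each statement's English description precedes it below -/
import Mathlib

section
/- Let Y be a real-valued random variable with probability density function g such that g is nondecreasing on (-∞, b] and nonincreasing on [b, ∞) for some real b, with M = sup g = g(b). Then for every z ∈ (0, 1], |P({Y} < z) − z| < 2M, where {Y} denotes the fractional part of Y. -/
open MeasureTheory Set

/-- Telescoping bound over ℕ. -/
private lemma telesN (h : ℕ → ℝ) (hnn : ∀ n, 0 ≤ h n) (hdec : ∀ n, h (n + 1) ≤ h n)
    (F : Finset ℕ) : ∑ k ∈ F, (h k - h (k + 1)) ≤ h 0 := by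
  classical
  obtain ⟨N, hN⟩ : ∃ N, F ⊆ Finset.range N := ⟨(F.sup id) + 1, fun k hk =>
    Finset.mem_range.2 (Nat.lt_succ_of_le (Finset.le_sup (f := id) hk))⟩
  calc ∑ k ∈ F, (h k - h (k + 1)) ≤ ∑ k ∈ Finset.range N, (h k - h (k + 1)) := by
        apply Finset.sum_le_sum_of_subset_of_nonneg hN
        intro i _ _; linarith [hdec i]
    _ = h 0 - h N := Finset.sum_range_sub' h N
    _ ≤ h 0 := by linarith [hnn N]

/-- Telescoping bound over ℤ for sums over finite sets contained in `[m, ∞)`. -/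
private lemma telesZ (h : ℤ → ℝ) (m : ℤ) (hnn : ∀ n, 0 ≤ h n)
    (hdec : ∀ n, m ≤ n → h (n + 1) ≤ h n) (F : Finset ℤ) (hF : ∀ n ∈ F, m ≤ n) :
    ∑ n ∈ F, (h n - h (n + 1)) ≤ h m := by
  classical
  have key : ∑ n ∈ F, (h n - h (n + 1)) =
      ∑ k ∈ F.image (fun n => (n - m).toNat),
        (h (m + (k : ℤ)) - h (m + (k : ℤ) + 1)) := by
    rw [Finset.sum_image]
    · apply Finset.sum_congr rfl
      intro n hn
      have hmn := hF n hn
      have e1 : m + (((n - m).toNat : ℕ) : ℤ) = n := by omega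
      rw [e1]
    · intro x hx y hy hxy
      have := hF x hx; have := hF y hy; simp only at hxy; omega
  rw [key]
  have hdec' : ∀ k : ℕ, (fun k : ℕ => h (m + (k : ℤ))) (k + 1)
      ≤ (fun k : ℕ => h (m + (k : ℤ))) k := by
    intro k
    simp only [Nat.cast_add, Nat.cast_one]
    rw [show m + ((k : ℤ) + 1) = m + (k : ℤ) + 1 by ring]
    exact hdec _ (by omega)
  have := telesN (fun k : ℕ => h (m + (k : ℤ))) (fun n => hnn _) hdec'
    (F.image (fun n => (n - m).toNat))
  simp only [Nat.cast_add, Nat.cast_one, Nat.cast_zero, add_zero] at this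
  calc ∑ k ∈ F.image (fun n => (n - m).toNat), (h (m + (k : ℤ)) - h (m + (k : ℤ) + 1))
      = ∑ k ∈ F.image (fun n => (n - m).toNat),
        (h (m + (k : ℤ)) - h (m + ((k : ℤ) + 1))) := by
        apply Finset.sum_congr rfl; intro k _
        rw [show m + ((k : ℤ) + 1) = m + (k : ℤ) + 1 by ring]
    _ ≤ h m := this

/-- Key finite-sum bound: terms are nonpositive left of `n₀`, bounded by `C` at `n₀`,
and telescoping right of `n₀`. -/
private lemma keySum (e h : ℤ → ℝ) (n₀ : ℤ) (C : ℝ) (hC : 0 ≤ C)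
    (hnn : ∀ n, 0 ≤ h n) (hhb : h (n₀ + 1) ≤ C)
    (hdec : ∀ n, n₀ < n → h (n + 1) ≤ h n)
    (hneg : ∀ n, n < n₀ → e n ≤ 0) (hmid : e n₀ ≤ C)
    (hpos : ∀ n, n₀ < n → e n ≤ h n - h (n + 1)) (F : Finset ℤ) :
    ∑ n ∈ F, e n ≤ 2 * C := by
  classical
  rw [← Finset.sum_filter_add_sum_filter_not F (fun n => n ≤ n₀)]
  have part1 : ∑ n ∈ F.filter (fun n => n ≤ n₀), e n ≤ C := by
    calc ∑ n ∈ F.filter (fun n => n ≤ n₀), e n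
        ≤ ∑ n ∈ F.filter (fun n => n ≤ n₀), (if n = n₀ then C else 0) := by
          apply Finset.sum_le_sum
          intro n hn
          have hn' : n ≤ n₀ := (Finset.mem_filter.1 hn).2
          by_cases h' : n = n₀
          · subst h'; rw [if_pos rfl]; exact hmid
          · rw [if_neg h']; exact hneg n (lt_of_le_of_ne hn' h')
      _ = if n₀ ∈ F.filter (fun n => n ≤ n₀) then C else 0 := by
          rw [Finset.sum_ite_eq' (F.filter (fun n => n ≤ n₀)) n₀ (fun _ => C)]
      _ ≤ C := by split <;> simp [hC]
  have part2 : ∑ n ∈ F.filter (fun n => ¬ n ≤ n₀), e n ≤ C := by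
    calc ∑ n ∈ F.filter (fun n => ¬ n ≤ n₀), e n
        ≤ ∑ n ∈ F.filter (fun n => ¬ n ≤ n₀), (h n - h (n + 1)) := by
          apply Finset.sum_le_sum
          intro n hn
          exact hpos n (by have := (Finset.mem_filter.1 hn).2; omega)
      _ ≤ h (n₀ + 1) := by
          apply telesZ h (n₀ + 1) hnn (fun n hn => hdec n (by omega))
          intro n hn
          have := (Finset.mem_filter.1 hn).2; omega
      _ ≤ C := hhb
  linarith

/-- Scatter-and-regularity lemma: if `Y` has a unimodal density `g`
(nondecreasing up to `b`, nonincreasing afterwards) with maximum `M = g b`,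
then for every `z ∈ (0,1]`, `|P({Y} < z) − z| < 2M`. -/
theorem fract_near_uniform_of_unimodal_density
    (μ : Measure ℝ) [IsProbabilityMeasure μ] (g : ℝ → ℝ) (b : ℝ)
    (hg0 : ∀ x, 0 ≤ g x)
    (hμ : μ = volume.withDensity (fun x => ENNReal.ofReal (g x)))
    (hmono : MonotoneOn g (Iic b)) (hanti : AntitoneOn g (Ici b)) :
    ∀ z ∈ Ioc (0 : ℝ) 1,
      |(μ {y : ℝ | Int.fract y < z}).toReal - z| < 2 * g b := by
  classical
  -- g is bounded by g b
  have hgb : ∀ x, g x ≤ g b := by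
    intro x
    rcases le_total x b with h | h
    · exact hmono (mem_Iic.2 h) (mem_Iic.2 le_rfl) h
    · exact hanti (mem_Ici.2 le_rfl) (mem_Ici.2 h) h
  -- g b > 0
  have hM : 0 < g b := by
    by_contra h
    push_neg at h
    have hgz : ∀ x, g x = 0 := fun x => le_antisymm ((hgb x).trans h) (hg0 x)
    have : μ = 0 := by
      rw [hμ]
      have : (fun x => ENNReal.ofReal (g x)) = 0 := by
        funext x; simp [hgz x]
      rw [this, withDensity_zero]
    have h1 : μ univ = 1 := measure_univ
    rw [this] at h1
    simp at h1
  -- basic integral bounds on intervals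
  have hIco : ∀ u v : ℝ, μ (Ico u v) = ∫⁻ x in Ico u v, ENNReal.ofReal (g x) := by
    intro u v; rw [hμ, withDensity_apply _ measurableSet_Ico]
  have hfin : ∀ s : Set ℝ, μ s ≠ ⊤ := fun s => measure_ne_top μ s
  have Eupper : ∀ u v w : ℝ, u ≤ v → 0 ≤ w → (∀ x ∈ Ico u v, g x ≤ w) →
      (μ (Ico u v)).toReal ≤ (v - u) * w := by
    intro u v w huv hw hbd
    have h1 : μ (Ico u v) ≤ ENNReal.ofReal w * ENNReal.ofReal (v - u) := by
      rw [hIco]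
      calc ∫⁻ x in Ico u v, ENNReal.ofReal (g x)
          ≤ ∫⁻ _ in Ico u v, ENNReal.ofReal w := by
            apply lintegral_mono_ae
            rw [ae_restrict_iff' measurableSet_Ico]
            exact ae_of_all _ fun x hx => ENNReal.ofReal_le_ofReal (hbd x hx)
        _ = ENNReal.ofReal w * volume (Ico u v) := setLIntegral_const _ _
        _ = ENNReal.ofReal w * ENNReal.ofReal (v - u) := by rw [Real.volume_Ico]
    calc (μ (Ico u v)).toReal
        ≤ (ENNReal.ofReal w * ENNReal.ofReal (v - u)).toReal :=
          ENNReal.toReal_mono (by finiteness) h1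
      _ = w * (v - u) := by
          rw [ENNReal.toReal_mul, ENNReal.toReal_ofReal hw,
            ENNReal.toReal_ofReal (by linarith)]
      _ = (v - u) * w := by ring
  have Elower : ∀ u v w : ℝ, u ≤ v → 0 ≤ w → (∀ x ∈ Ico u v, w ≤ g x) →
      (v - u) * w ≤ (μ (Ico u v)).toReal := by
    intro u v w huv hw hbd
    have h1 : ENNReal.ofReal w * ENNReal.ofReal (v - u) ≤ μ (Ico u v) := by
      rw [hIco]
      calc ENNReal.ofReal w * ENNReal.ofReal (v - u)
          = ENNReal.ofReal w * volume (Ico u v) := by rw [Real.volume_Ico]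
        _ = ∫⁻ _ in Ico u v, ENNReal.ofReal w := (setLIntegral_const _ _).symm
        _ ≤ ∫⁻ x in Ico u v, ENNReal.ofReal (g x) := by
            apply lintegral_mono_ae
            rw [ae_restrict_iff' measurableSet_Ico]
            exact ae_of_all _ fun x hx => ENNReal.ofReal_le_ofReal (hbd x hx)
    calc (v - u) * w = (ENNReal.ofReal w * ENNReal.ofReal (v - u)).toReal := by
          rw [ENNReal.toReal_mul, ENNReal.toReal_ofReal hw,
            ENNReal.toReal_ofReal (by linarith)]; ring
      _ ≤ (μ (Ico u v)).toReal := ENNReal.toReal_mono (hfin _) h1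
  intro z hz
  obtain ⟨hz0, hz1⟩ := hz
  -- case z = 1
  rcases eq_or_lt_of_le hz1 with hz1' | hz1'
  · subst hz1'
    have : {y : ℝ | Int.fract y < 1} = univ := by
      ext y; simp [Int.fract_lt_one]
    rw [this, measure_univ, ENNReal.toReal_one]
    simp only [sub_self, abs_zero]
    linarith
  -- main case z < 1
  set n₀ : ℤ := ⌊b⌋ with hn₀
  have hbn₀ : (n₀ : ℝ) ≤ b := Int.floor_le b
  have hbn₀' : b < (n₀ : ℝ) + 1 := Int.lt_floor_add_one b
  set a : ℤ → ℝ := fun n => (μ (Ico (n : ℝ) (n + z))).toReal with ha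
  set c : ℤ → ℝ := fun n => (μ (Ico (n : ℝ) (n + 1))).toReal with hc
  set d : ℤ → ℝ := fun n => a n - z * c n with hd
  -- decomposition of the measure of {fract < z}
  have hsetEq : {y : ℝ | Int.fract y < z} = ⋃ n : ℤ, Ico (n : ℝ) (n + z) := by
    ext y
    simp only [mem_setOf_eq, mem_iUnion, mem_Ico]
    constructor
    · intro h
      exact ⟨⌊y⌋, Int.floor_le y, by
        have : Int.fract y = y - ⌊y⌋ := rfl
        linarith [this ▸ h]⟩
    · rintro ⟨n, hn1, hn2⟩
      have hfl : ⌊y⌋ = n := by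
        apply Int.floor_eq_iff.2
        exact ⟨hn1, by linarith⟩
      rw [Int.fract, hfl]
      linarith
  have hdisj : Pairwise (Function.onFun Disjoint fun n : ℤ => Ico (n : ℝ) (n + z)) := by
    intro i j hij
    simp only [Function.onFun]
    rw [Set.Ico_disjoint_Ico]
    rcases lt_or_gt_of_ne hij with h | h
    · have : (i : ℝ) + 1 ≤ j := by exact_mod_cast h
      calc min ((i:ℝ) + z) ((j:ℝ) + z) ≤ (i:ℝ) + z := min_le_left _ _
        _ ≤ max (i:ℝ) (j:ℝ) := by
            rw [max_eq_right (by exact_mod_cast h.le)]; linarith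
    · have : (j : ℝ) + 1 ≤ i := by exact_mod_cast h
      calc min ((i:ℝ) + z) ((j:ℝ) + z) ≤ (j:ℝ) + z := min_le_right _ _
        _ ≤ max (i:ℝ) (j:ℝ) := by
            rw [max_eq_left (by exact_mod_cast h.le)]; linarith
  have hμUnion : μ {y : ℝ | Int.fract y < z} = ∑' n : ℤ, μ (Ico (n : ℝ) (n + z)) := by
    rw [hsetEq, measure_iUnion hdisj (fun n => measurableSet_Ico)]
  have hPsum : (μ {y : ℝ | Int.fract y < z}).toReal = ∑' n : ℤ, a n := by
    rw [hμUnion, ENNReal.tsum_toReal_eq (fun n => hfin _)]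
  have hSa : Summable a := by
    apply ENNReal.summable_toReal
    rw [← hμUnion]; exact hfin _
  -- decomposition of 1
  have hdisj1 : Pairwise (Function.onFun Disjoint fun n : ℤ => Ico (n : ℝ) (n + 1)) := by
    intro i j hij
    simp only [Function.onFun]
    rw [Set.Ico_disjoint_Ico]
    rcases lt_or_gt_of_ne hij with h | h
    · have : (i : ℝ) + 1 ≤ j := by exact_mod_cast h
      calc min ((i:ℝ) + 1) ((j:ℝ) + 1) ≤ (i:ℝ) + 1 := min_le_left _ _
        _ ≤ max (i:ℝ) (j:ℝ) := by
            rw [max_eq_right (by exact_mod_cast h.le)]; linarith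
    · have : (j : ℝ) + 1 ≤ i := by exact_mod_cast h
      calc min ((i:ℝ) + 1) ((j:ℝ) + 1) ≤ (j:ℝ) + 1 := min_le_right _ _
        _ ≤ max (i:ℝ) (j:ℝ) := by
            rw [max_eq_left (by exact_mod_cast h.le)]; linarith
  have hμ1 : (1 : ENNReal) = ∑' n : ℤ, μ (Ico (n : ℝ) (n + 1)) := by
    rw [← measure_univ (μ := μ), ← iUnion_Ico_intCast ℝ,
      measure_iUnion hdisj1 (fun n => measurableSet_Ico)]
  have hcsum : (1 : ℝ) = ∑' n : ℤ, c n := by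
    have := congrArg ENNReal.toReal hμ1
    rwa [ENNReal.toReal_one, ENNReal.tsum_toReal_eq (fun n => hfin _)] at this
  have hSc : Summable c := by
    apply ENNReal.summable_toReal
    rw [← hμ1]; exact ENNReal.one_ne_top
  have hSd : Summable d := hSa.sub (hSc.mul_left z)
  have htsum_d : ∑' n : ℤ, d n = (μ {y : ℝ | Int.fract y < z}).toReal - z := by
    rw [hd]
    rw [hSa.tsum_sub (hSc.mul_left z), tsum_mul_left, ← hcsum, ← hPsum]
    ring
  -- additivity: c n = a n + measure of [n+z, n+1)
  have hsplit : ∀ n : ℤ, c n = a n + (μ (Ico ((n : ℝ) + z) ((n : ℝ) + 1))).toReal := by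
    intro n
    have : Ico ((n:ℝ)) ((n:ℝ) + z) ∪ Ico ((n:ℝ) + z) ((n:ℝ) + 1) = Ico ((n:ℝ)) ((n:ℝ) + 1) :=
      Ico_union_Ico_eq_Ico (by linarith) (by linarith)
    have hdisj2 : Disjoint (Ico ((n:ℝ)) ((n:ℝ) + z)) (Ico ((n:ℝ) + z) ((n:ℝ) + 1)) := by
      rw [Set.Ico_disjoint_Ico]
      exact le_trans (min_le_left _ _) (le_max_right _ _)
    have := measure_union (μ := μ) hdisj2 measurableSet_Ico
    rw [Ico_union_Ico_eq_Ico (by linarith) (by linarith)] at this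
    rw [hc, ha]
    simp only [this]
    rw [ENNReal.toReal_add (hfin _) (hfin _)]
  -- nonnegativity of a, c and measure pieces
  have hanonneg : ∀ n, 0 ≤ a n := fun n => ENNReal.toReal_nonneg
  have hcnonneg : ∀ n, 0 ≤ c n := fun n => ENNReal.toReal_nonneg
  -- Per-term bounds.
  -- Left of n₀:
  have hL1 : ∀ n : ℤ, n < n₀ → d n ≤ 0 := by
    intro n hn
    have hnb : (n : ℝ) + 1 ≤ b := by
      have : (n : ℝ) + 1 ≤ (n₀ : ℝ) := by exact_mod_cast hn
      linarith
    have h1 : a n ≤ z * g ((n:ℝ) + z) := by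
      have := Eupper (n : ℝ) ((n:ℝ) + z) (g ((n:ℝ)+z)) (by linarith) (hg0 _)
        (fun x hx => hmono (show x ∈ Iic b by
          simp only [mem_Ico] at hx; simp only [mem_Iic]; linarith [hx.2])
          (show ((n:ℝ)+z) ∈ Iic b by simp only [mem_Iic]; linarith)
          (by simp only [mem_Ico] at hx; linarith [hx.2]))
      simpa using this.trans_eq (by ring)
    have h2 : (1 - z) * g ((n:ℝ) + z) ≤ (μ (Ico ((n:ℝ) + z) ((n:ℝ) + 1))).toReal := by
      have := Elower ((n:ℝ) + z) ((n:ℝ) + 1) (g ((n:ℝ)+z)) (by linarith) (hg0 _)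
        (fun x hx => hmono (show ((n:ℝ)+z) ∈ Iic b by simp only [mem_Iic]; linarith)
          (show x ∈ Iic b by simp only [mem_Ico] at hx; simp only [mem_Iic]; linarith [hx.2])
          (by simp only [mem_Ico] at hx; linarith [hx.1]))
      calc (1 - z) * g ((n:ℝ) + z) = ((n:ℝ) + 1 - ((n:ℝ) + z)) * g ((n:ℝ)+z) := by ring
        _ ≤ _ := this
    have := hsplit n
    rw [hd]
    simp only
    nlinarith [hg0 ((n:ℝ)+z)]
  have hL2 : ∀ n : ℤ, n < n₀ → -d n ≤ z * g ((n:ℝ) + 1) - z * g (n:ℝ) := by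
    intro n hn
    have hnb : (n : ℝ) + 1 ≤ b := by
      have : (n : ℝ) + 1 ≤ (n₀ : ℝ) := by exact_mod_cast hn
      linarith
    have h1 : z * g (n:ℝ) ≤ a n := by
      have := Elower (n : ℝ) ((n:ℝ) + z) (g (n:ℝ)) (by linarith) (hg0 _)
        (fun x hx => hmono (show (n:ℝ) ∈ Iic b by simp only [mem_Iic]; linarith)
          (show x ∈ Iic b by simp only [mem_Ico] at hx; simp only [mem_Iic]; linarith [hx.2])
          (by simp only [mem_Ico] at hx; linarith [hx.1]))
      calc z * g (n:ℝ) = ((n:ℝ) + z - (n:ℝ)) * g (n:ℝ) := by ring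
        _ ≤ a n := this
    have h2 : c n ≤ g ((n:ℝ) + 1) := by
      have := Eupper (n : ℝ) ((n:ℝ) + 1) (g ((n:ℝ)+1)) (by linarith) (hg0 _)
        (fun x hx => hmono (show x ∈ Iic b by
          simp only [mem_Ico] at hx; simp only [mem_Iic]; linarith [hx.2])
          (show ((n:ℝ)+1) ∈ Iic b by simp only [mem_Iic]; linarith)
          (by simp only [mem_Ico] at hx; linarith [hx.2]))
      simpa using this
    rw [hd]
    simp only
    nlinarith
  -- Right of n₀:
  have hR1 : ∀ n : ℤ, n₀ < n → 0 ≤ d n := by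
    intro n hn
    have hnb : b ≤ (n : ℝ) := by
      have : (n₀ : ℝ) + 1 ≤ (n : ℝ) := by exact_mod_cast hn
      linarith
    have h1 : z * g ((n:ℝ) + z) ≤ a n := by
      have := Elower (n : ℝ) ((n:ℝ) + z) (g ((n:ℝ)+z)) (by linarith) (hg0 _)
        (fun x hx => hanti (show x ∈ Ici b by
          simp only [mem_Ico] at hx; simp only [mem_Ici]; linarith [hx.1])
          (show ((n:ℝ)+z) ∈ Ici b by simp only [mem_Ici]; linarith)
          (by simp only [mem_Ico] at hx; linarith [hx.2]))
      calc z * g ((n:ℝ)+z) = ((n:ℝ) + z - (n:ℝ)) * g ((n:ℝ)+z) := by ring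
        _ ≤ a n := this
    have h2 : (μ (Ico ((n:ℝ) + z) ((n:ℝ) + 1))).toReal ≤ (1 - z) * g ((n:ℝ) + z) := by
      have := Eupper ((n:ℝ) + z) ((n:ℝ) + 1) (g ((n:ℝ)+z)) (by linarith) (hg0 _)
        (fun x hx => hanti (show ((n:ℝ)+z) ∈ Ici b by simp only [mem_Ici]; linarith)
          (show x ∈ Ici b by simp only [mem_Ico] at hx; simp only [mem_Ici]; linarith [hx.1])
          (by simp only [mem_Ico] at hx; linarith [hx.1]))
      calc (μ (Ico ((n:ℝ) + z) ((n:ℝ) + 1))).toReal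
          ≤ ((n:ℝ) + 1 - ((n:ℝ) + z)) * g ((n:ℝ)+z) := this
        _ = (1 - z) * g ((n:ℝ)+z) := by ring
    have := hsplit n
    rw [hd]
    simp only
    nlinarith [hg0 ((n:ℝ)+z)]
  have hR2 : ∀ n : ℤ, n₀ < n → d n ≤ z * g (n:ℝ) - z * g ((n:ℝ) + 1) := by
    intro n hn
    have hnb : b ≤ (n : ℝ) := by
      have : (n₀ : ℝ) + 1 ≤ (n : ℝ) := by exact_mod_cast hn
      linarith
    have h1 : a n ≤ z * g (n:ℝ) := by
      have := Eupper (n : ℝ) ((n:ℝ) + z) (g (n:ℝ)) (by linarith) (hg0 _)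
        (fun x hx => hanti (show (n:ℝ) ∈ Ici b by simp only [mem_Ici]; linarith)
          (show x ∈ Ici b by simp only [mem_Ico] at hx; simp only [mem_Ici]; linarith [hx.1])
          (by simp only [mem_Ico] at hx; linarith [hx.1]))
      calc a n ≤ ((n:ℝ) + z - (n:ℝ)) * g (n:ℝ) := this
        _ = z * g (n:ℝ) := by ring
    have h2 : g ((n:ℝ) + 1) ≤ c n := by
      have := Elower (n : ℝ) ((n:ℝ) + 1) (g ((n:ℝ)+1)) (by linarith) (hg0 _)
        (fun x hx => hanti (show x ∈ Ici b by
          simp only [mem_Ico] at hx; simp only [mem_Ici]; linarith [hx.1])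
          (show ((n:ℝ)+1) ∈ Ici b by simp only [mem_Ici]; linarith)
          (by simp only [mem_Ico] at hx; linarith [hx.2]))
      simpa using this
    rw [hd]
    simp only
    nlinarith
  -- middle bounds
  have hMid1 : d n₀ ≤ z * g b := by
    have h1 : a n₀ ≤ z * g b := by
      have := Eupper (n₀ : ℝ) ((n₀:ℝ) + z) (g b) (by linarith) (le_of_lt hM)
        (fun x _ => hgb x)
      calc a n₀ ≤ ((n₀:ℝ) + z - (n₀:ℝ)) * g b := this
        _ = z * g b := by ring
    rw [hd]
    simp only
    nlinarith [hcnonneg n₀]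
  have hMid2 : -d n₀ ≤ z * g b := by
    have h2 : c n₀ ≤ g b := by
      have := Eupper (n₀ : ℝ) ((n₀:ℝ) + 1) (g b) (by linarith) (le_of_lt hM)
        (fun x _ => hgb x)
      simpa using this
    rw [hd]
    simp only
    nlinarith [hanonneg n₀]
  -- Apply the key lemma in both directions, with C = z * g b.
  set C : ℝ := z * g b with hC
  have hCpos : 0 < C := mul_pos hz0 hM
  -- upper bound: tsum d ≤ 2C
  have hub : ∑' n : ℤ, d n ≤ 2 * C := by
    apply hSd.tsum_le_of_sum_le
    intro F
    apply keySum d (fun n => z * g (n:ℝ)) n₀ C hCpos.le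
      (fun n => mul_nonneg hz0.le (hg0 _)) ?_ ?_ hL1 hMid1 ?_ F
    · push_cast
      exact mul_le_mul_of_nonneg_left (hanti (mem_Ici.2 le_rfl)
        (mem_Ici.2 (by linarith)) (by linarith)) hz0.le
    · intro n hn
      have hnb : b ≤ (n : ℝ) := by
        have : (n₀ : ℝ) + 1 ≤ (n : ℝ) := by exact_mod_cast hn
        linarith
      push_cast
      exact mul_le_mul_of_nonneg_left (hanti (mem_Ici.2 hnb)
        (mem_Ici.2 (by linarith)) (by linarith)) hz0.le
    · intro n hn
      have := hR2 n hn
      push_cast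
      linarith
  -- lower bound: tsum (-d) ≤ 2C, via reflection n ↦ 2n₀ - n
  have hlb : ∑' n : ℤ, (-d n) ≤ 2 * C := by
    apply hSd.neg.tsum_le_of_sum_le
    intro F
    have hre : ∑ n ∈ F, (-d n) =
        ∑ m ∈ F.image (fun n => 2 * n₀ - n), (-(d (2 * n₀ - m))) := by
      rw [Finset.sum_image (by intro x _ y _ h; simp only at h; omega)]
      apply Finset.sum_congr rfl
      intro n _
      congr 1
      congr 1
      omega
    rw [hre]
    apply keySum (fun m => -(d (2 * n₀ - m))) (fun m => z * g ((2 * n₀ + 1 - m : ℤ) : ℝ))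
      n₀ C hCpos.le (fun m => mul_nonneg hz0.le (hg0 _)) ?_ ?_ ?_ ?_ ?_
    · -- h (n₀+1) = z * g n₀ ≤ C
      show z * g ((2 * n₀ + 1 - (n₀ + 1) : ℤ) : ℝ) ≤ C
      have : ((2 * n₀ + 1 - (n₀ + 1) : ℤ) : ℝ) = (n₀ : ℝ) := by push_cast; ring
      rw [this]
      exact mul_le_mul_of_nonneg_left (hmono (mem_Iic.2 hbn₀) (mem_Iic.2 le_rfl) hbn₀) hz0.le
    · -- hdec
      intro m hm
      show z * g ((2 * n₀ + 1 - (m + 1) : ℤ) : ℝ) ≤ z * g ((2 * n₀ + 1 - m : ℤ) : ℝ)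
      have e1 : ((2 * n₀ + 1 - (m + 1) : ℤ) : ℝ) = ((2 * n₀ - m : ℤ) : ℝ) := by push_cast; ring
      rw [e1]
      have h1 : ((2 * n₀ - m : ℤ) : ℝ) ≤ b := by
        have : (2 * n₀ - m : ℤ) ≤ n₀ := by omega
        calc ((2 * n₀ - m : ℤ) : ℝ) ≤ (n₀ : ℝ) := by exact_mod_cast this
          _ ≤ b := hbn₀
      have h2 : ((2 * n₀ + 1 - m : ℤ) : ℝ) ≤ b := by
        have : (2 * n₀ + 1 - m : ℤ) ≤ n₀ := by omega
        calc ((2 * n₀ + 1 - m : ℤ) : ℝ) ≤ (n₀ : ℝ) := by exact_mod_cast this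
          _ ≤ b := hbn₀
      apply mul_le_mul_of_nonneg_left _ hz0.le
      apply hmono (mem_Iic.2 h1) (mem_Iic.2 h2)
      have : (2 * n₀ - m : ℤ) ≤ (2 * n₀ + 1 - m : ℤ) := by omega
      exact_mod_cast this
    · -- hneg: m < n₀ ⇒ -(d (2n₀ - m)) ≤ 0
      intro m hm
      show -(d (2 * n₀ - m)) ≤ 0
      have : n₀ < 2 * n₀ - m := by omega
      linarith [hR1 _ this]
    · -- hmid
      show -(d (2 * n₀ - n₀)) ≤ C
      have : (2 * n₀ - n₀ : ℤ) = n₀ := by omega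
      rw [this]
      exact hMid2
    · -- hpos: m > n₀ ⇒ -(d (2n₀ - m)) ≤ h m - h (m+1)
      intro m hm
      have hlt : 2 * n₀ - m < n₀ := by omega
      have := hL2 (2 * n₀ - m) hlt
      show -(d (2 * n₀ - m)) ≤ z * g ((2 * n₀ + 1 - m : ℤ) : ℝ) - z * g ((2 * n₀ + 1 - (m + 1) : ℤ) : ℝ)
      have e1 : ((2 * n₀ + 1 - m : ℤ) : ℝ) = ((2 * n₀ - m : ℤ) : ℝ) + 1 := by push_cast; ring
      have e2 : ((2 * n₀ + 1 - (m + 1) : ℤ) : ℝ) = ((2 * n₀ - m : ℤ) : ℝ) := by push_cast; ring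
      rw [e1, e2]
      linarith
  have htd : ∑' n : ℤ, (-d n) = -(∑' n : ℤ, d n) := tsum_neg
  rw [htd] at hlb
  have habs : |(μ {y : ℝ | Int.fract y < z}).toReal - z| ≤ 2 * C := by
    rw [← htsum_d]
    rw [abs_le]
    constructor <;> linarith
  calc |(μ {y : ℝ | Int.fract y < z}).toReal - z| ≤ 2 * C := habs
    _ < 2 * g b := by rw [hC]; nlinarith
end

section
/- Let X be a continuous positive random variable with density f such that the function x ↦ x·f(x) attains its maximum m at some a > 0, is nondecreasing on (0, a], and nonincreasing on [a, ∞). Then for every z ∈ (0, 1], |P({log₁₀ X} < z) − z| < 2·ln(10)·m. -/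
open MeasureTheory Set

lemma aux_int (c d H : ℝ) (hc : 0 < c) (hcd : c ≤ d) :
    ∫ x in Set.Ico c d, H * x⁻¹ = H * (Real.log d - Real.log c) := by
  have hd : 0 < d := lt_of_lt_of_le hc hcd
  rw [integral_Ico_eq_integral_Ioo, ← integral_Ioc_eq_integral_Ioo,
    ← intervalIntegral.integral_of_le hcd, intervalIntegral.integral_const_mul,
    integral_inv (by rw [Set.uIcc_of_le hcd]; intro h; linarith [h.1]),
    Real.log_div hd.ne' hc.ne']

lemma aux_integrable (c d H : ℝ) (hc : 0 < c) :
    IntegrableOn (fun x => H * x⁻¹) (Set.Ico c d) volume := by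
  apply IntegrableOn.mono_set (t := Icc c d)
  · apply ContinuousOn.integrableOn_Icc
    apply ContinuousOn.mul continuousOn_const
    apply ContinuousOn.inv₀ continuousOn_id
    intro x hx; exact (hc.trans_le hx.1).ne'
  · exact Ico_subset_Icc_self

lemma slice_upper (μ : Measure ℝ) [IsProbabilityMeasure μ] (f : ℝ → ℝ)
    (hμ : μ = volume.withDensity (fun x => ENNReal.ofReal (f x)))
    (c d H : ℝ) (hc : 0 < c) (hcd : c ≤ d) (hH : 0 ≤ H)
    (hb : ∀ x ∈ Set.Icc c d, x * f x ≤ H) :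
    (μ (Set.Ico c d)).toReal ≤ H * (Real.log d - Real.log c) := by
  have key : μ (Set.Ico c d) ≤ ENNReal.ofReal (H * (Real.log d - Real.log c)) := by
    rw [hμ, withDensity_apply _ measurableSet_Ico]
    calc ∫⁻ x in Set.Ico c d, ENNReal.ofReal (f x) ∂volume
        ≤ ∫⁻ x in Set.Ico c d, ENNReal.ofReal (H * x⁻¹) ∂volume := by
          apply setLIntegral_mono' measurableSet_Ico
          intro x hx
          apply ENNReal.ofReal_le_ofReal
          have hx0 : 0 < x := hc.trans_le hx.1
          have := hb x (Set.Ico_subset_Icc_self hx)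
          rw [le_mul_inv_iff₀ hx0]
          linarith [mul_comm x (f x)]
      _ = ENNReal.ofReal (H * (Real.log d - Real.log c)) := by
          rw [← aux_int c d H hc hcd]
          rw [← ofReal_integral_eq_lintegral_ofReal (aux_integrable c d H hc)]
          filter_upwards [ae_restrict_mem measurableSet_Ico] with x hx
          have hx0 : 0 < x := hc.trans_le hx.1
          positivity
  calc (μ (Set.Ico c d)).toReal ≤ (ENNReal.ofReal (H * (Real.log d - Real.log c))).toReal :=
        ENNReal.toReal_mono ENNReal.ofReal_ne_top key
    _ ≤ H * (Real.log d - Real.log c) := by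
        rw [ENNReal.toReal_ofReal]
        have : Real.log c ≤ Real.log d := Real.log_le_log hc hcd
        nlinarith

lemma slice_lower (μ : Measure ℝ) [IsProbabilityMeasure μ] (f : ℝ → ℝ)
    (hμ : μ = volume.withDensity (fun x => ENNReal.ofReal (f x)))
    (c d H : ℝ) (hc : 0 < c) (hcd : c ≤ d) (hH : 0 ≤ H)
    (hb : ∀ x ∈ Set.Icc c d, H ≤ x * f x) :
    H * (Real.log d - Real.log c) ≤ (μ (Set.Ico c d)).toReal := by
  have key : ENNReal.ofReal (H * (Real.log d - Real.log c)) ≤ μ (Set.Ico c d) := by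
    rw [hμ, withDensity_apply _ measurableSet_Ico]
    calc ENNReal.ofReal (H * (Real.log d - Real.log c))
        = ∫⁻ x in Set.Ico c d, ENNReal.ofReal (H * x⁻¹) ∂volume := by
          rw [← aux_int c d H hc hcd]
          rw [← ofReal_integral_eq_lintegral_ofReal (aux_integrable c d H hc)]
          filter_upwards [ae_restrict_mem measurableSet_Ico] with x hx
          have hx0 : 0 < x := hc.trans_le hx.1
          positivity
      _ ≤ ∫⁻ x in Set.Ico c d, ENNReal.ofReal (f x) ∂volume := by
          apply setLIntegral_mono' measurableSet_Ico
          intro x hx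
          apply ENNReal.ofReal_le_ofReal
          have hx0 : 0 < x := hc.trans_le hx.1
          have := hb x (Set.Ico_subset_Icc_self hx)
          rw [mul_inv_le_iff₀ hx0]
          linarith [mul_comm x (f x)]
  have hne : μ (Set.Ico c d) ≠ ⊤ := measure_ne_top μ _
  have := ENNReal.toReal_mono hne key
  rw [ENNReal.toReal_ofReal] at this
  · exact this
  · have : Real.log c ≤ Real.log d := Real.log_le_log hc hcd
    nlinarith

lemma slice_union (w : ℝ) (hw0 : 0 < w) (hw1 : w ≤ 1) :
    (⋃ n : ℤ, Set.Ico ((10:ℝ)^(n:ℝ)) ((10:ℝ)^((n:ℝ)+w)))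
      = {x : ℝ | 0 < x ∧ Int.fract (Real.logb 10 x) < w} := by
  have h10 : (1:ℝ) < 10 := by norm_num
  ext x
  simp only [Set.mem_iUnion, Set.mem_Ico, Set.mem_setOf_eq]
  constructor
  · rintro ⟨n, h1, h2⟩
    have hx0 : 0 < x := lt_of_lt_of_le (Real.rpow_pos_of_pos (by norm_num) _) h1
    have hl1 : (n:ℝ) ≤ Real.logb 10 x := by
      have := Real.logb_le_logb_of_le h10 (Real.rpow_pos_of_pos (by norm_num) _) h1
      rwa [Real.logb_rpow (by norm_num) (by norm_num)] at this
    have hl2 : Real.logb 10 x < (n:ℝ) + w := by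
      have := Real.logb_lt_logb h10 hx0 h2
      rwa [Real.logb_rpow (by norm_num) (by norm_num)] at this
    have hfl : ⌊Real.logb 10 x⌋ = n := by
      apply Int.floor_eq_iff.mpr
      exact ⟨hl1, by linarith⟩
    refine ⟨hx0, ?_⟩
    rw [Int.fract, hfl]
    linarith
  · rintro ⟨hx0, hfr⟩
    have hx : (10:ℝ) ^ (Real.logb 10 x) = x := Real.rpow_logb (by norm_num) (by norm_num) hx0
    refine ⟨⌊Real.logb 10 x⌋, ?_, ?_⟩
    · calc (10:ℝ) ^ ((⌊Real.logb 10 x⌋ : ℤ) : ℝ)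
          ≤ (10:ℝ) ^ (Real.logb 10 x) :=
            Real.rpow_le_rpow_of_exponent_le (by norm_num) (Int.floor_le _)
        _ = x := hx
    · calc x = (10:ℝ) ^ (Real.logb 10 x) := hx.symm
        _ < (10:ℝ) ^ (((⌊Real.logb 10 x⌋ : ℤ) : ℝ) + w) := by
            apply Real.rpow_lt_rpow_of_exponent_lt h10
            rw [Int.fract] at hfr
            linarith

lemma telescope_left (g : ℤ → ℝ) (N : ℤ) (K : ℕ) :
    ∑ n ∈ Finset.Ico (N - (K:ℤ)) N, (g (n+1) - g n) = g N - g (N - K) := by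
  induction K with
  | zero => simp
  | succ K ih =>
    have hins : Finset.Ico (N - ((K:ℤ)+1)) N = insert (N - ((K:ℤ)+1)) (Finset.Ico (N - (K:ℤ)) N) := by
      ext n; simp only [Finset.mem_Ico, Finset.mem_insert]; omega
    push_cast
    rw [hins, Finset.sum_insert (by simp only [Finset.mem_Ico]; omega)]
    push_cast at ih
    rw [ih]
    ring_nf

lemma telescope_right (g : ℤ → ℝ) (N : ℤ) (K : ℕ) :
    ∑ n ∈ Finset.Ico (N + 1) (N + 1 + (K:ℤ)), (g n - g (n+1)) = g (N+1) - g (N+1+K) := by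
  induction K with
  | zero => simp
  | succ K ih =>
    have hins : Finset.Ico (N+1) (N + 1 + ((K:ℤ)+1))
        = insert (N + 1 + (K:ℤ)) (Finset.Ico (N+1) (N + 1 + (K:ℤ))) := by
      ext n; simp only [Finset.mem_Ico, Finset.mem_insert]; omega
    push_cast
    rw [hins, Finset.sum_insert (by simp only [Finset.mem_Ico]; omega)]
    push_cast at ih
    rw [ih]
    ring_nf

lemma sum_bound_left (g : ℤ → ℝ) (N : ℤ) (m : ℝ) (hg0 : ∀ n, 0 ≤ g n) (hgm : g N ≤ m)
    (hmono : ∀ n < N, g n ≤ g (n+1)) (F : Finset ℤ) (hF : ∀ n ∈ F, n < N) :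
    ∑ n ∈ F, (g (n+1) - g n) ≤ m := by
  obtain ⟨L, hL⟩ : ∃ L : ℤ, ∀ n ∈ F, L ≤ n := by
    rcases F.eq_empty_or_nonempty with rfl | hne
    · exact ⟨0, by simp⟩
    · exact ⟨F.min' hne, fun n hn => F.min'_le n hn⟩
  set K := (N - L).toNat with hK
  have hsub : F ⊆ Finset.Ico (N - (K:ℤ)) N := by
    intro n hn
    simp only [Finset.mem_Ico]
    have := hL n hn
    have := hF n hn
    omega
  calc ∑ n ∈ F, (g (n+1) - g n)
      ≤ ∑ n ∈ Finset.Ico (N - (K:ℤ)) N, (g (n+1) - g n) := by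
        apply Finset.sum_le_sum_of_subset_of_nonneg hsub
        intro n hn _
        simp only [Finset.mem_Ico] at hn
        linarith [hmono n hn.2]
    _ = g N - g (N - K) := telescope_left g N K
    _ ≤ m := by linarith [hg0 (N - K)]

lemma sum_bound_right (g : ℤ → ℝ) (N : ℤ) (m : ℝ) (hg0 : ∀ n, 0 ≤ g n) (hgm : g (N+1) ≤ m)
    (hanti : ∀ n > N, g (n+1) ≤ g n) (F : Finset ℤ) (hF : ∀ n ∈ F, N < n) :
    ∑ n ∈ F, (g n - g (n+1)) ≤ m := by
  obtain ⟨U, hU⟩ : ∃ U : ℤ, ∀ n ∈ F, n ≤ U := by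
    rcases F.eq_empty_or_nonempty with rfl | hne
    · exact ⟨0, by simp⟩
    · exact ⟨F.max' hne, fun n hn => F.le_max' n hn⟩
  set K := (U - N).toNat with hK
  have hsub : F ⊆ Finset.Ico (N + 1) (N + 1 + (K:ℤ)) := by
    intro n hn
    simp only [Finset.mem_Ico]
    have := hU n hn
    have := hF n hn
    omega
  calc ∑ n ∈ F, (g n - g (n+1))
      ≤ ∑ n ∈ Finset.Ico (N + 1) (N + 1 + (K:ℤ)), (g n - g (n+1)) := by
        apply Finset.sum_le_sum_of_subset_of_nonneg hsub
        intro n hn _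
        simp only [Finset.mem_Ico] at hn
        linarith [hanti n hn.1]
    _ = g (N+1) - g (N+1+K) := telescope_right g N K
    _ ≤ m := by linarith [hg0 (N + 1 + K)]

lemma slices_disjoint (w : ℝ) (hw : w ≤ 1) :
    Pairwise (Function.onFun Disjoint fun n : ℤ => Set.Ico ((10:ℝ)^(n:ℝ)) ((10:ℝ)^((n:ℝ)+w))) := by
  have key : ∀ n n' : ℤ, n < n' →
      Disjoint (Set.Ico ((10:ℝ)^(n:ℝ)) ((10:ℝ)^((n:ℝ)+w)))
        (Set.Ico ((10:ℝ)^(n':ℝ)) ((10:ℝ)^((n':ℝ)+w))) := by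
    intro n n' h
    apply Set.Ico_disjoint_Ico.mpr
    have hc : (n:ℝ) + 1 ≤ (n':ℝ) := by exact_mod_cast (by omega : n + 1 ≤ n')
    have h1 : (10:ℝ)^((n:ℝ)+w) ≤ (10:ℝ)^(n':ℝ) :=
      Real.rpow_le_rpow_of_exponent_le (by norm_num) (by linarith)
    calc min ((10:ℝ)^((n:ℝ)+w)) ((10:ℝ)^((n':ℝ)+w)) ≤ (10:ℝ)^((n:ℝ)+w) := min_le_left _ _
      _ ≤ (10:ℝ)^(n':ℝ) := h1
      _ ≤ max ((10:ℝ)^(n:ℝ)) ((10:ℝ)^(n':ℝ)) := le_max_right _ _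
  intro n n' hne
  rcases hne.lt_or_gt with h | h
  · exact key n n' h
  · exact (key n' n h).symm

lemma hasSum_measure_toReal (μ : Measure ℝ) [IsFiniteMeasure μ] (s : ℤ → Set ℝ)
    (hd : Pairwise (Function.onFun Disjoint s)) (hms : ∀ n, MeasurableSet (s n)) :
    HasSum (fun n => (μ (s n)).toReal) ((μ (⋃ n, s n)).toReal) := by
  rw [measure_iUnion hd hms, ENNReal.tsum_toReal_eq (fun n => measure_ne_top μ _)]
  exact (ENNReal.summable_toReal (by rw [← measure_iUnion hd hms]; exact measure_ne_top μ _)).hasSum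

lemma finsum_bound (z m L : ℝ) (N : ℤ) (g u : ℤ → ℝ)
    (hz0 : 0 < z) (hz1 : z < 1) (hL : 0 < L)
    (hg0 : ∀ n, 0 ≤ g n) (hgm : ∀ n, g n ≤ m)
    (hmono : ∀ n < N, g n ≤ g (n+1)) (hanti : ∀ n > N, g (n+1) ≤ g n)
    (hu1 : ∀ n < N, |u n| ≤ z*(1-z)*L*(g (n+1) - g n))
    (hu2 : |u N| ≤ z*L*m)
    (hu3 : ∀ n > N, |u n| ≤ z*(1-z)*L*(g n - g (n+1)))
    (F : Finset ℤ) :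
    |∑ n ∈ F, u n| ≤ z*(1-z)*L*m + z*L*m + z*(1-z)*L*m := by
  have hm : 0 ≤ m := le_trans (hg0 N) (hgm N)
  have hc : 0 ≤ z*(1-z)*L := by
    have h1 : 0 < 1 - z := by linarith
    positivity
  have part1 : ∑ n ∈ F.filter (· < N), |u n| ≤ z*(1-z)*L*m := by
    calc ∑ n ∈ F.filter (· < N), |u n|
        ≤ ∑ n ∈ F.filter (· < N), z*(1-z)*L*(g (n+1) - g n) := by
          apply Finset.sum_le_sum
          intro n hn
          exact hu1 n (Finset.mem_filter.mp hn).2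
      _ = z*(1-z)*L * ∑ n ∈ F.filter (· < N), (g (n+1) - g n) := by rw [Finset.mul_sum]
      _ ≤ z*(1-z)*L*m := by
          apply mul_le_mul_of_nonneg_left _ hc
          exact sum_bound_left g N m hg0 (hgm N) hmono _ (fun n hn => (Finset.mem_filter.mp hn).2)
  have part2 : ∑ n ∈ (F.filter (fun n => ¬ n < N)).filter (· = N), |u n| ≤ z*L*m := by
    calc ∑ n ∈ (F.filter (fun n => ¬ n < N)).filter (· = N), |u n|
        ≤ ∑ n ∈ ({N} : Finset ℤ), |u n| := by
          apply Finset.sum_le_sum_of_subset_of_nonneg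
          · intro n hn
            simp only [Finset.mem_filter] at hn
            simp [hn.2]
          · intro n _ _; exact abs_nonneg _
      _ = |u N| := Finset.sum_singleton _ _
      _ ≤ z*L*m := hu2
  have part3 : ∑ n ∈ (F.filter (fun n => ¬ n < N)).filter (fun n => ¬ n = N), |u n| ≤ z*(1-z)*L*m := by
    have hmem : ∀ n ∈ (F.filter (fun n => ¬ n < N)).filter (fun n => ¬ n = N), N < n := by
      intro n hn
      simp only [Finset.mem_filter] at hn
      omega
    calc ∑ n ∈ (F.filter (fun n => ¬ n < N)).filter (fun n => ¬ n = N), |u n|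
        ≤ ∑ n ∈ (F.filter (fun n => ¬ n < N)).filter (fun n => ¬ n = N), z*(1-z)*L*(g n - g (n+1)) := by
          apply Finset.sum_le_sum
          intro n hn
          exact hu3 n (hmem n hn)
      _ = z*(1-z)*L * ∑ n ∈ (F.filter (fun n => ¬ n < N)).filter (fun n => ¬ n = N), (g n - g (n+1)) := by
          rw [Finset.mul_sum]
      _ ≤ z*(1-z)*L*m := by
          apply mul_le_mul_of_nonneg_left _ hc
          exact sum_bound_right g N m hg0 (hgm (N+1)) hanti _ hmem
  calc |∑ n ∈ F, u n| ≤ ∑ n ∈ F, |u n| := Finset.abs_sum_le_sum_abs u F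
    _ = ∑ n ∈ F.filter (· < N), |u n|
        + (∑ n ∈ (F.filter (fun n => ¬ n < N)).filter (· = N), |u n|
          + ∑ n ∈ (F.filter (fun n => ¬ n < N)).filter (fun n => ¬ n = N), |u n|) := by
        rw [Finset.sum_filter_add_sum_filter_not ((F.filter (fun n => ¬ n < N))) (· = N)]
        exact (Finset.sum_filter_add_sum_filter_not F _ _).symm
    _ ≤ z*(1-z)*L*m + z*L*m + z*(1-z)*L*m := by linarith

set_option maxHeartbeats 1000000 in
/-- Theorem 1: if `X` is a positive continuous r.v. with density `f` such that
`x ↦ x·f(x)` attains its maximum `m` at some `a > 0`, is nondecreasing on `(0,a]`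
and nonincreasing on `[a,∞)`, then `|P({log₁₀ X} < z) − z| < 2 ln(10) m`
for every `z ∈ (0,1]`. -/
theorem benford_of_scatter_regularity
    (μ : Measure ℝ) [IsProbabilityMeasure μ] (f : ℝ → ℝ)
    (hf0 : ∀ x, 0 ≤ f x) (hsupp : ∀ x ≤ 0, f x = 0)
    (hμ : μ = volume.withDensity (fun x => ENNReal.ofReal (f x)))
    (a m : ℝ) (ha : 0 < a) (hm : m = a * f a)
    (hmax : ∀ x, x * f x ≤ m)
    (hmono : MonotoneOn (fun x => x * f x) (Ioc 0 a))
    (hanti : AntitoneOn (fun x => x * f x) (Ici a)) :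
    ∀ z ∈ Ioc (0 : ℝ) 1,
      |(μ {x : ℝ | Int.fract (Real.logb 10 x) < z}).toReal - z|
        < 2 * Real.log 10 * m := by
  intro z hz
  obtain ⟨hz0, hz1'⟩ := hz
  have hL : 0 < Real.log 10 := Real.log_pos (by norm_num)
  -- m > 0
  have hm0 : 0 < m := by
    by_contra hmle
    push_neg at hmle
    have hf : ∀ x, f x = 0 := by
      intro x
      rcases le_or_gt x 0 with hx | hx
      · exact hsupp x hx
      · have h1 := hmax x
        have h2 := hf0 x
        nlinarith
    have hz' : μ Set.univ = 0 := by
      rw [hμ, withDensity_apply _ MeasurableSet.univ, Measure.restrict_univ]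
      simp [hf]
    rw [measure_univ] at hz'
    exact one_ne_zero hz'
  rcases eq_or_lt_of_le hz1' with rfl | hz1
  · -- z = 1
    have hs : {x : ℝ | Int.fract (Real.logb 10 x) < 1} = Set.univ := by
      ext x; simp [Int.fract_lt_one]
    rw [hs, measure_univ, ENNReal.toReal_one, sub_self, abs_zero]
    positivity
  -- main case : z < 1
  have pmono : ∀ {s t : ℝ}, s ≤ t → (10:ℝ)^s ≤ (10:ℝ)^t :=
    fun h => Real.rpow_le_rpow_of_exponent_le (by norm_num) h
  have ppos : ∀ t : ℝ, 0 < (10:ℝ)^t := fun t => Real.rpow_pos_of_pos (by norm_num) t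
  have plog : ∀ t : ℝ, Real.log ((10:ℝ)^t) = t * Real.log 10 :=
    fun t => Real.log_rpow (by norm_num) t
  have pa : (10:ℝ)^(Real.logb 10 a) = a := Real.rpow_logb (by norm_num) (by norm_num) ha
  set α := Real.logb 10 a with hα
  set N : ℤ := ⌊α⌋ with hN
  have hNα : (N:ℝ) ≤ α := Int.floor_le α
  have hαN : α < (N:ℝ) + 1 := Int.lt_floor_add_one α
  -- measure of Iic 0 is zero
  have hIic : μ (Set.Iic 0) = 0 := by
    rw [hμ, withDensity_apply _ measurableSet_Iic]
    have hae : ∀ᵐ x ∂(volume.restrict (Set.Iic 0)), ENNReal.ofReal (f x) = 0 := by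
      filter_upwards [ae_restrict_mem measurableSet_Iic] with x hx
      rw [hsupp x hx]; simp
    rw [lintegral_congr_ae hae, lintegral_zero]
  have hsplit : ∀ T : Set ℝ, μ T = μ (T ∩ Set.Ioi 0) := by
    intro T
    apply le_antisymm
    · calc μ T ≤ μ ((T ∩ Set.Ioi 0) ∪ Set.Iic 0) := by
            apply measure_mono
            intro x hx
            by_cases h : 0 < x
            · exact Or.inl ⟨hx, h⟩
            · exact Or.inr (le_of_not_gt h)
        _ ≤ μ (T ∩ Set.Ioi 0) + μ (Set.Iic 0) := measure_union_le _ _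
        _ = μ (T ∩ Set.Ioi 0) := by rw [hIic, add_zero]
    · exact measure_mono Set.inter_subset_left
  -- HasSum for J
  have hJsum : HasSum (fun n : ℤ => (μ (Set.Ico ((10:ℝ)^(n:ℝ)) ((10:ℝ)^((n:ℝ)+z)))).toReal)
      ((μ {x : ℝ | Int.fract (Real.logb 10 x) < z}).toReal) := by
    have heq : μ {x : ℝ | Int.fract (Real.logb 10 x) < z}
        = μ (⋃ n : ℤ, Set.Ico ((10:ℝ)^(n:ℝ)) ((10:ℝ)^((n:ℝ)+z))) := by
      rw [hsplit, slice_union z hz0 (le_of_lt hz1)]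
      congr 1
      ext x
      simp only [Set.mem_inter_iff, Set.mem_setOf_eq, Set.mem_Ioi]
      tauto
    rw [heq]
    exact hasSum_measure_toReal μ _ (slices_disjoint z (le_of_lt hz1)) (fun n => measurableSet_Ico)
  have hIsum : HasSum (fun n : ℤ => (μ (Set.Ico ((10:ℝ)^(n:ℝ)) ((10:ℝ)^((n:ℝ)+1)))).toReal) 1 := by
    have heq : (1 : ENNReal) = μ (⋃ n : ℤ, Set.Ico ((10:ℝ)^(n:ℝ)) ((10:ℝ)^((n:ℝ)+1))) := by
      rw [slice_union 1 one_pos le_rfl]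
      have h1 : {x : ℝ | 0 < x ∧ Int.fract (Real.logb 10 x) < 1} = Set.Ioi 0 := by
        ext x; simp [Int.fract_lt_one, Set.mem_Ioi]
      rw [h1, ← Set.univ_inter (Set.Ioi 0), ← hsplit Set.univ, measure_univ]
    have := hasSum_measure_toReal μ _ (slices_disjoint 1 le_rfl) (fun n : ℤ => measurableSet_Ico)
    rwa [← heq, ENNReal.toReal_one] at this
  -- difference HasSum
  have hJI : HasSum (fun n : ℤ => (μ (Set.Ico ((10:ℝ)^(n:ℝ)) ((10:ℝ)^((n:ℝ)+z)))).toReal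
      - z * (μ (Set.Ico ((10:ℝ)^(n:ℝ)) ((10:ℝ)^((n:ℝ)+1)))).toReal)
      ((μ {x : ℝ | Int.fract (Real.logb 10 x) < z}).toReal - z) := by
    have := hJsum.sub (hIsum.mul_left z)
    rwa [mul_one] at this
  -- additivity of slices
  have hadd : ∀ n : ℤ, (μ (Set.Ico ((10:ℝ)^(n:ℝ)) ((10:ℝ)^((n:ℝ)+1)))).toReal
      = (μ (Set.Ico ((10:ℝ)^(n:ℝ)) ((10:ℝ)^((n:ℝ)+z)))).toReal
        + (μ (Set.Ico ((10:ℝ)^((n:ℝ)+z)) ((10:ℝ)^((n:ℝ)+1)))).toReal := by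
    intro n
    rw [← ENNReal.toReal_add (measure_ne_top μ _) (measure_ne_top μ _)]
    congr 1
    have h1 : (10:ℝ)^(n:ℝ) ≤ (10:ℝ)^((n:ℝ)+z) := pmono (by linarith)
    have h2 : (10:ℝ)^((n:ℝ)+z) ≤ (10:ℝ)^((n:ℝ)+1) := pmono (by linarith)
    rw [← Set.Ico_union_Ico_eq_Ico h1 h2]
    exact measure_union
      (Set.Ico_disjoint_Ico.mpr ((min_le_left _ _).trans (le_max_right _ _)))
      measurableSet_Ico
  -- the three per-interval bounds
  have hu1 : ∀ n : ℤ, n < N →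
      |(μ (Set.Ico ((10:ℝ)^(n:ℝ)) ((10:ℝ)^((n:ℝ)+z)))).toReal
        - z * (μ (Set.Ico ((10:ℝ)^(n:ℝ)) ((10:ℝ)^((n:ℝ)+1)))).toReal|
      ≤ z*(1-z)*Real.log 10*((10:ℝ)^(((n+1:ℤ)):ℝ) * f ((10:ℝ)^(((n+1:ℤ)):ℝ))
          - (10:ℝ)^(n:ℝ) * f ((10:ℝ)^(n:ℝ))) := by
    intro n hn
    have hcast : (((n+1:ℤ)):ℝ) = (n:ℝ)+1 := by push_cast; ring
    rw [hcast]
    have hn1α : (n:ℝ) + 1 ≤ α := by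
      have : (n:ℝ) + 1 ≤ (N:ℝ) := by exact_mod_cast (by omega : n + 1 ≤ N)
      linarith
    have hda : (10:ℝ)^((n:ℝ)+1) ≤ a := by rw [← pa]; exact pmono hn1α
    have hcb : (10:ℝ)^(n:ℝ) ≤ (10:ℝ)^((n:ℝ)+z) := pmono (by linarith)
    have hbd : (10:ℝ)^((n:ℝ)+z) ≤ (10:ℝ)^((n:ℝ)+1) := pmono (by linarith)
    have hc0 := ppos (n:ℝ)
    have memx1 : ∀ x ∈ Set.Icc ((10:ℝ)^(n:ℝ)) ((10:ℝ)^((n:ℝ)+z)), x ∈ Set.Ioc (0:ℝ) a :=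
      fun x hx => ⟨hc0.trans_le hx.1, hx.2.trans (hbd.trans hda)⟩
    have memx2 : ∀ x ∈ Set.Icc ((10:ℝ)^((n:ℝ)+z)) ((10:ℝ)^((n:ℝ)+1)), x ∈ Set.Ioc (0:ℝ) a :=
      fun x hx => ⟨(ppos _).trans_le hx.1, hx.2.trans hda⟩
    have memc : (10:ℝ)^(n:ℝ) ∈ Set.Ioc (0:ℝ) a := ⟨hc0, hcb.trans (hbd.trans hda)⟩
    have memb : (10:ℝ)^((n:ℝ)+z) ∈ Set.Ioc (0:ℝ) a := ⟨ppos _, hbd.trans hda⟩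
    have memd : (10:ℝ)^((n:ℝ)+1) ∈ Set.Ioc (0:ℝ) a := ⟨ppos _, hda⟩
    have e1 := slice_upper μ f hμ ((10:ℝ)^(n:ℝ)) ((10:ℝ)^((n:ℝ)+z))
      ((10:ℝ)^((n:ℝ)+z) * f ((10:ℝ)^((n:ℝ)+z))) hc0 hcb
      (mul_nonneg (ppos _).le (hf0 _))
      (fun x hx => hmono (memx1 x hx) memb hx.2)
    have e2 := slice_lower μ f hμ ((10:ℝ)^(n:ℝ)) ((10:ℝ)^((n:ℝ)+z))
      ((10:ℝ)^(n:ℝ) * f ((10:ℝ)^(n:ℝ))) hc0 hcb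
      (mul_nonneg hc0.le (hf0 _))
      (fun x hx => hmono memc (memx1 x hx) hx.1)
    have e3 := slice_upper μ f hμ ((10:ℝ)^((n:ℝ)+z)) ((10:ℝ)^((n:ℝ)+1))
      ((10:ℝ)^((n:ℝ)+1) * f ((10:ℝ)^((n:ℝ)+1))) (ppos _) hbd
      (mul_nonneg (ppos _).le (hf0 _))
      (fun x hx => hmono (memx2 x hx) memd hx.2)
    have e4 := slice_lower μ f hμ ((10:ℝ)^((n:ℝ)+z)) ((10:ℝ)^((n:ℝ)+1))
      ((10:ℝ)^((n:ℝ)+z) * f ((10:ℝ)^((n:ℝ)+z))) (ppos _) hbd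
      (mul_nonneg (ppos _).le (hf0 _))
      (fun x hx => hmono memb (memx2 x hx) hx.1)
    rw [plog, plog] at e1 e2 e3 e4
    have e5 := hadd n
    have hCD : (10:ℝ)^(n:ℝ) * f ((10:ℝ)^(n:ℝ)) ≤ (10:ℝ)^((n:ℝ)+1) * f ((10:ℝ)^((n:ℝ)+1)) :=
      hmono memc memd (hcb.trans hbd)
    have f1 := mul_le_mul_of_nonneg_left e1 (by linarith : (0:ℝ) ≤ 1 - z)
    have f2 := mul_le_mul_of_nonneg_left e4 hz0.le
    have f3 := mul_le_mul_of_nonneg_left e2 (by linarith : (0:ℝ) ≤ 1 - z)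
    have f4 := mul_le_mul_of_nonneg_left e3 hz0.le
    have f5 : 0 ≤ z*(1-z)*Real.log 10 *
        ((10:ℝ)^((n:ℝ)+1) * f ((10:ℝ)^((n:ℝ)+1)) - (10:ℝ)^(n:ℝ) * f ((10:ℝ)^(n:ℝ))) := by
      apply mul_nonneg _ (by linarith)
      have : (0:ℝ) < 1 - z := by linarith
      positivity
    rw [e5, abs_le]
    constructor
    · linarith [f3, f4]
    · linarith [f1, f2, f5]
  have hu2 : |(μ (Set.Ico ((10:ℝ)^(N:ℝ)) ((10:ℝ)^((N:ℝ)+z)))).toReal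
      - z * (μ (Set.Ico ((10:ℝ)^(N:ℝ)) ((10:ℝ)^((N:ℝ)+1)))).toReal|
      ≤ z*Real.log 10*m := by
    have e1 := slice_upper μ f hμ ((10:ℝ)^(N:ℝ)) ((10:ℝ)^((N:ℝ)+z)) m (ppos _)
      (pmono (by linarith)) hm0.le (fun x _ => hmax x)
    have e2 := slice_upper μ f hμ ((10:ℝ)^(N:ℝ)) ((10:ℝ)^((N:ℝ)+1)) m (ppos _)
      (pmono (by linarith)) hm0.le (fun x _ => hmax x)
    rw [plog, plog] at e1 e2
    have f2 := mul_le_mul_of_nonneg_left e2 hz0.le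
    have g1 : (0:ℝ) ≤ (μ (Set.Ico ((10:ℝ)^(N:ℝ)) ((10:ℝ)^((N:ℝ)+z)))).toReal := ENNReal.toReal_nonneg
    have g2 : (0:ℝ) ≤ z * (μ (Set.Ico ((10:ℝ)^(N:ℝ)) ((10:ℝ)^((N:ℝ)+1)))).toReal :=
      mul_nonneg hz0.le ENNReal.toReal_nonneg
    rw [abs_le]
    constructor
    · linarith [f2, g1]
    · linarith [e1, g2]
  have hu3 : ∀ n : ℤ, n > N →
      |(μ (Set.Ico ((10:ℝ)^(n:ℝ)) ((10:ℝ)^((n:ℝ)+z)))).toReal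
        - z * (μ (Set.Ico ((10:ℝ)^(n:ℝ)) ((10:ℝ)^((n:ℝ)+1)))).toReal|
      ≤ z*(1-z)*Real.log 10*((10:ℝ)^(n:ℝ) * f ((10:ℝ)^(n:ℝ))
          - (10:ℝ)^(((n+1:ℤ)):ℝ) * f ((10:ℝ)^(((n+1:ℤ)):ℝ))) := by
    intro n hn
    have hcast : (((n+1:ℤ)):ℝ) = (n:ℝ)+1 := by push_cast; ring
    rw [hcast]
    have hnα : α ≤ (n:ℝ) := by
      have : (N:ℝ) + 1 ≤ (n:ℝ) := by exact_mod_cast (by omega : N + 1 ≤ n)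
      linarith
    have hac : a ≤ (10:ℝ)^(n:ℝ) := by rw [← pa]; exact pmono hnα
    have hcb : (10:ℝ)^(n:ℝ) ≤ (10:ℝ)^((n:ℝ)+z) := pmono (by linarith)
    have hbd : (10:ℝ)^((n:ℝ)+z) ≤ (10:ℝ)^((n:ℝ)+1) := pmono (by linarith)
    have hc0 := ppos (n:ℝ)
    have memx1 : ∀ x ∈ Set.Icc ((10:ℝ)^(n:ℝ)) ((10:ℝ)^((n:ℝ)+z)), x ∈ Set.Ici a :=
      fun x hx => hac.trans hx.1
    have memx2 : ∀ x ∈ Set.Icc ((10:ℝ)^((n:ℝ)+z)) ((10:ℝ)^((n:ℝ)+1)), x ∈ Set.Ici a :=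
      fun x hx => (hac.trans hcb).trans hx.1
    have memc : (10:ℝ)^(n:ℝ) ∈ Set.Ici a := hac
    have memb : (10:ℝ)^((n:ℝ)+z) ∈ Set.Ici a := hac.trans hcb
    have memd : (10:ℝ)^((n:ℝ)+1) ∈ Set.Ici a := hac.trans (hcb.trans hbd)
    have e1 := slice_upper μ f hμ ((10:ℝ)^(n:ℝ)) ((10:ℝ)^((n:ℝ)+z))
      ((10:ℝ)^(n:ℝ) * f ((10:ℝ)^(n:ℝ))) hc0 hcb
      (mul_nonneg hc0.le (hf0 _))
      (fun x hx => hanti memc (memx1 x hx) hx.1)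
    have e2 := slice_lower μ f hμ ((10:ℝ)^(n:ℝ)) ((10:ℝ)^((n:ℝ)+z))
      ((10:ℝ)^((n:ℝ)+z) * f ((10:ℝ)^((n:ℝ)+z))) hc0 hcb
      (mul_nonneg (ppos _).le (hf0 _))
      (fun x hx => hanti (memx1 x hx) memb hx.2)
    have e3 := slice_upper μ f hμ ((10:ℝ)^((n:ℝ)+z)) ((10:ℝ)^((n:ℝ)+1))
      ((10:ℝ)^((n:ℝ)+z) * f ((10:ℝ)^((n:ℝ)+z))) (ppos _) hbd
      (mul_nonneg (ppos _).le (hf0 _))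
      (fun x hx => hanti memb (memx2 x hx) hx.1)
    have e4 := slice_lower μ f hμ ((10:ℝ)^((n:ℝ)+z)) ((10:ℝ)^((n:ℝ)+1))
      ((10:ℝ)^((n:ℝ)+1) * f ((10:ℝ)^((n:ℝ)+1))) (ppos _) hbd
      (mul_nonneg (ppos _).le (hf0 _))
      (fun x hx => hanti (memx2 x hx) memd hx.2)
    rw [plog, plog] at e1 e2 e3 e4
    have e5 := hadd n
    have hDC : (10:ℝ)^((n:ℝ)+1) * f ((10:ℝ)^((n:ℝ)+1)) ≤ (10:ℝ)^(n:ℝ) * f ((10:ℝ)^(n:ℝ)) :=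
      hanti memc memd (hcb.trans hbd)
    have f1 := mul_le_mul_of_nonneg_left e1 (by linarith : (0:ℝ) ≤ 1 - z)
    have f2 := mul_le_mul_of_nonneg_left e4 hz0.le
    have f3 := mul_le_mul_of_nonneg_left e2 (by linarith : (0:ℝ) ≤ 1 - z)
    have f4 := mul_le_mul_of_nonneg_left e3 hz0.le
    have f5 : 0 ≤ z*(1-z)*Real.log 10 *
        ((10:ℝ)^(n:ℝ) * f ((10:ℝ)^(n:ℝ)) - (10:ℝ)^((n:ℝ)+1) * f ((10:ℝ)^((n:ℝ)+1))) := by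
      apply mul_nonneg _ (by linarith)
      have : (0:ℝ) < 1 - z := by linarith
      positivity
    rw [e5, abs_le]
    constructor
    · linarith [f3, f4, f5]
    · linarith [f1, f2]
  -- monotonicity of g
  have hg0 : ∀ k : ℤ, (0:ℝ) ≤ (10:ℝ)^(k:ℝ) * f ((10:ℝ)^(k:ℝ)) :=
    fun k => mul_nonneg (ppos _).le (hf0 _)
  have hgm : ∀ k : ℤ, (10:ℝ)^(k:ℝ) * f ((10:ℝ)^(k:ℝ)) ≤ m := fun k => hmax _
  have hgmono : ∀ k : ℤ, k < N → (10:ℝ)^(k:ℝ) * f ((10:ℝ)^(k:ℝ))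
      ≤ (10:ℝ)^(((k+1:ℤ)):ℝ) * f ((10:ℝ)^(((k+1:ℤ)):ℝ)) := by
    intro k hk
    have hcast : (((k+1:ℤ)):ℝ) = (k:ℝ)+1 := by push_cast; ring
    rw [hcast]
    have hk1 : (k:ℝ) + 1 ≤ α := by
      have : (k:ℝ) + 1 ≤ (N:ℝ) := by exact_mod_cast (by omega : k + 1 ≤ N)
      linarith
    have h2 : (10:ℝ)^((k:ℝ)+1) ≤ a := by rw [← pa]; exact pmono hk1
    exact hmono ⟨ppos _, (pmono (by linarith)).trans h2⟩ ⟨ppos _, h2⟩ (pmono (by linarith))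
  have hganti : ∀ k : ℤ, k > N → (10:ℝ)^(((k+1:ℤ)):ℝ) * f ((10:ℝ)^(((k+1:ℤ)):ℝ))
      ≤ (10:ℝ)^(k:ℝ) * f ((10:ℝ)^(k:ℝ)) := by
    intro k hk
    have hcast : (((k+1:ℤ)):ℝ) = (k:ℝ)+1 := by push_cast; ring
    rw [hcast]
    have hkα : α ≤ (k:ℝ) := by
      have : (N:ℝ) + 1 ≤ (k:ℝ) := by exact_mod_cast (by omega : N + 1 ≤ k)
      linarith
    have h2 : a ≤ (10:ℝ)^(k:ℝ) := by rw [← pa]; exact pmono hkα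
    exact hanti h2 (h2.trans (pmono (by linarith))) (pmono (by linarith))
  -- assemble
  have key : ∀ F : Finset ℤ,
      |∑ n ∈ F, ((μ (Set.Ico ((10:ℝ)^(n:ℝ)) ((10:ℝ)^((n:ℝ)+z)))).toReal
        - z * (μ (Set.Ico ((10:ℝ)^(n:ℝ)) ((10:ℝ)^((n:ℝ)+1)))).toReal)|
      ≤ z*(1-z)*Real.log 10*m + z*Real.log 10*m + z*(1-z)*Real.log 10*m :=
    finsum_bound z m (Real.log 10) N
      (fun k : ℤ => (10:ℝ)^(k:ℝ) * f ((10:ℝ)^(k:ℝ)))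
      (fun n : ℤ => (μ (Set.Ico ((10:ℝ)^(n:ℝ)) ((10:ℝ)^((n:ℝ)+z)))).toReal
        - z * (μ (Set.Ico ((10:ℝ)^(n:ℝ)) ((10:ℝ)^((n:ℝ)+1)))).toReal)
      hz0 hz1 hL hg0 hgm hgmono hganti hu1 hu2 hu3
  have htend : Filter.Tendsto
      (fun F : Finset ℤ => ∑ n ∈ F, ((μ (Set.Ico ((10:ℝ)^(n:ℝ)) ((10:ℝ)^((n:ℝ)+z)))).toReal
        - z * (μ (Set.Ico ((10:ℝ)^(n:ℝ)) ((10:ℝ)^((n:ℝ)+1)))).toReal))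
      Filter.atTop
      (nhds ((μ {x : ℝ | Int.fract (Real.logb 10 x) < z}).toReal - z)) := hJI
  have hle : |(μ {x : ℝ | Int.fract (Real.logb 10 x) < z}).toReal - z|
      ≤ z*(1-z)*Real.log 10*m + z*Real.log 10*m + z*(1-z)*Real.log 10*m :=
    le_of_tendsto' htend.abs key
  have hlt : z*(1-z)*Real.log 10*m + z*Real.log 10*m + z*(1-z)*Real.log 10*m
      < 2 * Real.log 10 * m := by
    nlinarith [mul_pos hL hm0, sq_nonneg (z - 3/4)]
  linarith
end

section
/- Let (Xₙ) be a sequence of continuous positive random variables with densities fₙ, each satisfying: x ↦ x·fₙ(x) attains its maximum mₙ at some aₙ > 0, is nondecreasing on (0, aₙ] and nonincreasing on [aₙ, ∞). If mₙ → 0 as n → ∞, then {log₁₀ Xₙ} converges in law to the uniform distribution on [0, 1). -/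
open MeasureTheory Set Filter

open MeasureTheory Set Filter Real

noncomputable def bd (k : ℤ) : ℝ := (10:ℝ) ^ (k:ℝ)

lemma bd_pos (k : ℤ) : 0 < bd k := rpow_pos_of_pos (by norm_num) _

lemma bd_mono : StrictMono bd := fun k l h =>
  rpow_lt_rpow_of_exponent_lt (by norm_num) (by exact_mod_cast h)

lemma log_bd (k : ℤ) : Real.log (bd k) = k * Real.log 10 := log_rpow (by norm_num) _

lemma bd_succ (k : ℤ) : bd (k+1) = bd k * 10 := by
  rw [bd, bd, show (((k+1):ℤ):ℝ) = (k:ℝ) + 1 by push_cast; ring,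
    rpow_add (by norm_num), rpow_one]

lemma bd_floor_le {x : ℝ} (hx : 0 < x) : bd ⌊logb 10 x⌋ ≤ x :=
  (le_logb_iff_rpow_le (by norm_num) hx).mp (Int.floor_le _)

lemma lt_bd_floor {x : ℝ} (hx : 0 < x) : x < bd (⌊logb 10 x⌋ + 1) := by
  have h : logb 10 x < ((⌊logb 10 x⌋ + 1 : ℤ) : ℝ) := by
    push_cast; exact Int.lt_floor_add_one _
  exact (logb_lt_iff_lt_rpow (by norm_num) hx).mp h

lemma pair_disj {s : ℤ → Set ℝ} (hs : ∀ k, s k ⊆ Ico (bd k) (bd (k+1))) :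
    Pairwise (Function.onFun Disjoint s) := by
  have key : ∀ k l, k < l → Disjoint (s k) (s l) := by
    intro k l h
    refine Disjoint.mono (hs k) (hs l) ?_
    rw [Set.Ico_disjoint_Ico]
    exact le_trans (min_le_left _ _)
      (le_trans (bd_mono.monotone (by omega : k + 1 ≤ l)) (le_max_right _ _))
  intro k l hkl
  rcases lt_or_gt_of_ne hkl with h | h
  exacts [key k l h, (key l k h).symm]

lemma intinv_Ico {s t : ℝ} (hs : 0 < s) (hst : s ≤ t) :
    ∫ x in Ico s t, x⁻¹ = Real.log t - Real.log s := by
  rw [setIntegral_congr_set Ico_ae_eq_Ioc, ← intervalIntegral.integral_of_le hst,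
    integral_inv (by simp [uIcc_of_le hst]; intro h; linarith),
    Real.log_div (by linarith) (by linarith)]

lemma meas_Ico_le (f : ℝ → ℝ) {s t M : ℝ} (hs : 0 < s) (hst : s ≤ t)
    (hM : 0 ≤ M) (hbd : ∀ x ∈ Icc s t, x * f x ≤ M) :
    volume.withDensity (fun x => ENNReal.ofReal (f x)) (Ico s t)
      ≤ ENNReal.ofReal (M * (Real.log t - Real.log s)) := by
  rw [withDensity_apply _ measurableSet_Ico]
  have hIcont : ContinuousOn (fun x : ℝ => M * x⁻¹) (Icc s t) :=
    continuousOn_const.mul (continuousOn_id.inv₀ (fun x hx => ne_of_gt (lt_of_lt_of_le hs hx.1)))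
  have hInt : IntegrableOn (fun x : ℝ => M * x⁻¹) (Ico s t) :=
    (hIcont.integrableOn_Icc).mono_set Ico_subset_Icc_self
  have h1 : ∫⁻ x in Ico s t, ENNReal.ofReal (f x) ≤ ∫⁻ x in Ico s t, ENNReal.ofReal (M * x⁻¹) := by
    apply setLIntegral_mono (by measurability)
    intro x hx
    apply ENNReal.ofReal_le_ofReal
    have hx0 : 0 < x := lt_of_lt_of_le hs hx.1
    have h2 := hbd x ⟨hx.1, hx.2.le⟩
    rw [← div_eq_mul_inv, le_div_iff₀ hx0]
    linarith
  refine h1.trans (le_of_eq ?_)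
  rw [← ofReal_integral_eq_lintegral_ofReal hInt ?nn]
  case nn =>
    refine (ae_restrict_iff' measurableSet_Ico).mpr (ae_of_all _ (fun x hx => ?_))
    exact mul_nonneg hM (inv_nonneg.mpr (le_of_lt (lt_of_lt_of_le hs hx.1)))
  rw [integral_const_mul, intinv_Ico hs hst]

lemma meas_Ico_ge (f : ℝ → ℝ) {s t c : ℝ} (hs : 0 < s) (hst : s ≤ t)
    (hc : 0 ≤ c) (hbd : ∀ x ∈ Icc s t, c ≤ x * f x) :
    ENNReal.ofReal (c * (Real.log t - Real.log s))
      ≤ volume.withDensity (fun x => ENNReal.ofReal (f x)) (Ico s t) := by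
  rw [withDensity_apply _ measurableSet_Ico]
  have hIcont : ContinuousOn (fun x : ℝ => c * x⁻¹) (Icc s t) :=
    continuousOn_const.mul (continuousOn_id.inv₀ (fun x hx => ne_of_gt (lt_of_lt_of_le hs hx.1)))
  have hInt : IntegrableOn (fun x : ℝ => c * x⁻¹) (Ico s t) :=
    (hIcont.integrableOn_Icc).mono_set Ico_subset_Icc_self
  have h1 : ∫⁻ x in Ico s t, ENNReal.ofReal (c * x⁻¹) ≤ ∫⁻ x in Ico s t, ENNReal.ofReal (f x) := by
    apply lintegral_mono_ae
    refine (ae_restrict_iff' measurableSet_Ico).mpr (ae_of_all _ (fun x hx => ?_))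
    apply ENNReal.ofReal_le_ofReal
    have hx0 : 0 < x := lt_of_lt_of_le hs hx.1
    have h2 := hbd x ⟨hx.1, hx.2.le⟩
    rw [← div_eq_mul_inv, div_le_iff₀ hx0]
    linarith
  refine le_trans (le_of_eq ?_) h1
  rw [← ofReal_integral_eq_lintegral_ofReal hInt ?nn]
  case nn =>
    refine (ae_restrict_iff' measurableSet_Ico).mpr (ae_of_all _ (fun x hx => ?_))
    exact mul_nonneg hc (inv_nonneg.mpr (le_of_lt (lt_of_lt_of_le hs hx.1)))
  rw [integral_const_mul, intinv_Ico hs hst]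

/-- The Benford intervals. -/
noncomputable def Ii (c : ℝ) (k : ℤ) : Set ℝ := Ico (bd k) (bd k * c)
noncomputable def Jj (k : ℤ) : Set ℝ := Ico (bd k) (bd (k+1))
def σσ (k₀ k : ℤ) : ℤ := if k ≤ k₀ - 2 then k + 1 else k - 1
noncomputable def Ee (c : ℝ) (k₀ k : ℤ) : Set ℝ :=
  if k ≤ k₀ - 2 ∨ k₀ + 2 ≤ k then Jj (σσ k₀ k) else ∅
noncomputable def Ee' (c : ℝ) (k₀ k : ℤ) : Set ℝ :=
  if k ≤ k₀ - 2 ∨ k₀ + 2 ≤ k then Ii c (σσ k₀ k) else ∅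

lemma key_bound (μ : Measure ℝ) (hprob : IsProbabilityMeasure μ)
    (f : ℝ → ℝ) (a m : ℝ)
    (hf0 : ∀ x, 0 ≤ f x) (hsupp : ∀ x ≤ 0, f x = 0)
    (hμ : μ = volume.withDensity (fun x => ENNReal.ofReal (f x)))
    (ha : 0 < a)
    (hmax : ∀ x, x * f x ≤ m)
    (hmono : MonotoneOn (fun x => x * f x) (Ioc 0 a))
    (hanti : AntitoneOn (fun x => x * f x) (Ici a))
    {z : ℝ} (hz0 : 0 ≤ z) (hz1 : z < 1) :
    z - 3*(m * Real.log 10) ≤ (μ {x : ℝ | Int.fract (Real.logb 10 x) < z}).toReal ∧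
    (μ {x : ℝ | Int.fract (Real.logb 10 x) < z}).toReal ≤ z + 3*(m * Real.log 10) := by
  subst hμ
  set W := volume.withDensity (fun x => ENNReal.ofReal (f x)) with hW
  set S := {x : ℝ | Int.fract (Real.logb 10 x) < z} with hS
  set g : ℝ → ℝ := fun x => x * f x with hg
  have hm0 : 0 ≤ m := le_trans (mul_nonneg ha.le (hf0 a)) (hmax a)
  have hl10 : 0 ≤ Real.log 10 := Real.log_nonneg (by norm_num)
  have hml : 0 ≤ m * Real.log 10 := mul_nonneg hm0 hl10
  have hg0 : ∀ x, 0 ≤ g x := by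
    intro x
    rcases le_or_gt x 0 with h | h
    · rw [hg]; simp [hsupp x h]
    · exact mul_nonneg h.le (hf0 x)
  set c : ℝ := (10:ℝ) ^ z with hc
  have hcpos : 0 < c := rpow_pos_of_pos (by norm_num) z
  have hc1 : 1 ≤ c := Real.one_le_rpow (by norm_num) hz0
  have hc10 : c ≤ 10 := by
    calc c ≤ (10:ℝ) ^ (1:ℝ) := rpow_le_rpow_of_exponent_le (by norm_num) hz1.le
    _ = 10 := rpow_one _
  set k₀ : ℤ := ⌊logb 10 a⌋ with hk₀
  have hak : bd k₀ ≤ a := bd_floor_le ha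
  have hak' : a < bd (k₀+1) := lt_bd_floor ha
  have hbdc : ∀ k, bd k * c ≤ bd (k+1) := fun k => by
    rw [bd_succ]; exact mul_le_mul_of_nonneg_left hc10 (bd_pos k).le
  have hbk : ∀ k : ℤ, bd k ≤ bd k * c := fun k => le_mul_of_one_le_right (bd_pos k).le hc1
  have hlogI : ∀ k : ℤ, Real.log (bd k * c) - Real.log (bd k) = z * Real.log 10 := fun k => by
    rw [Real.log_mul (bd_pos k).ne' hcpos.ne', hc, log_rpow (by norm_num)]; ring
  have hlogJ : ∀ k : ℤ, Real.log (bd (k+1)) - Real.log (bd k) = Real.log 10 := fun k => by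
    rw [log_bd, log_bd]; push_cast; ring
  -- region inclusions
  have hIioc : ∀ k : ℤ, k + 1 ≤ k₀ → Icc (bd k) (bd k * c) ⊆ Ioc 0 a := by
    intro k hk x hx
    exact ⟨lt_of_lt_of_le (bd_pos k) hx.1,
      le_trans hx.2 (le_trans (hbdc k) (le_trans (bd_mono.monotone hk) hak))⟩
  have hJioc : ∀ k : ℤ, k + 1 ≤ k₀ → Icc (bd k) (bd (k+1)) ⊆ Ioc 0 a := by
    intro k hk x hx
    exact ⟨lt_of_lt_of_le (bd_pos k) hx.1,
      le_trans hx.2 (le_trans (bd_mono.monotone hk) hak)⟩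
  have hIici : ∀ k : ℤ, k₀ + 1 ≤ k → Icc (bd k) (bd k * c) ⊆ Ici a := by
    intro k hk x hx
    exact le_trans (le_trans hak'.le (bd_mono.monotone hk)) hx.1
  have hJici : ∀ k : ℤ, k₀ + 1 ≤ k → Icc (bd k) (bd (k+1)) ⊆ Ici a := by
    intro k hk x hx
    exact le_trans (le_trans hak'.le (bd_mono.monotone hk)) hx.1
  have hbdmem : ∀ k : ℤ, k ≤ k₀ → bd k ∈ Ioc 0 a := fun k hk =>
    ⟨bd_pos k, le_trans (bd_mono.monotone hk) hak⟩
  have hbdmem' : ∀ k : ℤ, k₀ + 1 ≤ k → bd k ∈ Ici a := fun k hk =>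
    le_trans hak'.le (bd_mono.monotone hk)
  -- upper bounds
  have B1 : ∀ k : ℤ, k + 1 ≤ k₀ → W (Ii c k) ≤ ENNReal.ofReal (g (bd (k+1)) * (z * Real.log 10)) := by
    intro k hk
    have h := meas_Ico_le f (bd_pos k) (hbk k) (hg0 _) (fun x hx =>
      hmono (hIioc k hk hx) (hbdmem (k+1) hk) (le_trans hx.2 (hbdc k)))
    rwa [hlogI k] at h
  have B2 : ∀ k : ℤ, k₀ + 1 ≤ k → W (Ii c k) ≤ ENNReal.ofReal (g (bd k) * (z * Real.log 10)) := by
    intro k hk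
    have h := meas_Ico_le f (bd_pos k) (hbk k) (hg0 _) (fun x hx =>
      hanti (hbdmem' k hk) (hIici k hk hx) hx.1)
    rwa [hlogI k] at h
  have B3 : ∀ k : ℤ, W (Ii c k) ≤ ENNReal.ofReal (m * (z * Real.log 10)) := by
    intro k
    have h := meas_Ico_le f (bd_pos k) (hbk k) hm0 (fun x _ => hmax x)
    rwa [hlogI k] at h
  have B4 : ∀ k : ℤ, k + 1 ≤ k₀ → W (Jj k) ≤ ENNReal.ofReal (g (bd (k+1)) * Real.log 10) := by
    intro k hk
    have h := meas_Ico_le f (bd_pos k) (bd_mono (by omega)).le (hg0 _) (fun x hx =>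
      hmono (hJioc k hk hx) (hbdmem (k+1) hk) hx.2)
    rwa [hlogJ k] at h
  have B5 : ∀ k : ℤ, k₀ + 1 ≤ k → W (Jj k) ≤ ENNReal.ofReal (g (bd k) * Real.log 10) := by
    intro k hk
    have h := meas_Ico_le f (bd_pos k) (bd_mono (by omega)).le (hg0 _) (fun x hx =>
      hanti (hbdmem' k hk) (hJici k hk hx) hx.1)
    rwa [hlogJ k] at h
  have B6 : ∀ k : ℤ, W (Jj k) ≤ ENNReal.ofReal (m * Real.log 10) := by
    intro k
    have h := meas_Ico_le f (bd_pos k) (bd_mono (show k < k + 1 by omega)).le hm0 (fun x _ => hmax x)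
    rwa [hlogJ k] at h
  -- lower bounds
  have L1 : ∀ k : ℤ, k + 1 ≤ k₀ → ENNReal.ofReal (g (bd k) * Real.log 10) ≤ W (Jj k) := by
    intro k hk
    have h := meas_Ico_ge f (bd_pos k) (bd_mono (by omega)).le (hg0 _) (fun x hx =>
      hmono (hbdmem k (by omega)) (hJioc k hk hx) hx.1)
    rwa [hlogJ k] at h
  have L2 : ∀ k : ℤ, k₀ + 1 ≤ k → ENNReal.ofReal (g (bd (k+1)) * Real.log 10) ≤ W (Jj k) := by
    intro k hk
    have h := meas_Ico_ge f (bd_pos k) (bd_mono (by omega)).le (hg0 _) (fun x hx =>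
      hanti (hJici k hk hx) (hbdmem' (k+1) (by omega)) hx.2)
    rwa [hlogJ k] at h
  have L3 : ∀ k : ℤ, k + 1 ≤ k₀ → ENNReal.ofReal (g (bd k) * (z * Real.log 10)) ≤ W (Ii c k) := by
    intro k hk
    have h := meas_Ico_ge f (bd_pos k) (hbk k) (hg0 _) (fun x hx =>
      hmono (hbdmem k (by omega)) (hIioc k hk hx) hx.1)
    rwa [hlogI k] at h
  have L4 : ∀ k : ℤ, k₀ + 1 ≤ k → ENNReal.ofReal (g (bd (k+1)) * (z * Real.log 10)) ≤ W (Ii c k) := by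
    intro k hk
    have h := meas_Ico_ge f (bd_pos k) (hbk k) (hg0 _) (fun x hx =>
      hanti (hIici k hk hx) (hbdmem' (k+1) (by omega)) (le_trans hx.2 (hbdc k)))
    rwa [hlogI k] at h
  -- set facts
  have hJuniv : (⋃ k, Jj k) = Ioi 0 := by
    ext x
    simp only [mem_iUnion, mem_Ioi, Jj, mem_Ico]
    constructor
    · rintro ⟨k, h1, -⟩; exact lt_of_lt_of_le (bd_pos k) h1
    · intro hx; exact ⟨⌊logb 10 x⌋, bd_floor_le hx, lt_bd_floor hx⟩
  have hS1 : S ⊆ (⋃ k, Ii c k) ∪ Iic 0 := by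
    intro x hx
    rcases le_or_gt x 0 with h | h
    · exact Or.inr h
    · left
      refine mem_iUnion.mpr ⟨⌊logb 10 x⌋, bd_floor_le h, ?_⟩
      have hfr : Int.fract (logb 10 x) = logb 10 x - ⌊logb 10 x⌋ := (Int.self_sub_floor _).symm
      have h2 : logb 10 x < ⌊logb 10 x⌋ + z := by
        have h3 := hx; rw [hS, mem_setOf_eq, hfr] at h3; linarith
      have h4 := (logb_lt_iff_lt_rpow (by norm_num) h).mp h2
      rwa [rpow_add (by norm_num)] at h4
  have hS2 : (⋃ k, Ii c k) ⊆ S := by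
    intro x hx
    obtain ⟨k, hk⟩ := mem_iUnion.mp hx
    obtain ⟨hk1, hk2⟩ := hk
    have hx0 : 0 < x := lt_of_lt_of_le (bd_pos k) hk1
    have h1 : (k:ℝ) ≤ logb 10 x := (le_logb_iff_rpow_le (by norm_num) hx0).mpr hk1
    have h2 : logb 10 x < k + z := by
      refine (logb_lt_iff_lt_rpow (by norm_num) hx0).mpr ?_
      rw [rpow_add (by norm_num)]; exact hk2
    have hfl : ⌊logb 10 x⌋ = k := Int.floor_eq_iff.mpr ⟨h1, by linarith⟩
    rw [hS, mem_setOf_eq, ← Int.self_sub_floor, hfl]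
    linarith
  -- measurability and disjointness
  have hImeas : ∀ k, MeasurableSet (Ii c k) := fun k => measurableSet_Ico
  have hJmeas : ∀ k, MeasurableSet (Jj k) := fun k => measurableSet_Ico
  have hId : Pairwise (Function.onFun Disjoint (Ii c)) :=
    pair_disj (fun k => Ico_subset_Ico_right (hbdc k))
  have hJd : Pairwise (Function.onFun Disjoint Jj) := pair_disj (fun k => subset_rfl)
  have hσ : ∀ k l : ℤ, (k ≤ k₀ - 2 ∨ k₀ + 2 ≤ k) → (l ≤ k₀ - 2 ∨ k₀ + 2 ≤ l) → k ≠ l →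
      σσ k₀ k ≠ σσ k₀ l := by
    intro k l hk hl hkl
    unfold σσ
    split_ifs <;> omega
  have hEd : Pairwise (Function.onFun Disjoint (Ee c k₀)) := by
    intro k l hkl
    simp only [Function.onFun, Ee]
    split_ifs with hh1 hh2
    · exact hJd (hσ k l hh1 hh2 hkl)
    · exact disjoint_empty _
    · exact empty_disjoint _
    · exact empty_disjoint _
  have hE'd : Pairwise (Function.onFun Disjoint (Ee' c k₀)) := by
    intro k l hkl
    simp only [Function.onFun, Ee']
    split_ifs with hh1 hh2
    · exact hId (hσ k l hh1 hh2 hkl)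
    · exact disjoint_empty _
    · exact empty_disjoint _
    · exact empty_disjoint _
  have hEmeas : ∀ k, MeasurableSet (Ee c k₀ k) := by
    intro k; unfold Ee; split_ifs; exacts [measurableSet_Ico, MeasurableSet.empty]
  have hE'meas : ∀ k, MeasurableSet (Ee' c k₀ k) := by
    intro k; unfold Ee'; split_ifs; exacts [measurableSet_Ico, MeasurableSet.empty]
  -- basic measure facts
  have hIic : W (Iic 0) = 0 := by
    rw [hW, withDensity_apply _ measurableSet_Iic,
      setLIntegral_congr_fun measurableSet_Iic ((fun x hx => by
        rw [hsupp x hx, ENNReal.ofReal_zero]))]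
    exact lintegral_zero
  have huniv : W univ = 1 := measure_univ
  have hWS : W S ≠ ⊤ := measure_ne_top W S
  set R : ENNReal := ENNReal.ofReal (m * Real.log 10) with hR
  set r : ℤ → ENNReal := fun k =>
    (if k = k₀ - 1 then R else 0) + (if k = k₀ then R else 0) + (if k = k₀ + 1 then R else 0)
    with hr
  have htsumr : ∑' k : ℤ, r k = R + R + R := by
    simp only [hr]
    rw [ENNReal.tsum_add, ENNReal.tsum_add, tsum_ite_eq, tsum_ite_eq, tsum_ite_eq]
  have hrmid : ∀ k : ℤ, ¬(k ≤ k₀ - 2) → ¬(k₀ + 2 ≤ k) → R ≤ r k := by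
    intro k h1 h2
    simp only [hr]
    split_ifs <;> first | omega | simp
  -- pointwise upper estimate
  have ptU : ∀ k : ℤ, W (Ii c k) ≤ ENNReal.ofReal z * W (Ee c k₀ k) + r k := by
    intro k
    by_cases h1 : k ≤ k₀ - 2
    · have e1 : Ee c k₀ k = Jj (k+1) := by
        unfold Ee σσ; rw [if_pos (Or.inl h1), if_pos h1]
      rw [e1]
      refine le_trans (le_trans (B1 k (by omega)) ?_) le_self_add
      rw [show g (bd (k+1)) * (z * Real.log 10) = z * (g (bd (k+1)) * Real.log 10) from by ring,
        ENNReal.ofReal_mul hz0]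
      exact mul_le_mul_right (L1 (k+1) (by omega)) _
    · by_cases h2 : k₀ + 2 ≤ k
      · have e1 : Ee c k₀ k = Jj (k-1) := by
          unfold Ee σσ; rw [if_pos (Or.inr h2), if_neg h1]
        rw [e1]
        refine le_trans (le_trans (B2 k (by omega)) ?_) le_self_add
        rw [show g (bd k) * (z * Real.log 10) = z * (g (bd k) * Real.log 10) from by ring,
          ENNReal.ofReal_mul hz0]
        have h3 := L2 (k-1) (by omega)
        rw [show k - 1 + 1 = k from by ring] at h3
        exact mul_le_mul_right h3 _
      · refine le_trans (le_trans (B3 k) ?_) (le_trans (hrmid k h1 h2) le_add_self)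
        refine ENNReal.ofReal_le_ofReal ?_
        have h4 : z * Real.log 10 ≤ Real.log 10 := by nlinarith
        exact mul_le_mul_of_nonneg_left h4 hm0
  have hub : W S ≤ ENNReal.ofReal z + (R + R + R) := by
    calc W S ≤ W ((⋃ k, Ii c k) ∪ Iic 0) := measure_mono hS1
    _ ≤ W (⋃ k, Ii c k) + W (Iic 0) := measure_union_le _ _
    _ = ∑' k : ℤ, W (Ii c k) := by rw [hIic, add_zero, measure_iUnion hId hImeas]
    _ ≤ ∑' k : ℤ, (ENNReal.ofReal z * W (Ee c k₀ k) + r k) := ENNReal.tsum_le_tsum ptU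
    _ = ENNReal.ofReal z * ∑' k : ℤ, W (Ee c k₀ k) + ∑' k : ℤ, r k := by
        rw [ENNReal.tsum_add, ENNReal.tsum_mul_left]
    _ = ENNReal.ofReal z * W (⋃ k, Ee c k₀ k) + (R + R + R) := by
        rw [measure_iUnion hEd hEmeas, htsumr]
    _ ≤ ENNReal.ofReal z * 1 + (R + R + R) := by
        gcongr
        exact prob_le_one
    _ = ENNReal.ofReal z + (R + R + R) := by rw [mul_one]
  -- pointwise lower estimate
  have ptL : ∀ k : ℤ, ENNReal.ofReal z * W (Jj k) ≤ W (Ee' c k₀ k) + r k := by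
    intro k
    by_cases h1 : k ≤ k₀ - 2
    · have e1 : Ee' c k₀ k = Ii c (k+1) := by
        unfold Ee' σσ; rw [if_pos (Or.inl h1), if_pos h1]
      rw [e1]
      refine le_trans ?_ le_self_add
      refine le_trans (mul_le_mul_right (B4 k (by omega)) _) ?_
      rw [← ENNReal.ofReal_mul hz0,
        show z * (g (bd (k+1)) * Real.log 10) = g (bd (k+1)) * (z * Real.log 10) from by ring]
      exact L3 (k+1) (by omega)
    · by_cases h2 : k₀ + 2 ≤ k
      · have e1 : Ee' c k₀ k = Ii c (k-1) := by
          unfold Ee' σσ; rw [if_pos (Or.inr h2), if_neg h1]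
        rw [e1]
        refine le_trans ?_ le_self_add
        refine le_trans (mul_le_mul_right (B5 k (by omega)) _) ?_
        rw [← ENNReal.ofReal_mul hz0,
          show z * (g (bd k) * Real.log 10) = g (bd k) * (z * Real.log 10) from by ring]
        have h3 := L4 (k-1) (by omega)
        rw [show k - 1 + 1 = k from by ring] at h3
        exact h3
      · refine le_trans ?_ (le_trans (hrmid k h1 h2) le_add_self)
        calc ENNReal.ofReal z * W (Jj k) ≤ 1 * W (Jj k) :=
              mul_le_mul_left (ENNReal.ofReal_le_one.mpr hz1.le) _
        _ = W (Jj k) := one_mul _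
        _ ≤ R := B6 k
  have hE'sub : (⋃ k, Ee' c k₀ k) ⊆ S := by
    refine iUnion_subset fun k => ?_
    unfold Ee'
    split_ifs
    · exact (subset_iUnion (fun j => Ii c j) (σσ k₀ k)).trans hS2
    · exact empty_subset _
  have hIoi1 : (1:ENNReal) ≤ W (Ioi 0) := by
    calc (1:ENNReal) = W univ := huniv.symm
    _ = W (Iic 0 ∪ Ioi 0) := by rw [Iic_union_Ioi]
    _ ≤ W (Iic 0) + W (Ioi 0) := measure_union_le _ _
    _ = W (Ioi 0) := by rw [hIic, zero_add]
  have hlb : ENNReal.ofReal z ≤ W S + (R + R + R) := by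
    calc ENNReal.ofReal z = ENNReal.ofReal z * 1 := (mul_one _).symm
    _ ≤ ENNReal.ofReal z * W (Ioi 0) := mul_le_mul_right hIoi1 _
    _ = ENNReal.ofReal z * ∑' k : ℤ, W (Jj k) := by rw [← hJuniv, measure_iUnion hJd hJmeas]
    _ = ∑' k : ℤ, ENNReal.ofReal z * W (Jj k) := ENNReal.tsum_mul_left.symm
    _ ≤ ∑' k : ℤ, (W (Ee' c k₀ k) + r k) := ENNReal.tsum_le_tsum ptL
    _ = W (⋃ k, Ee' c k₀ k) + (R + R + R) := by
        rw [ENNReal.tsum_add, measure_iUnion hE'd hE'meas, htsumr]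
    _ ≤ W S + (R + R + R) := add_le_add_left (measure_mono hE'sub) _
  -- wrap up
  have hRRR : R + R + R = ENNReal.ofReal (3 * (m * Real.log 10)) := by
    rw [hR, ← ENNReal.ofReal_add hml hml, ← ENNReal.ofReal_add (add_nonneg hml hml) hml]
    congr 1; ring
  rw [hRRR] at hub hlb
  have h3 : 0 ≤ 3 * (m * Real.log 10) := mul_nonneg (by norm_num) hml
  constructor
  · have h4 : ENNReal.ofReal z ≤ ENNReal.ofReal ((W S).toReal + 3 * (m * Real.log 10)) := by
      rw [ENNReal.ofReal_add ENNReal.toReal_nonneg h3, ENNReal.ofReal_toReal hWS]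
      exact hlb
    have h5 := (ENNReal.ofReal_le_ofReal_iff (add_nonneg ENNReal.toReal_nonneg h3)).mp h4
    linarith
  · have h4 : W S ≤ ENNReal.ofReal (z + 3 * (m * Real.log 10)) := by
      rw [ENNReal.ofReal_add hz0 h3]; exact hub
    exact ENNReal.toReal_le_of_le_ofReal (add_nonneg hz0 h3) h4

/-- Convergence part of Theorem 1: if each `Xₙ` has density `fₙ` with
`x ↦ x·fₙ(x)` unimodal with maximum `mₙ` attained at `aₙ > 0`, and `mₙ → 0`,
then `{log₁₀ Xₙ}` converges in law to the uniform distribution on `[0,1)`. -/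
theorem benford_limit_of_scatter_regularity
    (μ : ℕ → Measure ℝ) (hprob : ∀ n, IsProbabilityMeasure (μ n))
    (f : ℕ → ℝ → ℝ) (a m : ℕ → ℝ)
    (hf0 : ∀ n x, 0 ≤ f n x) (hsupp : ∀ n, ∀ x ≤ 0, f n x = 0)
    (hμ : ∀ n, μ n = volume.withDensity (fun x => ENNReal.ofReal (f n x)))
    (ha : ∀ n, 0 < a n) (hm : ∀ n, m n = a n * f n (a n))
    (hmax : ∀ n x, x * f n x ≤ m n)
    (hmono : ∀ n, MonotoneOn (fun x => x * f n x) (Ioc 0 (a n)))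
    (hanti : ∀ n, AntitoneOn (fun x => x * f n x) (Ici (a n)))
    (hm0 : Tendsto m atTop (nhds 0)) :
    ∀ z ∈ Ico (0 : ℝ) 1,
      Tendsto (fun n => ((μ n) {x : ℝ | Int.fract (Real.logb 10 x) < z}).toReal)
        atTop (nhds z) := by
  intro z hz
  have key := fun n => key_bound (μ n) (hprob n) (f n) (a n) (m n) (hf0 n) (hsupp n) (hμ n)
    (ha n) (hmax n) (hmono n) (hanti n) hz.1 hz.2
  have hlim : Tendsto (fun n => 3 * (m n * Real.log 10)) atTop (nhds 0) := by
    have h := (hm0.mul_const (Real.log 10)).const_mul 3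
    simpa using h
  refine tendsto_of_tendsto_of_tendsto_of_le_of_le ?_ ?_ (fun n => (key n).1) (fun n => (key n).2)
  · simpa using tendsto_const_nhds.sub hlim
  · simpa using tendsto_const_nhds.add hlim
end

section
/- Let X be a random variable taking values in a real interval I with density f, and let u : I → ℝ be a C¹ increasing function such that f/u′ attains its maximum m at some point a, is nondecreasing before a and nonincreasing after a (on I). Then for all z ∈ [0, 1), |P({u(X)} < z) − z| ≤ 2m. -/
open MeasureTheory Set
open scoped ENNReal

namespace UBenford

lemma telescope_Icc (g : ℤ → ℝ) (a : ℤ) : ∀ b, a ≤ b →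
    ∑ k ∈ Finset.Icc a b, (g k - g (k+1)) = g a - g (b+1) := by
  refine Int.le_induction ?_ ?_
  · simp
  · intro b hb ih
    have he : Finset.Icc a (b+1) = insert (b+1) (Finset.Icc a b) := by
      ext k; simp; omega
    rw [he, Finset.sum_insert (by simp), ih]; ring

variable {g : ℝ → ℝ}

lemma integrableOn_Ico (hgmeas : Measurable g) {m : ℝ} (hg0 : ∀ t, 0 ≤ g t) (hgm : ∀ t, g t ≤ m)
    (p q : ℝ) : IntegrableOn g (Ico p q) := by
  apply Measure.integrableOn_of_bounded (M := m) measure_Ico_lt_top.ne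
    hgmeas.aestronglyMeasurable
  filter_upwards with x
  rw [Real.norm_eq_abs, abs_of_nonneg (hg0 x)]; exact hgm x

lemma setInt_le (hgmeas : Measurable g) {m : ℝ} (hg0 : ∀ t, 0 ≤ g t) (hgm : ∀ t, g t ≤ m)
    {p q : ℝ} (hpq : p ≤ q) {C : ℝ} (hC : ∀ t ∈ Ico p q, g t ≤ C) :
    ∫ t in Ico p q, g t ≤ (q - p) * C := by
  have h := setIntegral_mono_on (μ := volume) (f := g) (g := fun _ => C)
    (integrableOn_Ico hgmeas hg0 hgm p q)
    (integrableOn_const measure_Ico_lt_top.ne) measurableSet_Ico hC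
  rwa [setIntegral_const, Measure.real, Real.volume_Ico, ENNReal.toReal_ofReal (by linarith), smul_eq_mul] at h

lemma setInt_ge (hgmeas : Measurable g) {m : ℝ} (hg0 : ∀ t, 0 ≤ g t) (hgm : ∀ t, g t ≤ m)
    {p q : ℝ} (hpq : p ≤ q) {C : ℝ} (hC : ∀ t ∈ Ico p q, C ≤ g t) :
    (q - p) * C ≤ ∫ t in Ico p q, g t := by
  have h := setIntegral_mono_on (μ := volume) (f := fun _ => C) (g := g)
    (integrableOn_const measure_Ico_lt_top.ne)
    (integrableOn_Ico hgmeas hg0 hgm p q) measurableSet_Ico hC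
  rwa [setIntegral_const, Measure.real, Real.volume_Ico, ENNReal.toReal_ofReal (by linarith), smul_eq_mul] at h

lemma setInt_split (hgmeas : Measurable g) {m : ℝ} (hg0 : ∀ t, 0 ≤ g t) (hgm : ∀ t, g t ≤ m)
    {p q r : ℝ} (hpq : p ≤ q) (hqr : q ≤ r) :
    ∫ t in Ico p r, g t = (∫ t in Ico p q, g t) + ∫ t in Ico q r, g t := by
  rw [← Ico_union_Ico_eq_Ico hpq hqr,
    setIntegral_union Ico_disjoint_Ico_same measurableSet_Ico
      (integrableOn_Ico hgmeas hg0 hgm p q) (integrableOn_Ico hgmeas hg0 hgm q r)]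


variable {g : ℝ → ℝ}

lemma d_bounds_mono (hgmeas : Measurable g) {m : ℝ} (hg0 : ∀ t, 0 ≤ g t) (hgm : ∀ t, g t ≤ m)
    {β z : ℝ} (hmono : MonotoneOn g (Iic β)) (hz0 : 0 ≤ z) (hz1 : z ≤ 1) {p : ℝ}
    (hp : p + 1 ≤ β) :
    z * (1-z) * (g p - g (p+1)) ≤ (∫ t in Ico p (p+z), g t) - z * (∫ t in Ico p (p+1), g t)
    ∧ (∫ t in Ico p (p+z), g t) - z * (∫ t in Ico p (p+1), g t) ≤ 0 := by
  have hsplit := setInt_split hgmeas hg0 hgm (by linarith : p ≤ p + z) (by linarith : p + z ≤ p + 1)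
  set b := ∫ t in Ico p (p+z), g t with hbdef
  set e := ∫ t in Ico (p+z) (p+1), g t with hedef
  have hble : b ≤ z * g (p+z) := by
    have h := setInt_le hgmeas hg0 hgm (by linarith : p ≤ p + z)
      (fun t ht => hmono (by rcases ht with ⟨h1,h2⟩; simp only [mem_Iic]; linarith)
        (by simp only [mem_Iic]; linarith) (le_of_lt ht.2))
    rwa [show p + z - p = z from by ring] at h
  have hbge : z * g p ≤ b := by
    have h := setInt_ge hgmeas hg0 hgm (by linarith : p ≤ p + z)
      (fun t ht => hmono (by simp only [mem_Iic]; linarith)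
        (by rcases ht with ⟨h1,h2⟩; simp only [mem_Iic]; linarith) ht.1)
    rwa [show p + z - p = z from by ring] at h
  have hele : e ≤ (1-z) * g (p+1) := by
    have h := setInt_le hgmeas hg0 hgm (by linarith : p + z ≤ p + 1)
      (fun t ht => hmono (by rcases ht with ⟨h1,h2⟩; simp only [mem_Iic]; linarith)
        (by simp only [mem_Iic]; linarith) (le_of_lt ht.2))
    rwa [show p + 1 - (p + z) = 1 - z from by ring] at h
  have hege : (1-z) * g (p+z) ≤ e := by
    have h := setInt_ge hgmeas hg0 hgm (by linarith : p + z ≤ p + 1)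
      (fun t ht => hmono (by simp only [mem_Iic]; linarith)
        (by rcases ht with ⟨h1,h2⟩; simp only [mem_Iic]; linarith) ht.1)
    rwa [show p + 1 - (p + z) = 1 - z from by ring] at h
  constructor
  · have h1 : z * ((1-z) * g (p+1)) ≥ z * e := mul_le_mul_of_nonneg_left hele hz0
    have h2 : (1-z) * (z * g p) ≤ (1-z) * b := mul_le_mul_of_nonneg_left hbge (by linarith)
    rw [hsplit]
    nlinarith [h1, h2]
  · have h1 : (1-z) * b ≤ (1-z) * (z * g (p+z)) := mul_le_mul_of_nonneg_left hble (by linarith)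
    have h2 : z * ((1-z) * g (p+z)) ≤ z * e := mul_le_mul_of_nonneg_left hege hz0
    rw [hsplit]
    nlinarith [h1, h2]

lemma d_bounds_anti (hgmeas : Measurable g) {m : ℝ} (hg0 : ∀ t, 0 ≤ g t) (hgm : ∀ t, g t ≤ m)
    {β z : ℝ} (hanti : AntitoneOn g (Ici β)) (hz0 : 0 ≤ z) (hz1 : z ≤ 1) {p : ℝ}
    (hp : β ≤ p) :
    0 ≤ (∫ t in Ico p (p+z), g t) - z * (∫ t in Ico p (p+1), g t)
    ∧ (∫ t in Ico p (p+z), g t) - z * (∫ t in Ico p (p+1), g t)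
        ≤ z * (1-z) * (g p - g (p+1)) := by
  have hsplit := setInt_split hgmeas hg0 hgm (by linarith : p ≤ p + z) (by linarith : p + z ≤ p + 1)
  set b := ∫ t in Ico p (p+z), g t with hbdef
  set e := ∫ t in Ico (p+z) (p+1), g t with hedef
  have hble : b ≤ z * g p := by
    have h := setInt_le hgmeas hg0 hgm (by linarith : p ≤ p + z)
      (fun t ht => hanti (by simp only [mem_Ici]; linarith)
        (by rcases ht with ⟨h1,h2⟩; simp only [mem_Ici]; linarith) ht.1)
    rwa [show p + z - p = z from by ring] at h
  have hbge : z * g (p+z) ≤ b := by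
    have h := setInt_ge hgmeas hg0 hgm (by linarith : p ≤ p + z)
      (fun t ht => hanti (by rcases ht with ⟨h1,h2⟩; simp only [mem_Ici]; linarith)
        (by simp only [mem_Ici]; linarith) (le_of_lt ht.2))
    rwa [show p + z - p = z from by ring] at h
  have hele : e ≤ (1-z) * g (p+z) := by
    have h := setInt_le hgmeas hg0 hgm (by linarith : p + z ≤ p + 1)
      (fun t ht => hanti (by simp only [mem_Ici]; linarith)
        (by rcases ht with ⟨h1,h2⟩; simp only [mem_Ici]; linarith) ht.1)
    rwa [show p + 1 - (p + z) = 1 - z from by ring] at h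
  have hege : (1-z) * g (p+1) ≤ e := by
    have h := setInt_ge hgmeas hg0 hgm (by linarith : p + z ≤ p + 1)
      (fun t ht => hanti (by rcases ht with ⟨h1,h2⟩; simp only [mem_Ici]; linarith)
        (by simp only [mem_Ici]; linarith) (le_of_lt ht.2))
    rwa [show p + 1 - (p + z) = 1 - z from by ring] at h
  constructor
  · have h1 : (1-z) * (z * g (p+z)) ≤ (1-z) * b := mul_le_mul_of_nonneg_left hbge (by linarith)
    have h2 : z * e ≤ z * ((1-z) * g (p+z)) := mul_le_mul_of_nonneg_left hele hz0
    rw [hsplit]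
    nlinarith [h1, h2]
  · have h1 : (1-z) * b ≤ (1-z) * (z * g p) := mul_le_mul_of_nonneg_left hble (by linarith)
    have h2 : z * ((1-z) * g (p+1)) ≤ z * e := mul_le_mul_of_nonneg_left hege hz0
    rw [hsplit]
    nlinarith [h1, h2]



lemma core {g : ℝ → ℝ} (hgmeas : Measurable g) {m β z : ℝ}
    (hg0 : ∀ t, 0 ≤ g t) (hgm : ∀ t, g t ≤ m)
    (hmono : MonotoneOn g (Iic β)) (hanti : AntitoneOn g (Ici β))
    (hz0 : 0 ≤ z) (hz1 : z < 1)
    (htot : ∑' k : ℤ, ∫ t in Ico (k:ℝ) ((k:ℝ)+1), g t = 1) :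
    |(∑' k : ℤ, ∫ t in Ico (k:ℝ) ((k:ℝ)+z), g t) - z| ≤ 2*m := by
  classical
  have hm0 : 0 ≤ m := le_trans (hg0 0) (hgm 0)
  set b : ℤ → ℝ := fun k => ∫ t in Ico (k:ℝ) ((k:ℝ)+z), g t with hbdef
  set c : ℤ → ℝ := fun k => ∫ t in Ico (k:ℝ) ((k:ℝ)+1), g t with hcdef
  have hb0 : ∀ k, 0 ≤ b k := fun k =>
    setIntegral_nonneg measurableSet_Ico (fun t _ => hg0 t)
  have hc0 : ∀ k, 0 ≤ c k := fun k =>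
    setIntegral_nonneg measurableSet_Ico (fun t _ => hg0 t)
  have hbc : ∀ k, b k ≤ c k := by
    intro k
    have h := setInt_split hgmeas hg0 hgm (by linarith : (k:ℝ) ≤ (k:ℝ) + z)
      (by linarith : (k:ℝ) + z ≤ (k:ℝ) + 1)
    have h2 : 0 ≤ ∫ t in Ico ((k:ℝ)+z) ((k:ℝ)+1), g t :=
      setIntegral_nonneg measurableSet_Ico (fun t _ => hg0 t)
    simp only [hbdef, hcdef]; linarith [h, h2]
  have hcsum : Summable c := by
    by_contra h
    rw [tsum_eq_zero_of_not_summable h] at htot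
    norm_num at htot
  have hbsum : Summable b := Summable.of_nonneg_of_le hb0 hbc hcsum
  have hble : ∀ k : ℤ, b k ≤ z * m := by
    intro k
    have h := setInt_le hgmeas hg0 hgm (by linarith : (k:ℝ) ≤ (k:ℝ) + z)
      (fun t _ => hgm t)
    rwa [show (k:ℝ) + z - k = z from by ring] at h
  have hcle : ∀ k : ℤ, c k ≤ m := by
    intro k
    have h := setInt_le hgmeas hg0 hgm (by linarith : (k:ℝ) ≤ (k:ℝ) + 1)
      (fun t _ => hgm t)
    rwa [show (k:ℝ) + 1 - k = 1 from by ring, one_mul] at h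
  set d : ℤ → ℝ := fun k => b k - z * c k with hddef
  have hdsum : Summable d := hbsum.sub (hcsum.mul_left z)
  set k0 : ℤ := ⌊β⌋ with hk0def
  have hdneg : ∀ k : ℤ, k < k0 →
      z * (1-z) * (g k - g ((k:ℝ)+1)) ≤ d k ∧ d k ≤ 0 := by
    intro k hk
    have hp : (k:ℝ) + 1 ≤ β := by
      have h1 : (k:ℝ) + 1 ≤ (k0:ℝ) := by exact_mod_cast (by omega : k + 1 ≤ k0)
      have := Int.floor_le β
      linarith
    exact d_bounds_mono hgmeas hg0 hgm hmono hz0 (le_of_lt hz1) hp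
  have hdpos : ∀ k : ℤ, k0 < k →
      0 ≤ d k ∧ d k ≤ z * (1-z) * (g k - g ((k:ℝ)+1)) := by
    intro k hk
    have hp : β ≤ (k:ℝ) := by
      have h1 : (k0:ℝ) + 1 ≤ (k:ℝ) := by exact_mod_cast (by omega : k0 + 1 ≤ k)
      have := Int.lt_floor_add_one β
      linarith
    exact d_bounds_anti hgmeas hg0 hgm hanti hz0 (le_of_lt hz1) hp
  have hdk0_abs : |d k0| ≤ z * m := by
    have h1 : b k0 ≤ z * m := hble k0
    have h2 : z * c k0 ≤ z * m := mul_le_mul_of_nonneg_left (hcle k0) hz0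
    have h3 : 0 ≤ z * c k0 := mul_nonneg hz0 (hc0 k0)
    rw [abs_le]; constructor <;> simp only [hddef] <;> linarith [hb0 k0]
  have hzz : 0 ≤ z * (1-z) := mul_nonneg hz0 (by linarith)
  -- upper bound on finite sums of d
  have hFin : ∀ F : Finset ℤ, ∑ k ∈ F, d k ≤ z * m + z * (1-z) * m := by
    intro F
    have hstep1 : ∑ k ∈ F, d k ≤ ∑ k ∈ F.filter (fun k => k0 ≤ k), d k := by
      rw [← Finset.sum_filter_add_sum_filter_not F (fun k => k0 ≤ k)]
      have h2 : ∑ k ∈ F.filter (fun k => ¬ k0 ≤ k), d k ≤ 0 :=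
        Finset.sum_nonpos fun k hk => by
          have hk' := (Finset.mem_filter.1 hk).2
          exact (hdneg k (by omega)).2
      linarith
    set F1 := F.filter (fun k => k0 ≤ k) with hF1
    have hstep2 : ∑ k ∈ F1, d k ≤ z * m + ∑ k ∈ F1.erase k0, d k := by
      by_cases hk0 : k0 ∈ F1
      · rw [← Finset.add_sum_erase _ _ hk0]
        have := (abs_le.1 hdk0_abs).2
        linarith
      · rw [Finset.erase_eq_of_notMem hk0]
        have : 0 ≤ z * m := mul_nonneg hz0 hm0
        linarith
    set F2 := F1.erase k0 with hF2
    have hF2mem : ∀ k ∈ F2, k0 + 1 ≤ k := by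
      intro k hk
      have h1 := Finset.ne_of_mem_erase hk
      have h2 := (Finset.mem_filter.1 (Finset.mem_of_mem_erase hk)).2
      omega
    have hstep3 : ∑ k ∈ F2, d k ≤ z * (1-z) * m := by
      rcases F2.eq_empty_or_nonempty with h|h
      · rw [h, Finset.sum_empty]
        exact mul_nonneg hzz hm0
      · set K := F2.max' h with hK
        have hKmem : k0 + 1 ≤ K := hF2mem _ (F2.max'_mem h)
        have hsub : F2 ⊆ Finset.Icc (k0+1) K := fun k hk =>
          Finset.mem_Icc.2 ⟨hF2mem k hk, F2.le_max' k hk⟩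
        have h1 : ∑ k ∈ F2, d k ≤ ∑ k ∈ Finset.Icc (k0+1) K, d k :=
          Finset.sum_le_sum_of_subset_of_nonneg hsub
            (fun k hk _ => (hdpos k (by have := (Finset.mem_Icc.1 hk).1; omega)).1)
        have h2 : ∑ k ∈ Finset.Icc (k0+1) K, d k
            ≤ ∑ k ∈ Finset.Icc (k0+1) K, z * (1-z) * (g k - g ((k:ℝ)+1)) :=
          Finset.sum_le_sum (fun k hk =>
            (hdpos k (by have := (Finset.mem_Icc.1 hk).1; omega)).2)
        have h3 : ∑ k ∈ Finset.Icc (k0+1) K, z * (1-z) * (g k - g ((k:ℝ)+1))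
            = z * (1-z) * ((fun j : ℤ => g (j:ℝ)) (k0+1) - (fun j : ℤ => g (j:ℝ)) (K+1)) := by
          rw [← telescope_Icc (fun j : ℤ => g (j:ℝ)) (k0+1) K hKmem, Finset.mul_sum]
          refine Finset.sum_congr rfl (fun k _ => ?_)
          push_cast
          ring
        have h4 : (fun j : ℤ => g (j:ℝ)) (k0+1) - (fun j : ℤ => g (j:ℝ)) (K+1) ≤ m := by
          simp only
          linarith [hgm ((((k0+1):ℤ)):ℝ), hg0 ((((K+1):ℤ)):ℝ)]
        calc ∑ k ∈ F2, d k ≤ z * (1-z) * ((fun j : ℤ => g (j:ℝ)) (k0+1) - (fun j : ℤ => g (j:ℝ)) (K+1)) := by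
              rw [← h3]; linarith
          _ ≤ z * (1-z) * m := mul_le_mul_of_nonneg_left h4 hzz
    linarith
  -- lower bound on finite sums of d
  have hFin' : ∀ F : Finset ℤ, ∑ k ∈ F, (- d k) ≤ z * m + z * (1-z) * m := by
    intro F
    have hstep1 : ∑ k ∈ F, (-d k) ≤ ∑ k ∈ F.filter (fun k => k ≤ k0), (-d k) := by
      rw [← Finset.sum_filter_add_sum_filter_not F (fun k => k ≤ k0)]
      have h2 : ∑ k ∈ F.filter (fun k => ¬ k ≤ k0), (-d k) ≤ 0 :=
        Finset.sum_nonpos fun k hk => by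
          have hk' := (Finset.mem_filter.1 hk).2
          have := (hdpos k (by omega)).1
          linarith
      linarith
    set F1 := F.filter (fun k => k ≤ k0) with hF1
    have hstep2 : ∑ k ∈ F1, (-d k) ≤ z * m + ∑ k ∈ F1.erase k0, (-d k) := by
      by_cases hk0 : k0 ∈ F1
      · rw [← Finset.add_sum_erase _ _ hk0]
        have := (abs_le.1 hdk0_abs).1
        linarith
      · rw [Finset.erase_eq_of_notMem hk0]
        have : 0 ≤ z * m := mul_nonneg hz0 hm0
        linarith
    set F2 := F1.erase k0 with hF2
    have hF2mem : ∀ k ∈ F2, k ≤ k0 - 1 := by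
      intro k hk
      have h1 := Finset.ne_of_mem_erase hk
      have h2 := (Finset.mem_filter.1 (Finset.mem_of_mem_erase hk)).2
      omega
    have hstep3 : ∑ k ∈ F2, (-d k) ≤ z * (1-z) * m := by
      rcases F2.eq_empty_or_nonempty with h|h
      · rw [h, Finset.sum_empty]
        exact mul_nonneg hzz hm0
      · set K := F2.min' h with hK
        have hKmem : K ≤ k0 - 1 := hF2mem _ (F2.min'_mem h)
        have hsub : F2 ⊆ Finset.Icc K (k0-1) := fun k hk =>
          Finset.mem_Icc.2 ⟨F2.min'_le k hk, hF2mem k hk⟩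
        have h1 : ∑ k ∈ F2, (-d k) ≤ ∑ k ∈ Finset.Icc K (k0-1), (-d k) :=
          Finset.sum_le_sum_of_subset_of_nonneg hsub
            (fun k hk _ => by
              have := (hdneg k (by have := (Finset.mem_Icc.1 hk).2; omega)).2
              linarith)
        have h2 : ∑ k ∈ Finset.Icc K (k0-1), (-d k)
            ≤ ∑ k ∈ Finset.Icc K (k0-1), z * (1-z) * (g ((k:ℝ)+1) - g k) :=
          Finset.sum_le_sum (fun k hk => by
            have := (hdneg k (by have := (Finset.mem_Icc.1 hk).2; omega)).1
            linarith)
        have h3 : ∑ k ∈ Finset.Icc K (k0-1), z * (1-z) * (g ((k:ℝ)+1) - g k)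
            = z * (1-z) * ((fun j : ℤ => -(g (j:ℝ))) K - (fun j : ℤ => -(g (j:ℝ))) ((k0-1)+1)) := by
          rw [← telescope_Icc (fun j : ℤ => -(g (j:ℝ))) K (k0-1) hKmem, Finset.mul_sum]
          refine Finset.sum_congr rfl (fun k _ => ?_)
          push_cast
          ring
        have h4 : (fun j : ℤ => -(g (j:ℝ))) K - (fun j : ℤ => -(g (j:ℝ))) ((k0-1)+1) ≤ m := by
          simp only
          have e1 := hgm (((k0-1+1 : ℤ)):ℝ)
          have e2 := hg0 ((K:ℤ):ℝ)
          linarith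
        calc ∑ k ∈ F2, (-d k)
            ≤ z * (1-z) * ((fun j : ℤ => -(g (j:ℝ))) K - (fun j : ℤ => -(g (j:ℝ))) ((k0-1)+1)) := by
              rw [← h3]; linarith
          _ ≤ z * (1-z) * m := mul_le_mul_of_nonneg_left h4 hzz
    linarith
  have hup : ∑' k, d k ≤ z * m + z * (1-z) * m := hdsum.tsum_le_of_sum_le hFin
  have hlow : -(z * m + z * (1-z) * m) ≤ ∑' k, d k := by
    have h := hdsum.neg.tsum_le_of_sum_le hFin'
    rw [tsum_neg] at h
    linarith
  have htd : ∑' k, d k = (∑' k, b k) - z := by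
    have : ∑' k, d k = (∑' k, b k) - ∑' k, z * c k :=
      hbsum.tsum_sub (hcsum.mul_left z)
    rw [this, tsum_mul_left, htot, mul_one]
  rw [htd] at hup hlow
  have hzm : z * m ≤ m := by nlinarith
  have hzzm : z * (1-z) * m ≤ m := by nlinarith
  rw [abs_le]
  constructor <;> linarith


lemma lintegral_image_eq_lintegral_abs_deriv_mul' {s : Set ℝ} {f f' : ℝ → ℝ}
    (hs : MeasurableSet s) (hf' : ∀ x ∈ s, HasDerivWithinAt f (f' x) s x)
    (hf : InjOn f s) (g : ℝ → ℝ≥0∞) :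
    ∫⁻ x in f '' s, g x = ∫⁻ x in s, ENNReal.ofReal |f' x| * g (f x) := by
  simpa only [ContinuousLinearMap.det_toSpanSingleton] using
    lintegral_image_eq_lintegral_abs_det_fderiv_mul volume hs
      (fun x hx => (hf' x hx).hasFDerivWithinAt) hf g


end UBenford

open UBenford in
/-- Theorem 2 (generalized Benford): if `X` has density `f` supported on an
interval `I`, and `u : I → ℝ` is a `C¹` increasing function (with derivative
`u' > 0` on `I`) such that `f/u'` attains its maximum `m` at some `a ∈ I`,
is nondecreasing before `a` and nonincreasing after `a` on `I`, then
`|P({u(X)} < z) − z| ≤ 2m` for all `z ∈ [0,1)`. -/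
theorem u_benford_of_scatter_regularity
    (μ : Measure ℝ) [IsProbabilityMeasure μ]
    (I : Set ℝ) (hI : I.OrdConnected)
    (f : ℝ → ℝ) (hf0 : ∀ x, 0 ≤ f x) (hsupp : ∀ x ∉ I, f x = 0)
    (hμ : μ = volume.withDensity (fun x => ENNReal.ofReal (f x)))
    (u u' : ℝ → ℝ)
    (hderiv : ∀ x ∈ I, HasDerivAt u (u' x) x)
    (hu'cont : ContinuousOn u' I) (hu'pos : ∀ x ∈ I, 0 < u' x)
    (huincr : StrictMonoOn u I)
    (a m : ℝ) (haI : a ∈ I) (hm : m = f a / u' a)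
    (hmax : ∀ x ∈ I, f x / u' x ≤ m)
    (hmono : MonotoneOn (fun x => f x / u' x) (I ∩ Iic a))
    (hanti : AntitoneOn (fun x => f x / u' x) (I ∩ Ici a)) :
    ∀ z ∈ Ico (0 : ℝ) 1,
      |(μ {x : ℝ | Int.fract (u x) < z}).toReal - z| ≤ 2 * m := by
  rintro z ⟨hz0, hz1⟩
  have hm0 : 0 ≤ m := hm ▸ div_nonneg (hf0 a) (le_of_lt (hu'pos a haI))
  -- basic objects
  set J : Set ℝ := u '' I with hJdef
  set β : ℝ := u a with hβdef
  have hβJ : β ∈ J := ⟨a, haI, rfl⟩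
  have hucont : ContinuousOn u I := fun x hx =>
    (hderiv x hx).continuousAt.continuousWithinAt
  have hJord : J.OrdConnected := (hI.isPreconnected.image u hucont).ordConnected
  have hJmeas : MeasurableSet J := hJord.measurableSet
  have hImeas : MeasurableSet I := hI.measurableSet
  set v : ℝ → ℝ := Function.invFunOn u I with hvdef
  have hinj : InjOn u I := huincr.injOn
  have hv : ∀ x ∈ I, v (u x) = x := fun x hx => hinj.leftInvOn_invFunOn hx
  have hvmem : ∀ t ∈ J, v t ∈ I := fun t ht => Function.invFunOn_mem ht
  have hvval : ∀ t ∈ J, u (v t) = t := fun t ht => Function.invFunOn_eq ht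
  set g0 : ℝ → ℝ := fun t => f (v t) / u' (v t) with hg0def
  set g : ℝ → ℝ := J.indicator g0 with hgdef
  have hgJ : ∀ t ∈ J, g t = g0 t := fun t ht => indicator_of_mem ht g0
  have hgJ' : ∀ t ∉ J, g t = 0 := fun t ht => indicator_of_notMem ht g0
  have hgu : ∀ x ∈ I, g (u x) = f x / u' x := by
    intro x hx
    rw [hgJ _ ⟨x, hx, rfl⟩, hg0def]
    simp only [hv x hx]
  have hg0' : ∀ t, 0 ≤ g t := by
    intro t
    by_cases ht : t ∈ J
    · rw [hgJ _ ht]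
      exact div_nonneg (hf0 _) (le_of_lt (hu'pos _ (hvmem t ht)))
    · rw [hgJ' _ ht]
  have hgm : ∀ t, g t ≤ m := by
    intro t
    by_cases ht : t ∈ J
    · rw [hgJ _ ht]; exact hmax _ (hvmem t ht)
    · rw [hgJ' _ ht]; exact hm0
  -- comparison of v
  have hvle : ∀ s t, s ∈ J → t ∈ J → s ≤ t → v s ≤ v t := by
    intro s t hs ht hst
    by_contra h
    push_neg at h
    have := huincr (hvmem t ht) (hvmem s hs) h
    rw [hvval s hs, hvval t ht] at this
    linarith
  -- monotonicity of g
  have hgmono : MonotoneOn g (Iic β) := by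
    intro s hs t ht hst
    by_cases htJ : t ∈ J
    · by_cases hsJ : s ∈ J
      · rw [hgJ _ htJ, hgJ _ hsJ]
        have h1 : v s ≤ v t := hvle s t hsJ htJ hst
        have h2 : v t ≤ a := by
          by_contra h
          push_neg at h
          have := huincr haI (hvmem t htJ) h
          rw [hvval t htJ] at this
          exact absurd ht (by simp only [mem_Iic]; push_neg; exact this)
        exact hmono ⟨hvmem s hsJ, by simp only [mem_Iic]; linarith⟩
          ⟨hvmem t htJ, h2⟩ h1
      · rw [hgJ' _ hsJ]; exact hg0' t
    · have hsJ : s ∉ J := by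
        intro hsJ
        exact htJ (hJord.out hsJ hβJ ⟨hst, ht⟩)
      rw [hgJ' _ hsJ, hgJ' _ htJ]
  have hganti : AntitoneOn g (Ici β) := by
    intro s hs t ht hst
    by_cases hsJ : s ∈ J
    · by_cases htJ : t ∈ J
      · rw [hgJ _ htJ, hgJ _ hsJ]
        have h1 : v s ≤ v t := hvle s t hsJ htJ hst
        have h2 : a ≤ v s := by
          by_contra h
          push_neg at h
          have := huincr (hvmem s hsJ) haI h
          rw [hvval s hsJ] at this
          exact absurd hs (by simp only [mem_Ici]; push_neg; exact this)
        exact hanti ⟨hvmem s hsJ, h2⟩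
          ⟨hvmem t htJ, by simp only [mem_Ici]; linarith⟩ h1
      · rw [hgJ' _ htJ]; exact hg0' s
    · have htJ : t ∉ J := by
        intro htJ
        exact hsJ (hJord.out hβJ htJ ⟨hs, hst⟩)
      rw [hgJ' _ hsJ, hgJ' _ htJ]
  -- measurability of g
  have hgmeas : Measurable g := by
    have h1 : Monotone (fun t => g (min t β)) := fun s t hst =>
      hgmono (by simp) (by simp) (min_le_min hst le_rfl)
    have h2 : Antitone (fun t => g (max t β)) := fun s t hst =>
      hganti (by simp) (by simp) (max_le_max hst le_rfl)
    have : g = (Iic β).piecewise (fun t => g (min t β)) (fun t => g (max t β)) := by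
      funext t
      by_cases ht : t ∈ Iic β
      · rw [piecewise_eq_of_mem _ _ _ ht, min_eq_left ht]
      · rw [piecewise_eq_of_notMem _ _ _ ht, max_eq_left
          (le_of_lt (by simpa [mem_Iic, not_le] using ht))]
    rw [this]
    exact Measurable.piecewise measurableSet_Iic h1.measurable h2.measurable
  -- the density of u(X)
  set G : ℝ → ℝ≥0∞ := fun t => ENNReal.ofReal (g t) with hGdef
  have hGind : ∀ T : Set ℝ, MeasurableSet T → ∫⁻ t in T, G t = ∫⁻ t in T ∩ J, G t := by
    intro T hT
    have hGi : G = J.indicator (fun t => ENNReal.ofReal (g0 t)) := by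
      funext t
      by_cases ht : t ∈ J
      · simp only [hGdef, indicator_of_mem ht, hgJ _ ht]
      · simp only [hGdef, indicator_of_notMem ht, hgJ' _ ht, ENNReal.ofReal_zero]
    rw [hGi, lintegral_indicator hJmeas, lintegral_indicator hJmeas,
      Measure.restrict_restrict hJmeas, Measure.restrict_restrict hJmeas,
      show J ∩ (T ∩ J) = J ∩ T by ext x; simp only [mem_inter_iff]; tauto]
  have hcov : ∀ s : Set ℝ, s ⊆ I → MeasurableSet s → μ s = ∫⁻ t in u '' s, G t := by
    intro s hsub hs
    rw [hμ, withDensity_apply _ hs,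
      lintegral_image_eq_lintegral_abs_deriv_mul' hs
        (fun x hx => (hderiv x (hsub hx)).hasDerivWithinAt) (hinj.mono hsub) G]
    refine setLIntegral_congr_fun hs (fun x hx => ?_)
    have hxI := hsub hx
    have hne : u' x ≠ 0 := ne_of_gt (hu'pos x hxI)
    rw [hGdef]
    simp only
    rw [abs_of_pos (hu'pos x hxI), hgu x hxI,
      ← ENNReal.ofReal_mul (le_of_lt (hu'pos x hxI))]
    congr 1
    field_simp
  -- preimage sets
  have h_ord_pre : ∀ p q : ℝ, (u ⁻¹' Ico p q ∩ I).OrdConnected := by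
    intro p q
    constructor
    rintro x ⟨hx1, hx2⟩ y ⟨hy1, hy2⟩ t ⟨ht1, ht2⟩
    have htI : t ∈ I := hI.out hx2 hy2 ⟨ht1, ht2⟩
    have hmon := huincr.monotoneOn
    exact ⟨⟨le_trans hx1.1 (hmon hx2 htI ht1), lt_of_le_of_lt (hmon htI hy2 ht2) hy1.2⟩, htI⟩
  have himg : ∀ T : Set ℝ, u '' (u ⁻¹' T ∩ I) = T ∩ J := by
    intro T
    ext t
    constructor
    · rintro ⟨x, ⟨hxT, hxI⟩, rfl⟩; exact ⟨hxT, ⟨x, hxI, rfl⟩⟩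
    · rintro ⟨htT, x, hxI, rfl⟩; exact ⟨x, ⟨htT, hxI⟩, rfl⟩
  have hμpre : ∀ p q : ℝ, μ (u ⁻¹' Ico p q ∩ I)
      = ENNReal.ofReal (∫ t in Ico p q, g t) := by
    intro p q
    rw [hcov _ inter_subset_right (h_ord_pre p q).measurableSet, himg,
      ← hGind _ measurableSet_Ico,
      ofReal_integral_eq_lintegral_ofReal (integrableOn_Ico hgmeas hg0' hgm p q)
        (ae_of_all _ hg0')]
  -- mass outside I is zero
  have hμIc : μ Iᶜ = 0 := by
    rw [hμ, withDensity_apply _ hImeas.compl]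
    have h0 : ∫⁻ x in Iᶜ, ENNReal.ofReal (f x) = ∫⁻ x in Iᶜ, 0 :=
      setLIntegral_congr_fun hImeas.compl
        (fun x hx => by rw [hsupp x hx, ENNReal.ofReal_zero])
    rw [h0, lintegral_zero]
  have hμI : μ I = 1 := by
    have h := measure_add_measure_compl (μ := μ) hImeas
    rw [hμIc, add_zero, measure_univ] at h
    exact h
  -- disjointness of preimage families
  have hdisjf : ∀ w : ℝ, w ≤ 1 → Pairwise (Function.onFun Disjoint
      (fun k : ℤ => u ⁻¹' Ico (k:ℝ) ((k:ℝ)+w) ∩ I)) := by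
    intro w hw i j hij
    refine Disjoint.mono inter_subset_left inter_subset_left (Disjoint.preimage u ?_)
    rw [Set.Ico_disjoint_Ico]
    rcases lt_or_gt_of_ne hij with h | h
    · have h1 : (i:ℝ) + 1 ≤ (j:ℝ) := by exact_mod_cast (by omega : i + 1 ≤ j)
      calc min ((i:ℝ)+w) ((j:ℝ)+w) ≤ (i:ℝ)+w := min_le_left _ _
        _ ≤ (j:ℝ) := by linarith
        _ ≤ max (i:ℝ) (j:ℝ) := le_max_right _ _
    · have h1 : (j:ℝ) + 1 ≤ (i:ℝ) := by exact_mod_cast (by omega : j + 1 ≤ i)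
      calc min ((i:ℝ)+w) ((j:ℝ)+w) ≤ (j:ℝ)+w := min_le_right _ _
        _ ≤ (i:ℝ) := by linarith
        _ ≤ max (i:ℝ) (j:ℝ) := le_max_left _ _
  -- total mass identity
  have htotE : ∑' k : ℤ, ENNReal.ofReal (∫ t in Ico (k:ℝ) ((k:ℝ)+1), g t) = 1 := by
    have hBunion : ⋃ k : ℤ, (u ⁻¹' Ico (k:ℝ) ((k:ℝ)+1) ∩ I) = I := by
      ext x
      simp only [mem_iUnion, mem_inter_iff, mem_preimage, mem_Ico]
      constructor
      · rintro ⟨k, _, hxI⟩; exact hxI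
      · intro hxI; exact ⟨⌊u x⌋, ⟨Int.floor_le _, Int.lt_floor_add_one _⟩, hxI⟩
    have h := measure_iUnion (μ := μ) (hdisjf 1 le_rfl)
      (fun k => (h_ord_pre (k:ℝ) ((k:ℝ)+1)).measurableSet)
    rw [hBunion, hμI] at h
    calc ∑' k : ℤ, ENNReal.ofReal (∫ t in Ico (k:ℝ) ((k:ℝ)+1), g t)
        = ∑' k : ℤ, μ (u ⁻¹' Ico (k:ℝ) ((k:ℝ)+1) ∩ I) :=
          tsum_congr fun k => (hμpre (k:ℝ) ((k:ℝ)+1)).symm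
      _ = 1 := h.symm
  -- the event
  set S : Set ℝ := {x : ℝ | Int.fract (u x) < z} with hSdef
  have hSI : S ∩ I = ⋃ k : ℤ, (u ⁻¹' Ico (k:ℝ) ((k:ℝ)+z) ∩ I) := by
    ext x
    simp only [hSdef, mem_iUnion, mem_inter_iff, mem_preimage, mem_Ico, mem_setOf_eq]
    constructor
    · rintro ⟨hfr, hxI⟩
      refine ⟨⌊u x⌋, ⟨Int.floor_le _, ?_⟩, hxI⟩
      have hfd : Int.fract (u x) = u x - ↑⌊u x⌋ := rfl
      linarith [hfd ▸ hfr]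
    · rintro ⟨k, ⟨hk1, hk2⟩, hxI⟩
      refine ⟨?_, hxI⟩
      have hfl : ⌊u x⌋ = k := by
        rw [Int.floor_eq_iff]
        exact ⟨hk1, by linarith⟩
      have hfd : Int.fract (u x) = u x - ↑⌊u x⌋ := rfl
      rw [hfd, hfl]
      linarith
  have hμS : μ S = ∑' k : ℤ, ENNReal.ofReal (∫ t in Ico (k:ℝ) ((k:ℝ)+z), g t) := by
    have h1 : μ S = μ (S ∩ I) := by
      refine le_antisymm ?_ (measure_mono inter_subset_left)
      calc μ S = μ ((S ∩ I) ∪ (S ∩ Iᶜ)) := by rw [inter_union_compl]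
        _ ≤ μ (S ∩ I) + μ (S ∩ Iᶜ) := measure_union_le _ _
        _ ≤ μ (S ∩ I) + μ Iᶜ := by
            exact add_le_add le_rfl (measure_mono inter_subset_right)
        _ = μ (S ∩ I) := by rw [hμIc, add_zero]
    rw [h1, hSI, measure_iUnion (hdisjf z (le_of_lt hz1))
      (fun k => (h_ord_pre (k:ℝ) ((k:ℝ)+z)).measurableSet)]
    exact tsum_congr fun k => hμpre (k:ℝ) ((k:ℝ)+z)
  -- convert to real sums
  have hPt : (μ S).toReal = ∑' k : ℤ, ∫ t in Ico (k:ℝ) ((k:ℝ)+z), g t := by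
    rw [hμS, ENNReal.tsum_toReal_eq (fun k => ENNReal.ofReal_ne_top)]
    exact tsum_congr fun k => ENNReal.toReal_ofReal
      (setIntegral_nonneg measurableSet_Ico fun t _ => hg0' t)
  have htotR : ∑' k : ℤ, ∫ t in Ico (k:ℝ) ((k:ℝ)+1), g t = 1 := by
    have h := congrArg ENNReal.toReal htotE
    rw [ENNReal.tsum_toReal_eq (fun k => ENNReal.ofReal_ne_top), ENNReal.toReal_one] at h
    calc ∑' k : ℤ, ∫ t in Ico (k:ℝ) ((k:ℝ)+1), g t
        = ∑' k : ℤ, (ENNReal.ofReal (∫ t in Ico (k:ℝ) ((k:ℝ)+1), g t)).toReal :=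
          tsum_congr fun k => (ENNReal.toReal_ofReal
            (setIntegral_nonneg measurableSet_Ico fun t _ => hg0' t)).symm
      _ = 1 := h
  rw [hPt]
  exact core hgmeas hg0' hgm hgmono hganti hz0 hz1 htotR
end

section
/- Let X follow a type I Pareto distribution with parameters x₀ > 0 and α > 0, i.e., with density f(x) = α·x₀^α / x^(α+1) for x ≥ x₀ and 0 otherwise. Then for every z ∈ (0, 1], |P({log₁₀ X} < z) − z| < 2·ln(10)·α. -/
open MeasureTheory Set Real

lemma conv_aux (L z : ℝ) (hz : 0 ≤ z) (hz1 : z ≤ 1) :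
    z * (1 - Real.exp (-L)) ≤ 1 - Real.exp (-(L*z)) := by
  have h := convexOn_exp.2 (Set.mem_univ (0:ℝ)) (Set.mem_univ (-L))
    (by linarith : (0:ℝ) ≤ 1 - z) hz (by ring)
  simp only [smul_eq_mul] at h
  have harg : (1 - z) * 0 + z * (-L) = -(L*z) := by ring
  rw [harg, Real.exp_zero] at h
  linarith

lemma key_ineq (r z θ : ℝ) (hr0 : 0 < r) (hr1 : r < 1)
    (hz : 0 < z) (hz1 : z ≤ 1) (hθ0 : 0 ≤ θ) (hθ1 : θ < 1) :
    |(if θ < z then 1 - r ^ (z - θ) else 0) + r ^ (1 - θ) * (1 - r ^ z) / (1 - r) - z|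
      < 2 * (-Real.log r) := by
  set L : ℝ := -Real.log r with hL
  have hLpos : 0 < L := by
    have := Real.log_neg hr0 hr1
    simpa [hL] using this
  have hrexp : r = Real.exp (-L) := by
    rw [hL, neg_neg, Real.exp_log hr0]
  have hrpow : ∀ t : ℝ, r ^ t = Real.exp (-(L * t)) := by
    intro t
    rw [Real.rpow_def_of_pos hr0, hL]; ring_nf
  have h1r : 0 < 1 - r := by linarith
  set T : ℝ := r ^ (1 - θ) * (1 - r ^ z) / (1 - r) with hT
  have hrz1 : r ^ z ≤ 1 := Real.rpow_le_one (le_of_lt hr0) (le_of_lt hr1) (le_of_lt hz)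
  have hTlow : z - L ≤ T := by
    have h1 : r ≤ r ^ (1 - θ) := by
      calc r = r ^ (1:ℝ) := (Real.rpow_one r).symm
      _ ≤ r ^ (1 - θ) := by
          apply Real.rpow_le_rpow_of_exponent_ge hr0 (le_of_lt hr1); linarith
    have h2 : z * (1 - r) ≤ 1 - r ^ z := by
      have := conv_aux L z (le_of_lt hz) hz1
      rw [← hrexp, ← hrpow z] at this; exact this
    have h4 : r * z ≤ T := by
      rw [hT, le_div_iff₀ h1r]; nlinarith
    have h5 : 1 - L ≤ r := by
      have := Real.add_one_le_exp (-L); rw [← hrexp] at this; linarith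
    nlinarith
  have hTup : T ≤ z + L * z := by
    have h1 : r ^ (1 - θ) ≤ 1 := by
      apply Real.rpow_le_one (le_of_lt hr0) (le_of_lt hr1); linarith
    have h2 : 1 - r ^ z ≤ L * z := by
      have := Real.add_one_le_exp (-(L*z)); rw [← hrpow z] at this; linarith
    have hre1 : r * Real.exp L = 1 := by
      rw [hrexp, ← Real.exp_add]; simp
    have hr' : r * (1 + L) ≤ 1 := by
      have he : 1 + L ≤ Real.exp L := by have := Real.add_one_le_exp L; linarith
      nlinarith
    rw [hT, div_le_iff₀ h1r]
    have h5 : r ^ (1 - θ) * (1 - r ^ z) ≤ L * z := by nlinarith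
    have h6 : L * z ≤ (z + L * z) * (1 - r) := by nlinarith
    linarith
  have hTnn : 0 ≤ T := by
    rw [hT]
    exact div_nonneg (mul_nonneg (Real.rpow_nonneg (le_of_lt hr0) _) (by linarith)) (le_of_lt h1r)
  rw [abs_lt]
  by_cases hcase : θ < z
  · rw [if_pos hcase]
    have hD0 : 0 < 1 - r ^ (z - θ) := by
      have : r ^ (z - θ) < 1 := Real.rpow_lt_one (le_of_lt hr0) hr1 (by linarith)
      linarith
    have hDup : 1 - r ^ (z - θ) < L * (z - θ) := by
      have := Real.add_one_lt_exp (x := -(L * (z - θ))) (by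
        have : L * (z - θ) > 0 := by apply mul_pos hLpos; linarith
        linarith)
      rw [← hrpow (z - θ)] at this; linarith
    constructor
    · nlinarith
    · have : L * (z - θ) ≤ L * z := by nlinarith
      nlinarith
  · rw [if_neg hcase]
    constructor
    · nlinarith
    · nlinarith


lemma pareto_Ico (x₀ α : ℝ) (hx₀ : 0 < x₀) (hα : 0 < α)
    (f : ℝ → ℝ)
    (hf : ∀ x, f x = if x₀ ≤ x then α * x₀ ^ α / x ^ (α + 1) else 0)
    (a b : ℝ) (ha : x₀ ≤ a) (hab : a ≤ b) :
    (volume.withDensity (fun x => ENNReal.ofReal (f x))) (Ico a b)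
      = ENNReal.ofReal (x₀ ^ α * (a ^ (-α) - b ^ (-α))) := by
  have ha0 : 0 < a := lt_of_lt_of_le hx₀ ha
  rw [withDensity_apply _ measurableSet_Ico]
  have hcong : ∀ᵐ x ∂volume, x ∈ Ico a b →
      ENNReal.ofReal (f x) = ENNReal.ofReal (α * x₀ ^ α * x ^ (-(α+1))) := by
    filter_upwards with x hx
    have hx0 : 0 < x := lt_of_lt_of_le ha0 hx.1
    rw [hf x, if_pos (le_trans ha hx.1), Real.rpow_neg (le_of_lt hx0), div_eq_mul_inv]
  rw [setLIntegral_congr_fun_ae measurableSet_Ico hcong]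
  have hint : IntegrableOn (fun x => α * x₀ ^ α * x ^ (-(α+1))) (Ico a b) volume := by
    apply IntegrableOn.mono_set _ Ico_subset_Icc_self
    apply ContinuousOn.integrableOn_Icc
    apply ContinuousOn.mul continuousOn_const
    apply ContinuousOn.rpow_const continuousOn_id
    intro x hx
    exact Or.inl (ne_of_gt (lt_of_lt_of_le ha0 hx.1))
  rw [← ofReal_integral_eq_lintegral_ofReal hint]
  · congr 1
    rw [show (volume.restrict (Ico a b)) = volume.restrict (Ioc a b) from restrict_Ico_eq_restrict_Ioc,
        ← intervalIntegral.integral_of_le hab, intervalIntegral.integral_const_mul,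
        integral_rpow (Or.inr ⟨by intro h; nlinarith [hα], notMem_uIcc_of_lt ha0 (lt_of_lt_of_le ha0 hab)⟩)]
    have he : -(α+1) + 1 = -α := by ring
    rw [he]
    rw [div_neg, div_eq_mul_inv]
    field_simp
    ring
  · filter_upwards [ae_restrict_mem measurableSet_Ico] with x hx
    have hx0 : 0 < x := lt_of_lt_of_le ha0 hx.1
    positivity


set_option maxHeartbeats 2000000 in
/-- A type I Pareto r.v. with parameters `x₀ > 0`, `α > 0` satisfies
`|P({log₁₀ X} < z) − z| < 2 ln(10) α` for every `z ∈ (0,1]`. -/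
theorem pareto_I_near_benford
    (x₀ α : ℝ) (hx₀ : 0 < x₀) (hα : 0 < α)
    (f : ℝ → ℝ)
    (hf : ∀ x, f x = if x₀ ≤ x then α * x₀ ^ α / x ^ (α + 1) else 0)
    (μ : Measure ℝ)
    (hμ : μ = volume.withDensity (fun x => ENNReal.ofReal (f x))) :
    ∀ z ∈ Ioc (0 : ℝ) 1,
      |(μ {x : ℝ | Int.fract (Real.logb 10 x) < z}).toReal - z|
        < 2 * Real.log 10 * α := by
  intro z hzm
  obtain ⟨hz0, hz1⟩ := hzm
  have h10 : (1:ℝ) < 10 := by norm_num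
  have h10p : (0:ℝ) < 10 := by norm_num
  set y₀ : ℝ := Real.logb 10 x₀ with hy₀
  set M : ℤ := ⌊y₀⌋ with hM
  set θ : ℝ := Int.fract y₀ with hθ
  have hθ_eq : θ = y₀ - (M:ℝ) := (Int.self_sub_floor y₀).symm
  have hMy : (M:ℝ) ≤ y₀ := Int.floor_le y₀
  have hyM : y₀ < (M:ℝ) + 1 := Int.lt_floor_add_one y₀
  have hθ0 : (0:ℝ) ≤ θ := Int.fract_nonneg y₀
  have hθ1 : θ < 1 := Int.fract_lt_one y₀
  have hx10 : (10:ℝ) ^ y₀ = x₀ := Real.rpow_logb h10p (by norm_num) hx₀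
  set ρ : ℝ := (10:ℝ) ^ (-α) with hρ
  have hρ0 : 0 < ρ := Real.rpow_pos_of_pos h10p _
  have hρ1 : ρ < 1 := Real.rpow_lt_one_of_one_lt_of_neg h10 (by linarith)
  set lo : ℕ → ℝ := fun k => if k = 0 then x₀ else 10 ^ ((M:ℝ) + k) with hlo
  set hi : ℕ → ℝ := fun k => if k = 0 then max x₀ (10 ^ ((M:ℝ) + z))
      else 10 ^ ((M:ℝ) + k + z) with hhi
  have hxlo : ∀ k, x₀ ≤ lo k := by
    intro k
    cases k with
    | zero => simp [hlo]
    | succ n =>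
        simp only [hlo, if_neg (Nat.succ_ne_zero n)]
        rw [← hx10, Real.rpow_le_rpow_left_iff h10]
        push_cast; linarith
  have hlohi : ∀ k, lo k ≤ hi k := by
    intro k
    cases k with
    | zero => simp [hlo, hhi]
    | succ n =>
        simp only [hlo, hhi, if_neg (Nat.succ_ne_zero n)]
        rw [Real.rpow_le_rpow_left_iff h10]
        linarith
  have hchain : ∀ k, hi k ≤ lo (k+1) := by
    intro k
    cases k with
    | zero =>
        simp only [hhi, hlo, if_neg (Nat.succ_ne_zero 0), if_pos rfl]
        apply max_le
        · rw [← hx10, Real.rpow_le_rpow_left_iff h10]; push_cast; linarith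
        · rw [Real.rpow_le_rpow_left_iff h10]; push_cast; linarith
    | succ n =>
        simp only [hhi, hlo, if_neg (Nat.succ_ne_zero n), if_neg (Nat.succ_ne_zero (n+1))]
        rw [Real.rpow_le_rpow_left_iff h10]
        push_cast; linarith
  have hmono : Monotone lo := monotone_nat_of_le_succ (fun k => le_trans (hlohi k) (hchain k))
  have hsep : ∀ i j : ℕ, i < j → hi i ≤ lo j := by
    intro i j hij
    exact le_trans (hchain i) (hmono hij)
  have hdisj : Pairwise (Function.onFun Disjoint (fun k => Ico (lo k) (hi k))) := by
    intro i j hij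
    rcases Ne.lt_or_gt hij with h | h
    · exact Set.Ico_disjoint_Ico.mpr (le_trans (inf_le_left) (le_trans (hsep i j h) le_sup_right))
    · exact Set.Ico_disjoint_Ico.mpr (le_trans (inf_le_right) (le_trans (hsep j i h) le_sup_left))
  -- set equality
  have hset : {x : ℝ | Int.fract (Real.logb 10 x) < z} ∩ Ici x₀
      = ⋃ k, Ico (lo k) (hi k) := by
    ext x
    simp only [mem_inter_iff, mem_setOf_eq, mem_Ici, mem_iUnion, mem_Ico]
    constructor
    · rintro ⟨hfr, hxx⟩
      have hx0 : 0 < x := lt_of_lt_of_le hx₀ hxx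
      have hxy : (10:ℝ) ^ (Real.logb 10 x) = x := Real.rpow_logb h10p (by norm_num) hx0
      set y := Real.logb 10 x with hy
      have hy₀y : y₀ ≤ y := Real.logb_le_logb_of_le h10 hx₀ hxx
      have hny : (⌊y⌋ : ℝ) ≤ y := Int.floor_le y
      have hfr' : y < (⌊y⌋:ℝ) + z := by
        have h1 := Int.self_sub_floor y
        have h2 : Int.fract y < z := hfr
        linarith
      have hMn : M ≤ ⌊y⌋ := Int.floor_le_floor hy₀y
      rcases eq_or_lt_of_le hMn with hEq | hLt
      · refine ⟨0, by simpa [hlo] using hxx, ?_⟩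
        simp only [hhi, if_pos rfl]
        apply lt_max_of_lt_right
        rw [← hxy, Real.rpow_lt_rpow_left_iff h10]
        rw [← hEq] at hfr'
        exact hfr'
      · set k : ℕ := (⌊y⌋ - M - 1).toNat with hk
        have hk' : (k : ℝ) = (⌊y⌋:ℝ) - (M:ℝ) - 1 := by
          have : ((⌊y⌋ - M - 1).toNat : ℤ) = ⌊y⌋ - M - 1 := Int.toNat_of_nonneg (by omega)
          rw [hk]
          exact_mod_cast congrArg (fun t : ℤ => (t:ℝ)) this
        refine ⟨k+1, ?_, ?_⟩
        · simp only [hlo, if_neg (Nat.succ_ne_zero k)]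
          have he : (M:ℝ) + ((k+1 : ℕ):ℝ) = (⌊y⌋:ℝ) := by push_cast; linarith
          rw [he, ← hxy, Real.rpow_le_rpow_left_iff h10]
          exact hny
        · simp only [hhi, if_neg (Nat.succ_ne_zero k)]
          have he : (M:ℝ) + ((k+1 : ℕ):ℝ) + z = (⌊y⌋:ℝ) + z := by push_cast; linarith
          rw [he, ← hxy, Real.rpow_lt_rpow_left_iff h10]
          exact hfr'
    · rintro ⟨k, hxk1, hxk2⟩
      cases k with
      | zero =>
          simp only [hlo, hhi, if_pos rfl] at hxk1 hxk2
          have hlt : x < 10 ^ ((M:ℝ) + z) := by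
            rcases lt_max_iff.mp hxk2 with h | h
            · linarith
            · exact h
          have hx0 : 0 < x := lt_of_lt_of_le hx₀ hxk1
          have hyU : Real.logb 10 x < (M:ℝ) + z := by
            have := Real.logb_lt_logb h10 hx0 hlt
            rwa [Real.logb_rpow h10p (by norm_num)] at this
          have hyL : y₀ ≤ Real.logb 10 x := Real.logb_le_logb_of_le h10 hx₀ hxk1
          have hfl : ⌊Real.logb 10 x⌋ = M := by
            rw [Int.floor_eq_iff]
            constructor
            · linarith
            · push_cast; linarith
          refine ⟨?_, hxk1⟩
          rw [← Int.self_sub_floor, hfl]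
          linarith
      | succ n =>
          simp only [hlo, hhi, if_neg (Nat.succ_ne_zero n)] at hxk1 hxk2
          have hpos : (0:ℝ) < 10 ^ ((M:ℝ) + (n+1:ℕ)) := Real.rpow_pos_of_pos h10p _
          have hx0 : 0 < x := lt_of_lt_of_le hpos hxk1
          have hyL : (M:ℝ) + ((n+1:ℕ):ℝ) ≤ Real.logb 10 x := by
            have := Real.logb_le_logb_of_le h10 hpos hxk1
            rwa [Real.logb_rpow h10p (by norm_num)] at this
          have hyU : Real.logb 10 x < (M:ℝ) + ((n+1:ℕ):ℝ) + z := by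
            have := Real.logb_lt_logb h10 hx0 hxk2
            rwa [Real.logb_rpow h10p (by norm_num)] at this
          have hfl : ⌊Real.logb 10 x⌋ = M + (n+1 : ℕ) := by
            rw [Int.floor_eq_iff]
            constructor
            · push_cast; push_cast at hyL; linarith
            · push_cast; push_cast at hyU; linarith
          constructor
          · rw [← Int.self_sub_floor, hfl]
            push_cast; push_cast at hyU; linarith
          · calc x₀ = 10 ^ y₀ := hx10.symm
              _ ≤ 10 ^ ((M:ℝ) + ((n+1:ℕ):ℝ)) := by
                  rw [Real.rpow_le_rpow_left_iff h10]; push_cast; linarith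
              _ ≤ x := hxk1
  -- measurability and measure computation
  have hSm : MeasurableSet {x : ℝ | Int.fract (Real.logb 10 x) < z} := by
    have hm : Measurable fun x : ℝ => Int.fract (Real.logb 10 x) :=
      measurable_fract.comp (Real.measurable_log.div_const _)
    exact measurableSet_lt hm measurable_const
  subst hμ
  have hIio : (volume.withDensity fun x => ENNReal.ofReal (f x)) (Iio x₀) = 0 := by
    rw [withDensity_apply _ measurableSet_Iio]
    have hcz : ∀ᵐ (x:ℝ) ∂volume, x ∈ Iio x₀ →
        ENNReal.ofReal (f x) = (fun _ : ℝ => (0:ENNReal)) x := by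
      filter_upwards with x hx
      rw [hf x, if_neg (not_le.mpr hx)]; simp
    rw [setLIntegral_congr_fun_ae measurableSet_Iio hcz, lintegral_zero]
  set S := {x : ℝ | Int.fract (Real.logb 10 x) < z} with hS
  have hμS : (volume.withDensity fun x => ENNReal.ofReal (f x)) S
      = ∑' k, (volume.withDensity fun x => ENNReal.ofReal (f x)) (Ico (lo k) (hi k)) := by
    have h1 := measure_inter_add_diff (μ := volume.withDensity fun x => ENNReal.ofReal (f x))
      S (measurableSet_Ici (a := x₀))
    have h2 : (volume.withDensity fun x => ENNReal.ofReal (f x)) (S \ Ici x₀) = 0 :=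
      measure_mono_null (fun x hx => mem_Iio.mpr (not_le.mp hx.2)) hIio
    rw [← h1, h2, add_zero, hset, measure_iUnion hdisj (fun k => measurableSet_Ico)]
  have hterm : ∀ k, (volume.withDensity fun x => ENNReal.ofReal (f x)) (Ico (lo k) (hi k))
      = ENNReal.ofReal (x₀ ^ α * ((lo k) ^ (-α) - (hi k) ^ (-α))) :=
    fun k => pareto_Ico x₀ α hx₀ hα f hf (lo k) (hi k) (hxlo k) (hlohi k)
  set g : ℕ → ℝ := fun k => x₀ ^ α * ((lo k) ^ (-α) - (hi k) ^ (-α)) with hg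
  have hsum : (volume.withDensity fun x => ENNReal.ofReal (f x)) S
      = ENNReal.ofReal (g 0) + ∑' k, ENNReal.ofReal (g (k+1)) := by
    rw [hμS, tsum_congr (fun k => hterm k), tsum_eq_zero_add' ENNReal.summable]
  set C : ℝ := ρ ^ (1-θ) * (1 - ρ^z) with hC
  have hρz1 : ρ ^ z ≤ 1 := Real.rpow_le_one (le_of_lt hρ0) (le_of_lt hρ1) (le_of_lt hz0)
  have hCnn : 0 ≤ C :=
    mul_nonneg (le_of_lt (Real.rpow_pos_of_pos hρ0 _)) (by linarith)
  have hgk : ∀ k : ℕ, g (k+1) = C * ρ ^ k := by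
    intro k
    simp only [hg, hlo, hhi, if_neg (Nat.succ_ne_zero k), hC]
    have e0 : x₀ ^ α = 10 ^ (y₀ * α) := by rw [← hx10, ← Real.rpow_mul (le_of_lt h10p)]
    have e1 : ((10:ℝ) ^ ((M:ℝ) + ((k+1:ℕ):ℝ))) ^ (-α)
        = 10 ^ (((M:ℝ) + ((k+1:ℕ):ℝ)) * (-α)) := (Real.rpow_mul (le_of_lt h10p) _ _).symm
    have e2 : ((10:ℝ) ^ ((M:ℝ) + ((k+1:ℕ):ℝ) + z)) ^ (-α)
        = 10 ^ (((M:ℝ) + ((k+1:ℕ):ℝ) + z) * (-α)) := (Real.rpow_mul (le_of_lt h10p) _ _).symm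
    have e3 : ρ ^ (1-θ) = 10 ^ ((-α) * (1-θ)) := by rw [hρ, ← Real.rpow_mul (le_of_lt h10p)]
    have e4 : ρ ^ z = 10 ^ ((-α) * z) := by rw [hρ, ← Real.rpow_mul (le_of_lt h10p)]
    have e5 : ρ ^ k = 10 ^ ((-α) * (k:ℝ)) := by
      rw [← Real.rpow_natCast ρ k, hρ, ← Real.rpow_mul (le_of_lt h10p)]
    rw [e0, e1, e2, e3, e4, e5]
    rw [mul_sub, ← Real.rpow_add h10p, ← Real.rpow_add h10p,
        mul_sub, mul_one, ← Real.rpow_add h10p, sub_mul,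
        ← Real.rpow_add h10p, ← Real.rpow_add h10p]
    congr 1
    · congr 1
      rw [hθ_eq]; push_cast; ring
    · congr 1
      rw [hθ_eq]; push_cast; ring
  have hgeom : ∑' k : ℕ, ENNReal.ofReal (g (k+1)) = ENNReal.ofReal (C * (1-ρ)⁻¹) := by
    have hsummable : Summable (fun k : ℕ => C * ρ ^ k) :=
      (summable_geometric_of_lt_one (le_of_lt hρ0) hρ1).mul_left C
    calc ∑' k : ℕ, ENNReal.ofReal (g (k+1))
        = ∑' k : ℕ, ENNReal.ofReal (C * ρ ^ k) := tsum_congr (fun k => by rw [hgk k])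
      _ = ENNReal.ofReal (∑' k : ℕ, C * ρ ^ k) :=
          (ENNReal.ofReal_tsum_of_nonneg
            (fun k => mul_nonneg hCnn (pow_nonneg (le_of_lt hρ0) k)) hsummable).symm
      _ = ENNReal.ofReal (C * (1-ρ)⁻¹) := by
          rw [tsum_mul_left, tsum_geometric_of_lt_one (le_of_lt hρ0) hρ1]
  have hg0nn : 0 ≤ g 0 := by
    simp only [hg, hlo, hhi, reduceIte]
    have h1 : (max x₀ (10 ^ ((M:ℝ) + z))) ^ (-α) ≤ x₀ ^ (-α) :=
      Real.rpow_le_rpow_of_nonpos hx₀ (le_max_left _ _) (by linarith)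
    have hp : 0 ≤ x₀ ^ α := le_of_lt (Real.rpow_pos_of_pos hx₀ _)
    nlinarith
  have hg0 : g 0 = (if θ < z then 1 - ρ ^ (z - θ) else 0) := by
    simp only [hg, hlo, hhi, reduceIte]
    by_cases hc : θ < z
    · rw [if_pos hc]
      have hmax : max x₀ (10 ^ ((M:ℝ) + z)) = 10 ^ ((M:ℝ) + z) := max_eq_right (by
        rw [← hx10, Real.rpow_le_rpow_left_iff h10]
        rw [hθ_eq] at hc; linarith)
      rw [hmax]
      have e0 : x₀ ^ α * x₀ ^ (-α) = 1 := by
        rw [← Real.rpow_add hx₀]; norm_num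
      have e1 : x₀ ^ α = 10 ^ (y₀ * α) := by rw [← hx10, ← Real.rpow_mul (le_of_lt h10p)]
      have e2 : ((10:ℝ) ^ ((M:ℝ) + z)) ^ (-α) = 10 ^ (((M:ℝ) + z) * (-α)) :=
        (Real.rpow_mul (le_of_lt h10p) _ _).symm
      have e3 : ρ ^ (z - θ) = 10 ^ ((-α) * (z - θ)) := by
        rw [hρ, ← Real.rpow_mul (le_of_lt h10p)]
      rw [mul_sub, e0, e3]
      congr 1
      rw [e1, e2, ← Real.rpow_add h10p]
      congr 1
      rw [hθ_eq]; ring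
    · rw [if_neg hc]
      have hmax : max x₀ (10 ^ ((M:ℝ) + z)) = x₀ := max_eq_left (by
        rw [← hx10, Real.rpow_le_rpow_left_iff h10]
        rw [hθ_eq] at hc; push_neg at hc; linarith)
      rw [hmax]; ring
  rw [hsum, hgeom]
  rw [ENNReal.toReal_add ENNReal.ofReal_ne_top ENNReal.ofReal_ne_top,
      ENNReal.toReal_ofReal hg0nn,
      ENNReal.toReal_ofReal (mul_nonneg hCnn (inv_nonneg.mpr (by linarith)))]
  have hlog : 2 * Real.log 10 * α = 2 * (-Real.log ρ) := by
    rw [hρ, Real.log_rpow h10p]; ring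
  rw [hlog, hg0, hC]
  have hfin := key_ineq ρ z θ hρ0 hρ1 hz0 hz1 hθ0 hθ1
  rw [div_eq_mul_inv] at hfin
  exact hfin
end

section
/- Let X_b be a type II Pareto random variable with density f_b(x) = b/(1+x)^(b+1) on [0, ∞). As b → 0⁺, {log₁₀ X_b} converges in law to the uniform distribution on [0, 1); i.e., for every z ∈ (0,1], P({log₁₀ X_b} < z) → z as b → 0⁺. -/
open MeasureTheory Set Filter

section BenfordAux
open Real

noncomputable def BenL : ℝ := Real.log 10
noncomputable def Bg (b t : ℝ) : ℝ := (1 + Real.exp (BenL * t)) ^ (-b)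
noncomputable def Br (b t : ℝ) : ℝ :=
  b * BenL * Real.exp (BenL * t) * (1 + Real.exp (BenL * t)) ^ (-b - 1)

noncomputable def Btstar (b : ℝ) : ℝ := -Real.log b / BenL

lemma BenL_pos : 0 < BenL := Real.log_pos (by norm_num)

lemma one_add_exp_pos (t : ℝ) : 0 < 1 + Real.exp t := by positivity

lemma Bg_eq_exp (b t : ℝ) : Bg b t = Real.exp (-b * Real.log (1 + Real.exp (BenL * t))) := by
  rw [Bg, Real.rpow_def_of_pos (one_add_exp_pos _), mul_comm]

lemma Bg_pos (b t : ℝ) : 0 < Bg b t := Real.rpow_pos_of_pos (one_add_exp_pos _) _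

lemma Bg_le_one {b : ℝ} (hb : 0 < b) (t : ℝ) : Bg b t ≤ 1 := by
  rw [Bg_eq_exp, Real.exp_le_one_iff]
  have h1 : 0 ≤ Real.log (1 + Real.exp (BenL * t)) :=
    Real.log_nonneg (by nlinarith [Real.exp_pos (BenL * t)])
  nlinarith

lemma Bg_anti {b : ℝ} (hb : 0 < b) {s t : ℝ} (hst : s ≤ t) : Bg b t ≤ Bg b s := by
  rw [Bg_eq_exp, Bg_eq_exp]
  apply Real.exp_le_exp.2
  have h1 : Real.log (1 + Real.exp (BenL * s)) ≤ Real.log (1 + Real.exp (BenL * t)) := by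
    apply Real.log_le_log (one_add_exp_pos _)
    have := Real.exp_le_exp.2 (mul_le_mul_of_nonneg_left hst BenL_pos.le)
    linarith
  nlinarith

lemma hasDerivAt_Bg (b t : ℝ) : HasDerivAt (Bg b) (-(Br b t)) t := by
  have h1 : HasDerivAt (fun t => 1 + Real.exp (BenL * t)) (BenL * Real.exp (BenL * t)) t := by
    have := (Real.hasDerivAt_exp (BenL * t)).comp t ((hasDerivAt_id t).const_mul BenL)
    simpa [mul_comm] using (this.const_add 1)
  have h2 := h1.rpow_const (p := -b) (Or.inl (one_add_exp_pos _).ne')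
  convert h2 using 1
  · rfl
  rw [Br]
  ring

lemma Br_nonneg {b : ℝ} (hb : 0 < b) (t : ℝ) : 0 ≤ Br b t := by
  have h1 := (Real.rpow_pos_of_pos (one_add_exp_pos (BenL * t)) (-b - 1)).le
  have h2 := (Real.exp_pos (BenL * t)).le
  exact mul_nonneg (mul_nonneg (mul_nonneg hb.le BenL_pos.le) h2) h1

lemma Br_le_Bg {b : ℝ} (hb : 0 < b) (t : ℝ) : Br b t ≤ b * BenL * Bg b t := by
  rw [Br, Bg]
  have hx := one_add_exp_pos (BenL * t)
  have h1 : (1 + Real.exp (BenL * t)) ^ (-b - 1)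
      = (1 + Real.exp (BenL * t)) ^ (-b) * (1 + Real.exp (BenL * t))⁻¹ := by
    rw [← Real.rpow_neg_one (1 + Real.exp (BenL * t)), ← Real.rpow_add hx]
    ring_nf
  rw [h1]
  have h2 : Real.exp (BenL * t) * (1 + Real.exp (BenL * t))⁻¹ ≤ 1 := by
    rw [mul_inv_le_iff₀ hx]
    nlinarith [Real.exp_pos (BenL * t)]
  have hg := (Real.rpow_pos_of_pos hx (-b)).le
  calc b * BenL * Real.exp (BenL * t) * ((1 + Real.exp (BenL * t)) ^ (-b) * (1 + Real.exp (BenL * t))⁻¹)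
      = (b * BenL * (1 + Real.exp (BenL * t)) ^ (-b)) * (Real.exp (BenL * t) * (1 + Real.exp (BenL * t))⁻¹) := by ring
    _ ≤ (b * BenL * (1 + Real.exp (BenL * t)) ^ (-b)) * 1 := by
        exact mul_le_mul_of_nonneg_left h2
          (mul_nonneg (mul_nonneg hb.le BenL_pos.le) hg)
    _ = b * BenL * (1 + Real.exp (BenL * t)) ^ (-b) := by ring

lemma Br_le {b : ℝ} (hb : 0 < b) (t : ℝ) : Br b t ≤ b * BenL := by
  calc Br b t ≤ b * BenL * Bg b t := Br_le_Bg hb t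
    _ ≤ b * BenL * 1 :=
        mul_le_mul_of_nonneg_left (Bg_le_one hb t) (mul_nonneg hb.le BenL_pos.le)
    _ = b * BenL := by ring
-- piece 2
lemma exp_Btstar {b : ℝ} (hb : 0 < b) : Real.exp (BenL * Btstar b) = b⁻¹ := by
  rw [Btstar, mul_div_cancel₀ _ BenL_pos.ne', Real.exp_neg, Real.exp_log hb]

lemma hasDerivAt_Br (b t : ℝ) : HasDerivAt (Br b)
    (b * BenL ^ 2 * Real.exp (BenL * t) * (1 + Real.exp (BenL * t)) ^ (-b - 2)
      * (1 - b * Real.exp (BenL * t))) t := by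
  have h1 : HasDerivAt (fun t => Real.exp (BenL * t)) (BenL * Real.exp (BenL * t)) t := by
    have := (Real.hasDerivAt_exp (BenL * t)).comp t ((hasDerivAt_id t).const_mul BenL)
    simpa [Function.comp_def, mul_comm] using this
  have h1' : HasDerivAt (fun t => 1 + Real.exp (BenL * t)) (BenL * Real.exp (BenL * t)) t :=
    h1.const_add 1
  have h2 := h1'.rpow_const (p := -b - 1) (Or.inl (one_add_exp_pos _).ne')
  have h3 := (h1.fun_mul h2).const_mul (b * BenL)
  have key : (1 + Real.exp (BenL * t)) ^ (-b - 1)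
      = (1 + Real.exp (BenL * t)) ^ (-b - 2) * (1 + Real.exp (BenL * t)) := by
    rw [show (-b - 1 : ℝ) = (-b - 2) + 1 by ring, Real.rpow_add (one_add_exp_pos _),
      Real.rpow_one]
  have : HasDerivAt (Br b) ((b * BenL) * (Real.exp (BenL * t) *
      ((-b - 1) * (1 + Real.exp (BenL * t)) ^ (-b - 1 - 1) * (BenL * Real.exp (BenL * t)))
      + BenL * Real.exp (BenL * t) * (1 + Real.exp (BenL * t)) ^ (-b - 1))) t := by
    have heq : Br b = fun t => (b * BenL) * (Real.exp (BenL * t)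
        * (1 + Real.exp (BenL * t)) ^ (-b - 1)) := by
      funext s; rw [Br]; ring
    rw [heq]
    refine h3.congr_deriv (Eq.symm ?_)
    ring
  convert this using 1
  rw [show (-b - 1 - 1 : ℝ) = -b - 2 by ring, key]
  ring

lemma Br_monoOn {b : ℝ} (hb : 0 < b) : MonotoneOn (Br b) (Iic (Btstar b)) := by
  have hdiff : Differentiable ℝ (Br b) := fun t => (hasDerivAt_Br b t).differentiableAt
  apply monotoneOn_of_deriv_nonneg (convex_Iic _) hdiff.continuous.continuousOn
    (hdiff.differentiableOn)
  intro x hx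
  rw [interior_Iic] at hx
  rw [(hasDerivAt_Br b x).deriv]
  have hx1 : Real.exp (BenL * x) ≤ b⁻¹ := by
    rw [← exp_Btstar hb]
    exact Real.exp_le_exp.2 (mul_le_mul_of_nonneg_left hx.le BenL_pos.le)
  have : b * Real.exp (BenL * x) ≤ 1 := by
    rw [← mul_inv_cancel₀ hb.ne']
    exact mul_le_mul_of_nonneg_left hx1 hb.le
  have h1 := (Real.exp_pos (BenL * x)).le
  have h2 := (Real.rpow_pos_of_pos (one_add_exp_pos (BenL * x)) (-b - 2)).le
  have h3 : (0:ℝ) ≤ b * BenL ^ 2 * Real.exp (BenL * x) := by positivity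
  nlinarith [mul_nonneg (mul_nonneg h3 h2) (sub_nonneg.2 this)]

lemma Br_antiOn {b : ℝ} (hb : 0 < b) : AntitoneOn (Br b) (Ici (Btstar b)) := by
  have hdiff : Differentiable ℝ (Br b) := fun t => (hasDerivAt_Br b t).differentiableAt
  apply antitoneOn_of_deriv_nonpos (convex_Ici _) hdiff.continuous.continuousOn
    (hdiff.differentiableOn)
  intro x hx
  rw [interior_Ici] at hx
  rw [(hasDerivAt_Br b x).deriv]
  have hx1 : b⁻¹ ≤ Real.exp (BenL * x) := by
    rw [← exp_Btstar hb]
    exact Real.exp_le_exp.2 (mul_le_mul_of_nonneg_left hx.le BenL_pos.le)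
  have : 1 ≤ b * Real.exp (BenL * x) := by
    rw [← mul_inv_cancel₀ hb.ne']
    exact mul_le_mul_of_nonneg_left hx1 hb.le
  have h2 := (Real.rpow_pos_of_pos (one_add_exp_pos (BenL * x)) (-b - 2)).le
  have h3 : (0:ℝ) ≤ b * BenL ^ 2 * Real.exp (BenL * x) := by positivity
  nlinarith [mul_nonneg (mul_nonneg h3 h2) (sub_nonneg.2 this)]

lemma Br_le_exp {b : ℝ} (hb : 0 < b) (t : ℝ) : Br b t ≤ b * BenL * Real.exp (BenL * t) := by
  rw [Br]
  have h1 : (1 + Real.exp (BenL * t)) ^ (-b - 1) ≤ 1 :=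
    Real.rpow_le_one_of_one_le_of_nonpos
      (by nlinarith [Real.exp_pos (BenL * t)]) (by linarith)
  have h3 : (0:ℝ) ≤ b * BenL * Real.exp (BenL * t) :=
    mul_nonneg (mul_nonneg hb.le BenL_pos.le) (Real.exp_pos _).le
  nlinarith
section
variable {h : ℕ → ℝ}

lemma hasSum_telescope (hd : ∀ k, h (k+1) ≤ h k) {c : ℝ}
    (hlim : Tendsto h atTop (nhds c)) : HasSum (fun k => h k - h (k+1)) (h 0 - c) := by
  have hnn : ∀ k, 0 ≤ h k - h (k+1) := fun k => sub_nonneg.2 (hd k)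
  have anti : Antitone h := antitone_nat_of_succ_le hd
  have hge : ∀ k, c ≤ h k := fun k =>
    le_of_tendsto hlim (eventually_atTop.2 ⟨k, fun m hm => anti hm⟩)
  have hpart : ∀ K, ∑ i ∈ Finset.range K, (h i - h (i+1)) = h 0 - h K :=
    fun K => Finset.sum_range_sub' h K
  have hsummable : Summable (fun k => h k - h (k+1)) :=
    summable_of_sum_range_le (c := h 0 - c) hnn
      (fun K => by rw [hpart]; linarith [hge K])
  have h1 := hsummable.hasSum
  have h2 := h1.tendsto_sum_nat
  have h3 : Tendsto (fun K => ∑ i ∈ Finset.range K, (h i - h (i+1))) atTop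
      (nhds (h 0 - c)) := by
    have h4 : Tendsto (fun K : ℕ => h 0 - h K) atTop (nhds (h 0 - c)) :=
      tendsto_const_nhds.sub hlim
    simpa [hpart] using h4
  rwa [tendsto_nhds_unique h2 h3] at h1

end

-- limits
lemma tendsto_Bg_top {b : ℝ} (hb : 0 < b) (s : ℝ) :
    Tendsto (fun k : ℕ => Bg b (s + k)) atTop (nhds 0) := by
  have hA : Tendsto (fun k : ℕ => BenL * (s + k)) atTop atTop :=
    Tendsto.const_mul_atTop BenL_pos
      (tendsto_atTop_add_const_left _ s tendsto_natCast_atTop_atTop)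
  have hB := Real.tendsto_exp_atTop.comp hA
  have hC : Tendsto (fun k : ℕ => 1 + Real.exp (BenL * (s + k))) atTop atTop :=
    tendsto_atTop_add_const_left _ 1 hB
  have hD := Real.tendsto_log_atTop.comp hC
  have hE : Tendsto (fun k : ℕ => -b * Real.log (1 + Real.exp (BenL * (s + k)))) atTop atBot := by
    apply Tendsto.const_mul_atTop_of_neg (by linarith : -b < 0) hD
  have hF := Real.tendsto_exp_atBot.comp hE
  have : (fun k : ℕ => Bg b (s + k))
      = fun k : ℕ => Real.exp (-b * Real.log (1 + Real.exp (BenL * (s + k)))) := by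
    funext k; rw [Bg_eq_exp]
  rw [this]
  exact hF

lemma tendsto_Bg_bot {b : ℝ} (hb : 0 < b) (s : ℝ) :
    Tendsto (fun k : ℕ => Bg b (s - k)) atTop (nhds 1) := by
  have hA : Tendsto (fun k : ℕ => BenL * (s - k)) atTop atBot := by
    apply Tendsto.const_mul_atBot BenL_pos
    have : Tendsto (fun k : ℕ => -(k:ℝ)) atTop atBot :=
      tendsto_neg_atTop_atBot.comp tendsto_natCast_atTop_atTop
    simpa [sub_eq_add_neg] using tendsto_atBot_add_const_left _ s this
  have hB : Tendsto (fun k : ℕ => Real.exp (BenL * (s - k))) atTop (nhds 0) :=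
    Real.tendsto_exp_atBot.comp hA
  have hC : Tendsto (fun k : ℕ => 1 + Real.exp (BenL * (s - k))) atTop (nhds 1) := by
    simpa using tendsto_const_nhds.add hB
  have hD : Tendsto (fun k : ℕ => Real.log (1 + Real.exp (BenL * (s - k)))) atTop (nhds 0) := by
    have := (Real.continuousAt_log (by norm_num : (1:ℝ) ≠ 0)).tendsto.comp hC
    simpa [Function.comp_def] using this
  have hE : Tendsto (fun k : ℕ => -b * Real.log (1 + Real.exp (BenL * (s - k)))) atTop
      (nhds 0) := by
    simpa using hD.const_mul (-b)
  have hF := (Real.continuous_exp.tendsto 0).comp hE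
  have : (fun k : ℕ => Bg b (s - k))
      = fun k : ℕ => Real.exp (-b * Real.log (1 + Real.exp (BenL * (s - k)))) := by
    funext k; rw [Bg_eq_exp]
  rw [this]
  simpa [Function.comp_def] using hF

lemma tendsto_Br_top {b : ℝ} (hb : 0 < b) (s : ℝ) :
    Tendsto (fun k : ℕ => Br b (s + k)) atTop (nhds 0) := by
  apply squeeze_zero (fun k => Br_nonneg hb _) (fun k => Br_le_Bg hb _)
  simpa using (tendsto_Bg_top hb s).const_mul (b * BenL)

lemma tendsto_Br_bot {b : ℝ} (hb : 0 < b) (s : ℝ) :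
    Tendsto (fun k : ℕ => Br b (s - k)) atTop (nhds 0) := by
  apply squeeze_zero (fun k => Br_nonneg hb _) (fun k => Br_le_exp hb _)
  have hA : Tendsto (fun k : ℕ => BenL * (s - k)) atTop atBot := by
    apply Tendsto.const_mul_atBot BenL_pos
    have : Tendsto (fun k : ℕ => -(k:ℝ)) atTop atBot :=
      tendsto_neg_atTop_atBot.comp tendsto_natCast_atTop_atTop
    simpa [sub_eq_add_neg] using tendsto_atBot_add_const_left _ s this
  have hB : Tendsto (fun k : ℕ => Real.exp (BenL * (s - k))) atTop (nhds 0) :=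
    Real.tendsto_exp_atBot.comp hA
  simpa using hB.const_mul (b * BenL)

-- FTC and bounds
lemma Br_differentiable (b : ℝ) : Differentiable ℝ (Br b) :=
  fun t => (hasDerivAt_Br b t).differentiableAt
lemma Br_continuous (b : ℝ) : Continuous (Br b) := (Br_differentiable b).continuous

lemma integral_Br (b u v : ℝ) : ∫ t in u..v, Br b t = Bg b u - Bg b v := by
  have h := intervalIntegral.integral_eq_sub_of_hasDerivAt
    (f := fun t => -(Bg b t)) (f' := Br b)
    (fun t _ => by simpa using (hasDerivAt_Bg b t).fun_neg)
    ((Br_continuous b).intervalIntegrable u v)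
  rw [h]; ring

lemma integral_Br_le {b u v c : ℝ} (huv : u ≤ v) (hc : ∀ s ∈ Icc u v, Br b s ≤ c) :
    ∫ t in u..v, Br b t ≤ (v - u) * c := by
  have h := intervalIntegral.integral_mono_on (μ := volume) (f := Br b) (g := fun _ => c) huv
    ((Br_continuous b).intervalIntegrable u v) (intervalIntegrable_const) hc
  simpa [smul_eq_mul] using h

lemma le_integral_Br {b u v c : ℝ} (huv : u ≤ v) (hc : ∀ s ∈ Icc u v, c ≤ Br b s) :
    (v - u) * c ≤ ∫ t in u..v, Br b t := by
  have h := intervalIntegral.integral_mono_on (μ := volume) (f := fun _ => c) (g := Br b) huv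
    (intervalIntegrable_const) ((Br_continuous b).intervalIntegrable u v) hc
  simpa [smul_eq_mul] using h

lemma e_bound_mono {b z t : ℝ} (hb : 0 < b) (hz : 0 < z) (hz1 : z ≤ 1)
    (ht : t + 1 ≤ Btstar b) :
    |(Bg b t - Bg b (t + z)) - z * (Bg b t - Bg b (t + 1))|
      ≤ z * (Br b (t + 1) - Br b t) := by
  have mono := Br_monoOn hb
  have hsub : ∀ s ∈ Icc t (t+1), s ∈ Iic (Btstar b) := fun s hs => le_trans hs.2 ht
  have hzz : t + z ≤ t + 1 := by linarith
  have h1 : ∫ s in t..(t+z), Br b s ≤ z * Br b (t+1) := by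
    have := integral_Br_le (b := b) (by linarith : t ≤ t + z)
      (fun s hs => mono (hsub s ⟨hs.1, le_trans hs.2 hzz⟩)
        (hsub (t+1) ⟨by linarith, le_refl _⟩) (le_trans hs.2 hzz))
    have heq : (t + z - t) * Br b (t+1) = z * Br b (t+1) := by ring
    linarith [this, heq]
  have h2 : z * Br b t ≤ ∫ s in t..(t+z), Br b s := by
    have := le_integral_Br (b := b) (by linarith : t ≤ t + z)
      (fun s hs => mono (hsub t ⟨le_refl _, by linarith⟩)
        (hsub s ⟨hs.1, le_trans hs.2 hzz⟩) hs.1)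
    have heq : (t + z - t) * Br b t = z * Br b t := by ring
    linarith [this, heq]
  have h3 : ∫ s in t..(t+1), Br b s ≤ Br b (t+1) := by
    have := integral_Br_le (b := b) (by linarith : t ≤ t + 1)
      (fun s hs => mono (hsub s hs) (hsub (t+1) ⟨by linarith, le_refl _⟩) hs.2)
    have heq : (t + 1 - t) * Br b (t+1) = Br b (t+1) := by ring
    linarith [this, heq]
  have h4 : Br b t ≤ ∫ s in t..(t+1), Br b s := by
    have := le_integral_Br (b := b) (by linarith : t ≤ t + 1)
      (fun s hs => mono (hsub t ⟨le_refl _, by linarith⟩) (hsub s hs) hs.1)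
    have heq : (t + 1 - t) * Br b t = Br b t := by ring
    linarith [this, heq]
  rw [← integral_Br b t (t+z), ← integral_Br b t (t+1)]
  rw [abs_le]
  constructor <;> nlinarith

lemma e_bound_anti {b z t : ℝ} (hb : 0 < b) (hz : 0 < z) (hz1 : z ≤ 1)
    (ht : Btstar b ≤ t) :
    |(Bg b t - Bg b (t + z)) - z * (Bg b t - Bg b (t + 1))|
      ≤ z * (Br b t - Br b (t + 1)) := by
  have mono := Br_antiOn hb
  have hsub : ∀ s ∈ Icc t (t+1), s ∈ Ici (Btstar b) := fun s hs => le_trans ht hs.1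
  have hzz : t + z ≤ t + 1 := by linarith
  have h1 : ∫ s in t..(t+z), Br b s ≤ z * Br b t := by
    have := integral_Br_le (b := b) (by linarith : t ≤ t + z)
      (fun s hs => mono (hsub t ⟨le_refl _, by linarith⟩)
        (hsub s ⟨hs.1, le_trans hs.2 hzz⟩) hs.1)
    have heq : (t + z - t) * Br b t = z * Br b t := by ring
    linarith [this, heq]
  have h2 : z * Br b (t+1) ≤ ∫ s in t..(t+z), Br b s := by
    have := le_integral_Br (b := b) (by linarith : t ≤ t + z)
      (fun s hs => mono (hsub s ⟨hs.1, le_trans hs.2 hzz⟩)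
        (hsub (t+1) ⟨by linarith, le_refl _⟩) (le_trans hs.2 hzz))
    have heq : (t + z - t) * Br b (t+1) = z * Br b (t+1) := by ring
    linarith [this, heq]
  have h3 : ∫ s in t..(t+1), Br b s ≤ Br b t := by
    have := integral_Br_le (b := b) (by linarith : t ≤ t + 1)
      (fun s hs => mono (hsub t ⟨le_refl _, by linarith⟩) (hsub s hs) hs.1)
    have heq : (t + 1 - t) * Br b t = Br b t := by ring
    linarith [this, heq]
  have h4 : Br b (t+1) ≤ ∫ s in t..(t+1), Br b s := by
    have := le_integral_Br (b := b) (by linarith : t ≤ t + 1)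
      (fun s hs => mono (hsub s hs) (hsub (t+1) ⟨by linarith, le_refl _⟩) hs.2)
    have heq : (t + 1 - t) * Br b (t+1) = Br b (t+1) := by ring
    linarith [this, heq]
  rw [← integral_Br b t (t+z), ← integral_Br b t (t+1)]
  rw [abs_le]
  constructor <;> nlinarith

lemma Ba_nonneg {b z t : ℝ} (hb : 0 < b) (hz : 0 ≤ z) : 0 ≤ Bg b t - Bg b (t + z) :=
  sub_nonneg.2 (Bg_anti hb (by linarith))

lemma Ba_le_Bd {b z t : ℝ} (hb : 0 < b) (hz1 : z ≤ 1) :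
    Bg b t - Bg b (t + z) ≤ Bg b t - Bg b (t + 1) :=
  sub_le_sub_left (Bg_anti hb (by linarith)) _

lemma Bd_le {b t : ℝ} (hb : 0 < b) : Bg b t - Bg b (t + 1) ≤ b * BenL := by
  have h1 : Bg b t - Bg b (t+1) = ∫ s in t..(t+1), Br b s := (integral_Br b t (t+1)).symm
  have h2 := integral_Br_le (b := b) (by linarith : t ≤ t + 1) (fun s _ => Br_le hb s)
  rw [h1]
  have heq : (t + 1 - t) * (b * BenL) = b * BenL := by ring
  linarith [h2, heq]

lemma e_bound_mid {b z t : ℝ} (hb : 0 < b) (hz : 0 < z) (hz1 : z ≤ 1) :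
    |(Bg b t - Bg b (t + z)) - z * (Bg b t - Bg b (t + 1))| ≤ b * BenL := by
  have h1 := Ba_nonneg (t := t) hb hz.le
  have h2 := Ba_le_Bd (t := t) (z := z) hb hz1
  have h3 := Bd_le (t := t) hb
  have h4 : 0 ≤ Bg b t - Bg b (t + 1) := Ba_nonneg hb (by norm_num)
  rw [abs_le]
  constructor <;> nlinarith

-- sums over ℤ
lemma hasSum_Bd {b : ℝ} (hb : 0 < b) :
    HasSum (fun n : ℤ => Bg b n - Bg b (n + 1)) 1 := by
  set f : ℤ → ℝ := fun n => Bg b n - Bg b (n + 1) with hf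
  have hnat : HasSum (fun k : ℕ => f k) (Bg b 0 - 0) := by
    have htel := hasSum_telescope (h := fun k : ℕ => Bg b k)
      (fun k => Bg_anti hb (by push_cast; linarith)) (c := 0)
      (by simpa using tendsto_Bg_top hb 0)
    have hfun : (fun k : ℕ => f k)
        = fun k : ℕ => Bg b (k : ℝ) - Bg b ((k : ℝ) + 1) := by
      funext k; rw [hf]; push_cast; ring_nf
    rw [hfun]
    have h0 : Bg b ((0:ℕ) : ℝ) = Bg b 0 := by norm_num
    have hfun2 : (fun k : ℕ => (fun k : ℕ => Bg b k) k - (fun k : ℕ => Bg b k) (k+1))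
        = fun k : ℕ => Bg b (k : ℝ) - Bg b ((k : ℝ) + 1) := by
      funext k; push_cast; ring_nf
    rw [hfun2] at htel
    simpa using htel
  have hneg : HasSum (fun k : ℕ => f (-(k + 1))) (-Bg b 0 - (-1)) := by
    have htel := hasSum_telescope (h := fun k : ℕ => -Bg b (-(k:ℝ)))
      (fun k => by
        simp only [neg_le_neg_iff]
        exact Bg_anti hb (by push_cast; linarith)) (c := -1)
      (by
        have := (tendsto_Bg_bot hb 0).neg
        simpa [zero_sub] using this)
    have hfun : (fun k : ℕ => (fun k : ℕ => -Bg b (-(k:ℝ))) k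
          - (fun k : ℕ => -Bg b (-(k:ℝ))) (k+1))
        = fun k : ℕ => f (-(k + 1)) := by
      funext k; rw [hf]; push_cast; ring_nf
    have h0 : -Bg b (-((0:ℕ):ℝ)) = -Bg b 0 := by norm_num
    rw [hfun] at htel
    simpa using htel
  have := HasSum.of_nat_of_neg_add_one hnat hneg
  convert this using 1
  ring

set_option maxHeartbeats 1000000 in
lemma key_sum {b z : ℝ} (hb : 0 < b) (hz : 0 < z) (hz1 : z ≤ 1) :
    ∃ T : ℝ, HasSum (fun n : ℤ => Bg b n - Bg b (n + z)) T ∧ |T - z| ≤ 4 * (b * BenL) := by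
  set N : ℤ := ⌊Btstar b⌋ with hN
  set a : ℤ → ℝ := fun n => Bg b n - Bg b (n + z) with ha
  set d : ℤ → ℝ := fun n => Bg b n - Bg b (n + 1) with hd
  have hdsum : HasSum d 1 := hasSum_Bd hb
  have hsa : Summable a := Summable.of_nonneg_of_le (fun n => Ba_nonneg hb hz.le)
    (fun n => Ba_le_Bd hb hz1) hdsum.summable
  refine ⟨∑' n, a n, hsa.hasSum, ?_⟩
  set e : ℤ → ℝ := fun n => a n - z * d n with he
  have hesum : HasSum e ((∑' n, a n) - z * 1) := hsa.hasSum.sub (hdsum.mul_left z)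
  set c : ℤ → ℝ := fun n => if n < N then z * (Br b (n+1) - Br b n)
    else if n = N then b * BenL else z * (Br b n - Br b (n+1)) with hc
  have hNle : (N:ℝ) ≤ Btstar b := Int.floor_le _
  have hNgt : Btstar b < (N:ℝ) + 1 := Int.lt_floor_add_one _
  have hbound : ∀ n : ℤ, |e n| ≤ c n := by
    intro n
    rcases lt_trichotomy n N with h | h | h
    · simp only [hc]
      rw [if_pos h]
      have h1 : (n:ℝ) + 1 ≤ Btstar b := by
        have h2 : ((n:ℝ) + 1) ≤ (N:ℝ) := by exact_mod_cast Int.add_one_le_iff.mpr h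
        linarith
      have := e_bound_mono (t := (n:ℝ)) hb hz hz1 h1
      simpa [he, ha, hd] using this
    · subst h
      simp only [hc]
      rw [if_neg (lt_irrefl N)]
      simp only [if_true]
      have := e_bound_mid (t := (N:ℝ)) hb hz hz1
      simpa [he, ha, hd] using this
    · simp only [hc]
      rw [if_neg (not_lt.2 h.le), if_neg (ne_of_gt h)]
      have h1 : Btstar b ≤ (n:ℝ) := by
        have h2 : ((N:ℝ) + 1) ≤ (n:ℝ) := by exact_mod_cast Int.add_one_le_iff.mpr h
        linarith
      have := e_bound_anti (t := (n:ℝ)) hb hz hz1 h1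
      simpa [he, ha, hd] using this
  -- sum of bound function
  have hmemIci : ∀ u : ℝ, Btstar b ≤ u → u ∈ Ici (Btstar b) := fun u hu => hu
  have htel1 := hasSum_telescope (h := fun j : ℕ => z * Br b ((N:ℝ) + 1 + j))
    (fun j => by
      apply mul_le_mul_of_nonneg_left _ hz.le
      exact Br_antiOn hb (hmemIci _ (by push_cast; linarith))
        (hmemIci _ (by push_cast; linarith)) (by push_cast; linarith))
    (c := 0)
    (by simpa using (tendsto_Br_top hb ((N:ℝ) + 1)).const_mul z)
  have natc : HasSum (fun k : ℕ => c ((k : ℤ) + N)) (z * Br b ((N:ℝ) + 1) + b * BenL) := by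
    have hshift : (fun n : ℕ => c (((n + 1 : ℕ) : ℤ) + N))
        = fun j : ℕ => (fun j : ℕ => z * Br b ((N:ℝ) + 1 + j)) j
            - (fun j : ℕ => z * Br b ((N:ℝ) + 1 + j)) (j+1) := by
      funext n
      simp only [hc]
      rw [if_neg (by omega), if_neg (by omega)]
      push_cast
      ring_nf
    have h1 : HasSum (fun n : ℕ => c (((n + 1 : ℕ) : ℤ) + N))
        (z * Br b ((N:ℝ) + 1 + (0:ℕ)) - 0) := by rw [hshift]; exact htel1
    have h2 := (hasSum_nat_add_iff (f := fun k : ℕ => c ((k : ℤ) + N)) 1).mp (by exact h1)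
    have h3 : c N = b * BenL := by simp [hc]
    simpa [h3] using h2
  have htel2 := hasSum_telescope (h := fun j : ℕ => z * Br b ((N:ℝ) - j))
    (fun j => by
      apply mul_le_mul_of_nonneg_left _ hz.le
      apply Br_monoOn hb (show ((N:ℝ) - (j+1:ℕ)) ∈ Iic (Btstar b) by
          simp only [mem_Iic]; push_cast; linarith)
        (show ((N:ℝ) - (j:ℕ)) ∈ Iic (Btstar b) by
          simp only [mem_Iic]; push_cast; linarith)
      push_cast; linarith)
    (c := 0)
    (by simpa using (tendsto_Br_bot hb (N:ℝ)).const_mul z)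
  have negc : HasSum (fun k : ℕ => c (-((k : ℤ) + 1) + N)) (z * Br b (N:ℝ)) := by
    have hshift : (fun k : ℕ => c (-((k : ℤ) + 1) + N))
        = fun j : ℕ => (fun j : ℕ => z * Br b ((N:ℝ) - j)) j
            - (fun j : ℕ => z * Br b ((N:ℝ) - j)) (j+1) := by
      funext k
      simp only [hc]
      rw [if_pos (by omega)]
      push_cast
      ring_nf
    rw [hshift]
    simpa using htel2
  have hcsum : HasSum c (z * Br b ((N:ℝ) + 1) + b * BenL + z * Br b (N:ℝ)) := by
    have h4 := HasSum.of_nat_of_neg_add_one (f := fun m : ℤ => c (m + N)) natc negc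
    have h5 := (Equiv.hasSum_iff (Equiv.addRight N)).mp (by
      have : (c ∘ (Equiv.addRight N)) = fun m : ℤ => c (m + N) := by
        funext m
        simp [Function.comp, Equiv.coe_addRight]
      rw [this]
      exact h4)
    exact h5
  -- final bound
  have hse : Summable (fun n => |e n|) :=
    Summable.of_nonneg_of_le (fun n => abs_nonneg _) hbound hcsum.summable
  have h6 : |∑' n, e n| ≤ ∑' n, |e n| := by
    have := norm_tsum_le_tsum_norm (f := e) (by simpa [Real.norm_eq_abs] using hse)
    simpa [Real.norm_eq_abs] using this
  have h7 : ∑' n, |e n| ≤ ∑' n, c n := Summable.tsum_le_tsum hbound hse hcsum.summable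
  have h8 := hcsum.tsum_eq
  have h9 := hesum.tsum_eq
  have hB1 := Br_le hb ((N:ℝ) + 1)
  have hB2 := Br_le hb (N:ℝ)
  have hB3 := Br_nonneg hb ((N:ℝ) + 1)
  have hB4 := Br_nonneg hb (N:ℝ)
  have hbL : 0 ≤ b * BenL := mul_nonneg hb.le BenL_pos.le
  have : |(∑' n, a n) - z * 1| ≤ 4 * (b * BenL) := by
    rw [← h9]
    calc |∑' n, e n| ≤ ∑' n, |e n| := h6
      _ ≤ ∑' n, c n := h7
      _ = z * Br b ((N:ℝ) + 1) + b * BenL + z * Br b (N:ℝ) := h8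
      _ ≤ 4 * (b * BenL) := by nlinarith
  simpa using this

-- measure computations
noncomputable def Bdens (b : ℝ) : ℝ → ENNReal :=
  fun x => ENNReal.ofReal (if 0 ≤ x then b / (1 + x) ^ (b + 1) else 0)

lemma Bdens_cont {b : ℝ} : ContinuousOn (fun x : ℝ => b / (1 + x) ^ (b + 1)) (Ici 0) := by
  apply ContinuousOn.div continuousOn_const
  · apply ContinuousOn.rpow_const (by fun_prop)
    intro x hx
    exact Or.inl (by simp only [mem_Ici] at hx; positivity)
  · intro x hx
    simp only [mem_Ici] at hx
    exact ne_of_gt (Real.rpow_pos_of_pos (by linarith) _)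

lemma mu_Ico {b u v : ℝ} (hb : 0 < b) (hu : 0 ≤ u) (huv : u ≤ v) :
    volume.withDensity (Bdens b) (Ico u v)
      = ENNReal.ofReal ((1 + u) ^ (-b) - (1 + v) ^ (-b)) := by
  rw [withDensity_apply _ measurableSet_Ico]
  have step1 : ∫⁻ x in Ico u v, Bdens b x
      = ∫⁻ x in Ico u v, ENNReal.ofReal (b / (1 + x) ^ (b + 1)) := by
    apply setLIntegral_congr_fun measurableSet_Ico
    intro x hx
    rw [Bdens, if_pos (le_trans hu hx.1)]
  rw [step1]
  have hint : IntegrableOn (fun x : ℝ => b / (1 + x) ^ (b + 1)) (Ico u v) volume := by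
    apply IntegrableOn.mono_set (t := Icc u v)
    · exact (Bdens_cont.mono (fun x hx => le_trans hu hx.1 : Icc u v ⊆ Ici 0)).integrableOn_Icc
    · exact Ico_subset_Icc_self
  have hnn : 0 ≤ᵐ[volume.restrict (Ico u v)] fun x : ℝ => b / (1 + x) ^ (b + 1) := by
    rw [EventuallyLE, ae_restrict_iff' measurableSet_Ico]
    apply ae_of_all
    intro x hx
    have h0 : (0:ℝ) ≤ 1 + x := by have := le_trans hu hx.1; linarith
    exact div_nonneg hb.le (Real.rpow_nonneg h0 _)
  rw [← ofReal_integral_eq_lintegral_ofReal hint hnn]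
  congr 1
  have step2 : ∫ x in Ico u v, b / (1 + x) ^ (b + 1) = ∫ x in u..v, b / (1 + x) ^ (b + 1) := by
    rw [Measure.restrict_congr_set (α := ℝ) (μ := volume) Ico_ae_eq_Ioc,
      intervalIntegral.integral_of_le huv]
  rw [step2]
  have hderiv : ∀ x ∈ uIcc u v, HasDerivAt (fun y : ℝ => -(1 + y) ^ (-b))
      (b / (1 + x) ^ (b + 1)) x := by
    intro x hx
    rw [uIcc_of_le huv] at hx
    have hx0 : (0:ℝ) < 1 + x := by have := le_trans hu hx.1; linarith
    have h1 : HasDerivAt (fun y : ℝ => 1 + y) 1 x := (hasDerivAt_id x).const_add 1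
    have h2 := (h1.rpow_const (p := -b) (Or.inl hx0.ne')).fun_neg
    refine h2.congr_deriv (Eq.symm ?_)
    rw [div_eq_mul_inv, ← Real.rpow_neg hx0.le, show -(b+1) = -b-1 by ring]
    ring
  have hcont : IntervalIntegrable (fun x : ℝ => b / (1 + x) ^ (b + 1)) volume u v := by
    rw [intervalIntegrable_iff_integrableOn_Ioc_of_le huv]
    apply IntegrableOn.mono_set (t := Icc u v)
    · exact (Bdens_cont.mono (fun x hx => le_trans hu hx.1 : Icc u v ⊆ Ici 0)).integrableOn_Icc
    · exact Ioc_subset_Icc_self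
  rw [intervalIntegral.integral_eq_sub_of_hasDerivAt hderiv hcont]
  ring

lemma set_eq {z : ℝ} (hz : 0 < z) (hz1 : z ≤ 1) :
    {x : ℝ | Int.fract (Real.logb 10 x) < z} ∩ Ioi 0
      = ⋃ n : ℤ, Ico (Real.exp (BenL * n)) (Real.exp (BenL * (n + z))) := by
  have hlogb : ∀ x : ℝ, Real.logb 10 x = Real.log x / BenL := fun x => rfl
  ext x
  simp only [mem_inter_iff, mem_setOf_eq, mem_Ioi, mem_iUnion, mem_Ico]
  constructor
  · rintro ⟨hfr, hx0⟩
    set y := Real.logb 10 x with hydef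
    have hxlog : Real.log x = y * BenL := by
      rw [hydef, hlogb, div_mul_cancel₀ _ BenL_pos.ne']
    have hfr' : y - ⌊y⌋ < z := by rw [Int.self_sub_floor]; exact hfr
    have hfl : (⌊y⌋ : ℝ) ≤ y := Int.floor_le _
    refine ⟨⌊y⌋, ?_, ?_⟩
    · calc Real.exp (BenL * ⌊y⌋) ≤ Real.exp (Real.log x) :=
            Real.exp_le_exp.2 (by rw [hxlog]; nlinarith [BenL_pos])
        _ = x := Real.exp_log hx0
    · calc x = Real.exp (Real.log x) := (Real.exp_log hx0).symm
        _ < Real.exp (BenL * (⌊y⌋ + z)) :=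
            Real.exp_lt_exp.2 (by rw [hxlog]; nlinarith [BenL_pos])
  · rintro ⟨n, h1, h2⟩
    have hx0 : 0 < x := lt_of_lt_of_le (Real.exp_pos _) h1
    have hl1 : BenL * n ≤ Real.log x := by
      rw [← Real.exp_le_exp, Real.exp_log hx0]; exact h1
    have hl2 : Real.log x < BenL * (n + z) := by
      rw [← Real.exp_lt_exp, Real.exp_log hx0]; exact h2
    have hy1 : (n : ℝ) ≤ Real.logb 10 x := by
      rw [hlogb, le_div_iff₀ BenL_pos]; nlinarith [BenL_pos]
    have hy2 : Real.logb 10 x < (n : ℝ) + z := by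
      rw [hlogb, div_lt_iff₀ BenL_pos]; nlinarith [BenL_pos]
    have hfl : ⌊Real.logb 10 x⌋ = n := by
      rw [Int.floor_eq_iff]
      exact ⟨hy1, by linarith⟩
    refine ⟨?_, hx0⟩
    have hfr : Int.fract (Real.logb 10 x) = Real.logb 10 x - n := by
      rw [← Int.self_sub_floor, hfl]
    rw [hfr]
    linarith

lemma mu_eq_tsum {b z : ℝ} (hb : 0 < b) (hz : 0 < z) (hz1 : z ≤ 1) :
    volume.withDensity (Bdens b) {x : ℝ | Int.fract (Real.logb 10 x) < z}
      = ∑' n : ℤ, ENNReal.ofReal (Bg b n - Bg b ((n : ℝ) + z)) := by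
  set ν := volume.withDensity (Bdens b) with hν
  have hnull : ν (Iic 0) = 0 := by
    have h1 : ν (Iio 0) = 0 := by
      rw [hν, withDensity_apply _ measurableSet_Iio]
      have : ∫⁻ x in Iio 0, Bdens b x = ∫⁻ x in Iio (0:ℝ), 0 := by
        apply setLIntegral_congr_fun measurableSet_Iio
        intro x hx
        rw [Bdens, if_neg (not_le.2 hx)]
        simp
      rw [this]
      simp
    have h2 : ν {(0:ℝ)} = 0 :=
      (withDensity_absolutelyContinuous volume (Bdens b)) (volume_singleton)
    have h3 : Iic (0:ℝ) = Iio 0 ∪ {0} := by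
      ext y; simp [le_iff_lt_or_eq]
    rw [h3]
    exact measure_union_null h1 h2
  have hA : {x : ℝ | Int.fract (Real.logb 10 x) < z}
      = ({x : ℝ | Int.fract (Real.logb 10 x) < z} ∩ Ioi 0)
        ∪ ({x : ℝ | Int.fract (Real.logb 10 x) < z} ∩ Iic 0) := by
    rw [← inter_union_distrib_left, union_comm, Iic_union_Ioi, inter_univ]
  have hnull' : ν ({x : ℝ | Int.fract (Real.logb 10 x) < z} ∩ Iic 0) = 0 :=
    measure_mono_null inter_subset_right hnull
  rw [hA, measure_congr (union_ae_eq_left_of_ae_eq_empty (ae_eq_empty.2 hnull')),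
    set_eq hz hz1]
  have hdisj : Pairwise (Function.onFun Disjoint
      (fun n : ℤ => Ico (Real.exp (BenL * n)) (Real.exp (BenL * (n + z))))) := by
    have key : ∀ m n : ℤ, m < n → Disjoint (Ico (Real.exp (BenL * m)) (Real.exp (BenL * (m + z))))
        (Ico (Real.exp (BenL * n)) (Real.exp (BenL * (n + z)))) := by
      intro m n h
      rw [Set.disjoint_left]
      rintro x ⟨_, hx2⟩ ⟨hx3, _⟩
      have hmn : (m : ℝ) + 1 ≤ n := by exact_mod_cast Int.add_one_le_iff.mpr h
      have : BenL * (m + z) ≤ BenL * n :=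
        mul_le_mul_of_nonneg_left (by linarith) BenL_pos.le
      have := Real.exp_le_exp.2 this
      linarith
    intro m n hmn
    rcases lt_or_gt_of_ne hmn with h | h
    · exact key m n h
    · exact (key n m h).symm
  rw [measure_iUnion hdisj (fun n => measurableSet_Ico)]
  congr 1
  funext n
  rw [mu_Ico hb (Real.exp_pos _).le
    (Real.exp_le_exp.2 (mul_le_mul_of_nonneg_left (by linarith) BenL_pos.le))]
  rfl

end BenfordAux

/-- For `X_b` type II Pareto with density `b/(1+x)^(b+1)` on `[0,∞)`,
`{log₁₀ X_b}` converges in law to the uniform distribution on `[0,1)`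
as `b → 0⁺`. -/
theorem pareto_II_benford_limit
    (μ : ℝ → Measure ℝ)
    (hμ : ∀ b : ℝ, 0 < b → μ b = volume.withDensity
      (fun x => ENNReal.ofReal (if 0 ≤ x then b / (1 + x) ^ (b + 1) else 0))) :
    ∀ z ∈ Ioc (0 : ℝ) 1,
      Tendsto (fun b => ((μ b) {x : ℝ | Int.fract (Real.logb 10 x) < z}).toReal)
        (nhdsWithin 0 (Ioi 0)) (nhds z) := by
  intro z hzz
  obtain ⟨hz0, hz1⟩ := hzz
  have hpt : ∀ b : ℝ, 0 < b →
      ∃ T : ℝ, ((μ b) {x : ℝ | Int.fract (Real.logb 10 x) < z}).toReal = T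
        ∧ |T - z| ≤ 4 * (b * BenL) := by
    intro b hb
    obtain ⟨T, hT, hTb⟩ := key_sum hb hz0 hz1
    refine ⟨T, ?_, hTb⟩
    rw [hμ b hb]
    have h1 : (fun x : ℝ => ENNReal.ofReal (if 0 ≤ x then b / (1 + x) ^ (b + 1) else 0))
        = Bdens b := rfl
    rw [h1, mu_eq_tsum hb hz0 hz1]
    have hnn : ∀ n : ℤ, 0 ≤ Bg b n - Bg b ((n:ℝ) + z) := fun n => Ba_nonneg hb hz0.le
    rw [← ENNReal.ofReal_tsum_of_nonneg hnn hT.summable,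
      ENNReal.toReal_ofReal (tsum_nonneg hnn)]
    exact hT.tsum_eq
  rw [tendsto_iff_dist_tendsto_zero]
  apply squeeze_zero' (Filter.Eventually.of_forall fun b => dist_nonneg)
  · filter_upwards [self_mem_nhdsWithin] with b hb
    obtain ⟨T, hEq, hle⟩ := hpt b hb
    rw [Real.dist_eq, hEq]
    exact hle
  · have hcont : Continuous fun b : ℝ => 4 * (b * BenL) := by continuity
    have h := (hcont.tendsto 0).mono_left (nhdsWithin_le_nhds (s := Ioi (0:ℝ)))
    simpa using h
end
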